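/- arXiv:2506.15430 — 8 statements merged into one kernel-verified Lean document; each statement's English description precedes it below -/
import Mathlib

section
/- Let A be a real symmetric n×n matrix, partitioned with a leading 2×2 block A11 and off-diagonal block A12 whose columns each are either entrywise negative or have the form (negative, 0)ᵀ, and suppose A11 has negative off-diagonal entries (i.e., a_{12} < 0). Let R_θ be the 2×2 rotation matrix by angle θ extended by the identity on the remaining n−2 coordinates. Then for all sufficiently small θ > 0, the matrix R_θ A R_θᵀ has: a negative (1,2)-entry, all entries of R_θ A12 negative, and unchanged remaining block A22. In particular R_θ A R_θᵀ is a discrete Schrödinger operator of the graph H obtained from G by joining vertex 2 to vertex 1 and to all neighbors of vertex 1. -/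
open Matrix

/-- `A` is a discrete Schrödinger operator of the graph `G`. -/
def IsDSO {V : Type*} [Fintype V] (G : SimpleGraph V) (A : Matrix V V ℝ) : Prop :=
  A.IsSymm ∧ ∀ i j : V, i ≠ j →
    (G.Adj i j → A i j < 0) ∧ (¬ G.Adj i j → A i j = 0)

/-- The Givens rotation on coordinates `0` and `1` by angle `θ`, extended by the identity. -/
noncomputable def givens (n : ℕ) (θ : ℝ) : Matrix (Fin (n + 2)) (Fin (n + 2)) ℝ :=
  fun i j =>
    if i = 0 ∧ j = 0 then Real.cos θ
    else if i = 0 ∧ j = 1 then -Real.sin θ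
    else if i = 1 ∧ j = 0 then Real.sin θ
    else if i = 1 ∧ j = 1 then Real.cos θ
    else if i = j then 1 else 0

section Helpers

variable {n : ℕ}

private lemma sum_two' (f : Fin (n + 2) → ℝ) (hf : ∀ k, k ≠ 0 → k ≠ 1 → f k = 0) :
    ∑ k, f k = f 0 + f 1 := by
  have h01 : (0 : Fin (n + 2)) ≠ 1 := by simp [Fin.ext_iff]
  rw [← Finset.sum_subset (Finset.subset_univ ({0, 1} : Finset (Fin (n + 2))))]
  · rw [Finset.sum_pair h01]
  · intro x _ hx
    simp only [Finset.mem_insert, Finset.mem_singleton, not_or] at hx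
    exact hf x hx.1 hx.2

private lemma givens_zero (θ : ℝ) (k : Fin (n + 2)) :
    givens n θ 0 k = if k = 0 then Real.cos θ else if k = 1 then -Real.sin θ else 0 := by
  have h01 : (0 : Fin (n + 2)) ≠ 1 := by simp [Fin.ext_iff]
  unfold givens
  rcases eq_or_ne k 0 with rfl | hk0
  · simp
  · rcases eq_or_ne k 1 with rfl | hk1
    · simp [h01]
    · simp [hk0, hk1, h01, Ne.symm hk0]

private lemma givens_one (θ : ℝ) (k : Fin (n + 2)) :
    givens n θ 1 k = if k = 0 then Real.sin θ else if k = 1 then Real.cos θ else 0 := by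
  have h01 : (0 : Fin (n + 2)) ≠ 1 := by simp [Fin.ext_iff]
  unfold givens
  rcases eq_or_ne k 0 with rfl | hk0
  · simp [h01, Ne.symm h01]
  · rcases eq_or_ne k 1 with rfl | hk1
    · simp [Ne.symm h01]
    · simp [hk0, hk1, Ne.symm h01, Ne.symm hk1]

private lemma givens_ge (θ : ℝ) {i : Fin (n + 2)} (hi : 2 ≤ (i : ℕ)) (k : Fin (n + 2)) :
    givens n θ i k = if i = k then 1 else 0 := by
  have hi0 : i ≠ 0 := by intro h; subst h; simp at hi
  have hi1 : i ≠ 1 := by intro h; subst h; simp at hi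
  unfold givens
  simp [hi0, hi1]

private lemma dotL0 (θ : ℝ) (x : Fin (n + 2) → ℝ) :
    ∑ k, givens n θ 0 k * x k = Real.cos θ * x 0 - Real.sin θ * x 1 := by
  rw [sum_two' (fun k => givens n θ 0 k * x k) (fun k h0 h1 => by
    simp [givens_zero, h0, h1])]
  simp [givens_zero]
  ring

private lemma dotL1 (θ : ℝ) (x : Fin (n + 2) → ℝ) :
    ∑ k, givens n θ 1 k * x k = Real.sin θ * x 0 + Real.cos θ * x 1 := by
  have h01 : (0 : Fin (n + 2)) ≠ 1 := by simp [Fin.ext_iff]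
  rw [sum_two' (fun k => givens n θ 1 k * x k) (fun k h0 h1 => by
    simp [givens_one, h0, h1])]
  simp [givens_one, h01, Ne.symm h01]

private lemma dotLge (θ : ℝ) {i : Fin (n + 2)} (hi : 2 ≤ (i : ℕ)) (x : Fin (n + 2) → ℝ) :
    ∑ k, givens n θ i k * x k = x i := by
  simp [givens_ge θ hi]

private lemma M_apply (θ : ℝ) (A : Matrix (Fin (n + 2)) (Fin (n + 2)) ℝ) (i j : Fin (n + 2)) :
    (givens n θ * A * (givens n θ)ᵀ) i j
      = ∑ l, givens n θ j l * ∑ k, givens n θ i k * A k l := by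
  simp only [Matrix.mul_apply, Matrix.transpose_apply]
  congr 1; ext l; ring

private lemma M_0j (θ : ℝ) (A : Matrix (Fin (n + 2)) (Fin (n + 2)) ℝ) {j : Fin (n + 2)}
    (hj : 2 ≤ (j : ℕ)) :
    (givens n θ * A * (givens n θ)ᵀ) 0 j = Real.cos θ * A 0 j - Real.sin θ * A 1 j := by
  rw [M_apply, dotLge θ hj, dotL0]

private lemma M_1j (θ : ℝ) (A : Matrix (Fin (n + 2)) (Fin (n + 2)) ℝ) {j : Fin (n + 2)}
    (hj : 2 ≤ (j : ℕ)) :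
    (givens n θ * A * (givens n θ)ᵀ) 1 j = Real.sin θ * A 0 j + Real.cos θ * A 1 j := by
  rw [M_apply, dotLge θ hj, dotL1]

private lemma M_ij (θ : ℝ) (A : Matrix (Fin (n + 2)) (Fin (n + 2)) ℝ) {i j : Fin (n + 2)}
    (hi : 2 ≤ (i : ℕ)) (hj : 2 ≤ (j : ℕ)) :
    (givens n θ * A * (givens n θ)ᵀ) i j = A i j := by
  rw [M_apply, dotLge θ hj, dotLge θ hi]

private lemma M_01 (θ : ℝ) (A : Matrix (Fin (n + 2)) (Fin (n + 2)) ℝ) :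
    (givens n θ * A * (givens n θ)ᵀ) 0 1
      = Real.sin θ * (Real.cos θ * A 0 0 - Real.sin θ * A 1 0)
        + Real.cos θ * (Real.cos θ * A 0 1 - Real.sin θ * A 1 1) := by
  rw [M_apply]
  rw [show (fun l => givens n θ 1 l * ∑ k, givens n θ 0 k * A k l)
      = fun l => givens n θ 1 l * (Real.cos θ * A 0 l - Real.sin θ * A 1 l) from
    funext fun l => by rw [dotL0 θ (fun k => A k l)]]
  exact dotL1 θ _

private lemma fin_tri (k : Fin (n + 2)) : k = 0 ∨ k = 1 ∨ 2 ≤ (k : ℕ) := by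
  simp only [Fin.ext_iff, Fin.val_zero, Fin.val_one]
  omega

end Helpers

/-- Conjugating by a Givens rotation with a small positive angle turns a
discrete Schrödinger operator `A` (whose first row is "more negative" than the second) into a
discrete Schrödinger operator of the supergraph `H` obtained by joining vertex `1` to vertex `0`
and to all neighbors of vertex `0`. -/
theorem givens_rotation_small_angle
    {n : ℕ} (G : SimpleGraph (Fin (n + 2))) (A : Matrix (Fin (n + 2)) (Fin (n + 2)) ℝ)
    (hA : IsDSO G A)
    (h01 : A 0 1 < 0)
    (hcol : ∀ j : Fin (n + 2), 2 ≤ (j : ℕ) →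
      (A 0 j < 0 ∧ A 1 j < 0) ∨ (A 0 j < 0 ∧ A 1 j = 0)) :
    ∃ ε > 0, ∀ θ : ℝ, 0 < θ → θ < ε →
      ((givens n θ * A * (givens n θ)ᵀ) 0 1 < 0) ∧
      (∀ j : Fin (n + 2), 2 ≤ (j : ℕ) →
        (givens n θ * A * (givens n θ)ᵀ) 0 j < 0 ∧
        (givens n θ * A * (givens n θ)ᵀ) 1 j < 0) ∧
      (∀ i j : Fin (n + 2), 2 ≤ (i : ℕ) → 2 ≤ (j : ℕ) →
        (givens n θ * A * (givens n θ)ᵀ) i j = A i j) ∧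
      IsDSO (G ⊔ SimpleGraph.fromRel (fun i j => i = 1 ∧ (j = 0 ∨ G.Adj 0 j)))
        (givens n θ * A * (givens n θ)ᵀ) := by
  obtain ⟨hAs, hAe⟩ := hA
  have h01' : (0 : Fin (n + 2)) ≠ 1 := by simp [Fin.ext_iff]
  -- entrywise symmetry of A
  have hAsymm : ∀ a b, A b a = A a b := fun a b => congrFun (congrFun hAs a) b
  -- vertex 0 is adjacent to every other vertex of G
  have hGadj : ∀ j : Fin (n + 2), j ≠ 0 → G.Adj 0 j := by
    intro j hj
    by_contra h
    have hz := (hAe 0 j (Ne.symm hj)).2 h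
    rcases fin_tri j with rfl | rfl | hj2
    · exact hj rfl
    · exact absurd hz (ne_of_lt h01)
    · rcases hcol j hj2 with ⟨hc, _⟩ | ⟨hc, _⟩ <;> exact absurd hz (ne_of_lt hc)
  -- the (0,1)-entry as a function of θ
  set g : ℝ → ℝ := fun θ =>
    Real.sin θ * (Real.cos θ * A 0 0 - Real.sin θ * A 1 0)
      + Real.cos θ * (Real.cos θ * A 0 1 - Real.sin θ * A 1 1) with hg
  have hgcont : Continuous g := by fun_prop
  have hg0 : g 0 = A 0 1 := by simp [hg]
  -- an eventual statement near `0⁺`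
  have hev : ∀ᶠ θ in nhdsWithin (0:ℝ) (Set.Ioi 0),
      (0 < θ ∧ θ < Real.pi / 2) ∧ g θ < 0 ∧
        ∀ j : Fin (n + 2), 2 ≤ (j : ℕ) → Real.cos θ * A 0 j - Real.sin θ * A 1 j < 0 := by
    refine Filter.Eventually.and ?_ (Filter.Eventually.and ?_ ?_)
    · exact (eventually_mem_nhdsWithin).and
        ((eventually_lt_nhds (by positivity : (0:ℝ) < Real.pi / 2)).filter_mono
          nhdsWithin_le_nhds)
    · have : Filter.Tendsto g (nhds 0) (nhds (A 0 1)) := by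
        rw [← hg0]; exact hgcont.continuousAt
      exact (this.eventually_lt_const h01).filter_mono nhdsWithin_le_nhds
    · rw [Filter.eventually_all]
      intro j
      by_cases hj : 2 ≤ (j : ℕ)
      · have hAj : A 0 j < 0 := by rcases hcol j hj with ⟨h, _⟩ | ⟨h, _⟩ <;> exact h
        have hc : Filter.Tendsto (fun θ => Real.cos θ * A 0 j - Real.sin θ * A 1 j)
            (nhds 0) (nhds (A 0 j)) := by
          have hcont : Continuous (fun θ => Real.cos θ * A 0 j - Real.sin θ * A 1 j) := by
            fun_prop
          have h : Filter.Tendsto (fun θ => Real.cos θ * A 0 j - Real.sin θ * A 1 j)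
              (nhds 0) (nhds (Real.cos 0 * A 0 j - Real.sin 0 * A 1 j)) :=
            hcont.continuousAt
          simpa using h
        exact ((hc.eventually_lt_const hAj).filter_mono nhdsWithin_le_nhds).mono
          fun θ h _ => h
      · exact Filter.Eventually.of_forall fun θ h => absurd h hj
  obtain ⟨ε, hε, hsub⟩ := mem_nhdsGT_iff_exists_Ioo_subset.1 hev
  refine ⟨ε, hε, fun θ hθ0 hθε => ?_⟩
  obtain ⟨⟨-, hθpi⟩, hgθ, hrow0⟩ := hsub ⟨hθ0, hθε⟩
  have hs : 0 < Real.sin θ :=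
    Real.sin_pos_of_pos_of_lt_pi hθ0 (hθpi.trans (by linarith [Real.pi_pos]))
  have hc : 0 < Real.cos θ := Real.cos_pos_of_mem_Ioo ⟨by linarith [Real.pi_pos], hθpi⟩
  -- the three entrywise conclusions
  have C1 : (givens n θ * A * (givens n θ)ᵀ) 0 1 < 0 := by rw [M_01]; exact hgθ
  have C2 : ∀ j : Fin (n + 2), 2 ≤ (j : ℕ) →
      (givens n θ * A * (givens n θ)ᵀ) 0 j < 0 ∧
      (givens n θ * A * (givens n θ)ᵀ) 1 j < 0 := by
    intro j hj
    constructor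
    · rw [M_0j θ A hj]; exact hrow0 j hj
    · rw [M_1j θ A hj]
      rcases hcol j hj with ⟨h0, h1⟩ | ⟨h0, h1⟩
      · nlinarith
      · nlinarith
  -- symmetry of the conjugated matrix
  have hMsymm : (givens n θ * A * (givens n θ)ᵀ)ᵀ = givens n θ * A * (givens n θ)ᵀ := by
    rw [Matrix.transpose_mul, Matrix.transpose_mul, Matrix.transpose_transpose, hAs,
      ← Matrix.mul_assoc]
  have hMs : ∀ a b, (givens n θ * A * (givens n θ)ᵀ) b a = (givens n θ * A * (givens n θ)ᵀ) a b :=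
    fun a b => congrFun (congrFun hMsymm a) b
  refine ⟨C1, C2, fun i j hi hj => M_ij θ A hi hj, hMsymm, ?_⟩
  set H := G ⊔ SimpleGraph.fromRel (fun i j => i = 1 ∧ (j = 0 ∨ G.Adj 0 j)) with hH
  -- adjacency facts in H
  have Hadj01 : H.Adj 0 1 := by
    right
    exact ⟨h01', Or.inr ⟨rfl, Or.inl rfl⟩⟩
  have Hadj0j : ∀ j : Fin (n + 2), 2 ≤ (j : ℕ) → H.Adj 0 j := by
    intro j hj
    exact Or.inl (hGadj j (by intro h; subst h; simp at hj))
  have Hadj1j : ∀ j : Fin (n + 2), 2 ≤ (j : ℕ) → H.Adj 1 j := by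
    intro j hj
    have hj1 : (1 : Fin (n + 2)) ≠ j := by intro h; rw [← h] at hj; simp at hj
    exact Or.inr ⟨hj1, Or.inl ⟨rfl, Or.inr (hGadj j (by intro h; subst h; simp at hj))⟩⟩
  intro i j hij
  rcases fin_tri i with rfl | rfl | hi2 <;> rcases fin_tri j with rfl | rfl | hj2
  · exact absurd rfl hij
  · exact ⟨fun _ => C1, fun h => absurd Hadj01 h⟩
  · exact ⟨fun _ => (C2 j hj2).1, fun h => absurd (Hadj0j j hj2) h⟩
  · rw [hMs 0 1]
    exact ⟨fun _ => C1, fun h => absurd Hadj01.symm h⟩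
  · exact absurd rfl hij
  · exact ⟨fun _ => (C2 j hj2).2, fun h => absurd (Hadj1j j hj2) h⟩
  · rw [hMs 0 i]
    exact ⟨fun _ => (C2 i hi2).1, fun h => absurd (Hadj0j i hi2).symm h⟩
  · rw [hMs 1 i]
    exact ⟨fun _ => (C2 i hi2).2, fun h => absurd (Hadj1j i hi2).symm h⟩
  · -- both indices ≥ 2 : H.Adj i j ↔ G.Adj i j
    have hi1 : i ≠ 1 := by intro h; subst h; simp at hi2
    have hj1 : j ≠ 1 := by intro h; subst h; simp at hj2
    have hHG : H.Adj i j ↔ G.Adj i j := by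
      constructor
      · rintro (h | ⟨-, ⟨h1, -⟩ | ⟨h1, -⟩⟩)
        · exact h
        · exact absurd h1 hi1
        · exact absurd h1 hj1
      · exact fun h => Or.inl h
    rw [M_ij θ A hi2 hj2]
    exact ⟨fun h => (hAe i j hij).1 (hHG.1 h), fun h => (hAe i j hij).2 (fun hg' => h (hHG.2 hg'))⟩
end

section
/- Let Λ = {λ₁ ≤ λ₂ ≤ ... ≤ λₙ} be a multiset of n real numbers. Then Λ is the spectrum of some discrete Schrödinger operator of the complete graph Kₙ if and only if λ₁ < λ₂ (the smallest value is simple). -/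
open Polynomial

section DSOAux
open Matrix

section Aux
variable {N : Type*} [Fintype N] [DecidableEq N]

lemma eval_charpoly' (M : Matrix N N ℝ) (x : ℝ) :
    (M.charpoly).eval x = (x • (1 : Matrix N N ℝ) - M).det := by
  unfold Matrix.charpoly
  rw [← coe_evalRingHom, RingHom.map_det]
  congr 1
  ext i j
  by_cases h : i = j <;>
    simp [charmatrix_apply, Matrix.sub_apply, Matrix.smul_apply, Matrix.one_apply,
      diagonal_apply, h]

lemma charpoly_conj' (P M Q : Matrix N N ℝ) (h1 : P * Q = 1) :
    (P * M * Q).charpoly = M.charpoly := by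
  have hmap : (C : ℝ →+* ℝ[X]).mapMatrix P * (C : ℝ →+* ℝ[X]).mapMatrix Q = 1 := by
    rw [← _root_.map_mul, h1, _root_.map_one]
  have key : charmatrix (P * M * Q)
      = (C : ℝ →+* ℝ[X]).mapMatrix P * charmatrix M * (C : ℝ →+* ℝ[X]).mapMatrix Q := by
    unfold charmatrix
    rw [Matrix.mul_sub, Matrix.sub_mul]
    congr 1
    · rw [mul_assoc, scalar_commute X (fun r => (Commute.all X r)) _, ← mul_assoc, hmap, one_mul]
    · rw [← _root_.map_mul, ← _root_.map_mul]
  unfold Matrix.charpoly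
  have hd : ((C : ℝ →+* ℝ[X]).mapMatrix P).det * ((C : ℝ →+* ℝ[X]).mapMatrix Q).det = 1 := by
    rw [← det_mul, hmap, det_one]
  rw [key, det_mul, det_mul, mul_right_comm, hd, one_mul]

lemma charpoly_diagonal' (d : N → ℝ) :
    (diagonal d).charpoly = ∏ i, (X - C (d i)) := by
  unfold Matrix.charpoly
  have : charmatrix (diagonal d) = diagonal fun i => X - C (d i) := by
    ext i j
    by_cases h : i = j <;>
      simp [charmatrix_apply, diagonal_apply, h]
  rw [this, det_diagonal]

lemma herm_charpoly {A : Matrix N N ℝ} (hA : A.IsHermitian) :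
    A.charpoly = ∏ i, (X - C (hA.eigenvalues i)) := by
  have h1 : (hA.eigenvectorUnitary : Matrix N N ℝ) * (star (hA.eigenvectorUnitary : Matrix N N ℝ)) = 1 :=
    (Matrix.mem_unitaryGroup_iff).mp hA.eigenvectorUnitary.2
  calc A.charpoly
      = ((hA.eigenvectorUnitary : Matrix N N ℝ) * diagonal (RCLike.ofReal ∘ hA.eigenvalues)
          * (star (hA.eigenvectorUnitary : Matrix N N ℝ))).charpoly := by
        exact congrArg Matrix.charpoly hA.spectral_theorem
    _ = (diagonal (RCLike.ofReal ∘ hA.eigenvalues)).charpoly := charpoly_conj' _ _ _ h1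
    _ = ∏ i, (X - C (hA.eigenvalues i)) := by
        rw [charpoly_diagonal']
        simp

lemma multiset_eq_of_prod_eq (f g : N → ℝ)
    (h : ∏ i, (X - C (f i)) = ∏ i, (X - C (g i))) :
    Multiset.map f Finset.univ.val = Multiset.map g Finset.univ.val := by
  have hf : ∏ i, (X - C (f i)) = ((Multiset.map f Finset.univ.val).map fun a => X - C a).prod := by
    rw [Multiset.map_map]; rfl
  have hg : ∏ i, (X - C (g i)) = ((Multiset.map g Finset.univ.val).map fun a => X - C a).prod := by
    rw [Multiset.map_map]; rfl
  have := congrArg Polynomial.roots (hf ▸ hg ▸ h)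
  rwa [roots_multiset_prod_X_sub_C, roots_multiset_prod_X_sub_C] at this

lemma border_charpoly (A : Matrix N N ℝ) (u : N → ℝ) (α c ρ : ℝ) (q : ℝ[X])
    (hu : A *ᵥ u = α • u) (hnorm : u ⬝ᵥ u = 1)
    (hq : A.charpoly = (X - C α) * q) :
    (Matrix.fromBlocks A (Matrix.of fun i (_ : Fin 1) => ρ * u i)
        (Matrix.of fun (_ : Fin 1) j => ρ * u j)
        (Matrix.of fun _ _ => c)).charpoly
      = ((X - C α) * (X - C c) - C (ρ ^ 2)) * q := by
  apply Polynomial.eq_of_infinite_eval_eq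
  have hfin : {x : ℝ | A.charpoly.eval x = 0}.Finite := by
    exact Polynomial.finite_setOf_isRoot (A.charpoly_monic.ne_zero)
  apply Set.Infinite.mono (s := {x : ℝ | A.charpoly.eval x = 0}ᶜ) ?_ (hfin.infinite_compl)
  intro x hx
  simp only [Set.mem_compl_iff, Set.mem_setOf_eq] at hx
  have hxα : x ≠ α := by
    intro h; apply hx; rw [hq]; subst h; simp
  have hxαs : x - α ≠ 0 := sub_ne_zero.mpr hxα
  have hqx : q.eval x ≠ 0 := by
    intro h; apply hx; rw [hq]; simp [h]
  set M := x • (1 : Matrix N N ℝ) - A with hMdef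
  have hdet : M.det = (x - α) * q.eval x := by
    rw [← eval_charpoly', hq]; simp
  have hdet0 : M.det ≠ 0 := by rw [hdet]; exact mul_ne_zero hxαs hqx
  haveI : Invertible M := M.invertibleOfIsUnitDet (isUnit_iff_ne_zero.mpr hdet0)
  have hMu : M *ᵥ u = (x - α) • u := by
    rw [hMdef, sub_mulVec, smul_mulVec, one_mulVec, hu, sub_smul]
  have hMinv : ∀ k, (⅟M *ᵥ u) k = (x - α)⁻¹ * u k := by
    have h0 : ⅟M *ᵥ (M *ᵥ u) = u := by rw [mulVec_mulVec, invOf_mul_self, one_mulVec]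
    rw [hMu, mulVec_smul] at h0
    intro k
    have h1 := congrFun h0 k
    simp only [Pi.smul_apply, smul_eq_mul] at h1
    rw [← h1, inv_mul_cancel_left₀ hxαs]
  set B' := (Matrix.of fun i (_ : Fin 1) => -(ρ * u i)) with hB'
  set C' := (Matrix.of fun (_ : Fin 1) j => -(ρ * u j)) with hC'
  set D' := (Matrix.of fun (_ : Fin 1) (_ : Fin 1) => x - c) with hD'
  have hsplit : x • (1 : Matrix (N ⊕ Fin 1) (N ⊕ Fin 1) ℝ)
      - Matrix.fromBlocks A (Matrix.of fun i (_ : Fin 1) => ρ * u i)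
        (Matrix.of fun (_ : Fin 1) j => ρ * u j) (Matrix.of fun _ _ => c)
      = Matrix.fromBlocks M B' C' D' := by
    ext i j
    rcases i with i | i <;> rcases j with j | j
    · simp [Matrix.one_apply, hMdef, Sum.inl.injEq]
    · simp [hB']
    · simp [hC']
    · have : i = j := Subsingleton.elim i j
      subst this
      simp [Matrix.one_apply, hD']
  have hprod : ∀ k, (⅟M * B') k (0 : Fin 1) = -(ρ * ((x - α)⁻¹ * u k)) := by
    intro k
    rw [Matrix.mul_apply]
    have : ∀ l, ⅟M k l * B' l 0 = (-ρ) * (⅟M k l * u l) := by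
      intro l; simp [hB']; ring
    rw [Finset.sum_congr rfl (fun l _ => this l), ← Finset.mul_sum]
    have hsum : ∑ l, ⅟M k l * u l = (⅟M *ᵥ u) k := rfl
    rw [hsum, hMinv k]; ring
  have hschur : (C' * ⅟M * B') (0 : Fin 1) (0 : Fin 1) = ρ ^ 2 * (x - α)⁻¹ := by
    rw [Matrix.mul_assoc, Matrix.mul_apply]
    have : ∀ k, C' 0 k * (⅟M * B') k 0 = ρ ^ 2 * (x - α)⁻¹ * (u k * u k) := by
      intro k; rw [hprod k]; simp [hC']; ring
    rw [Finset.sum_congr rfl (fun k _ => this k), ← Finset.mul_sum]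
    have : ∑ k, u k * u k = u ⬝ᵥ u := rfl
    rw [this, hnorm, mul_one]
  show eval x _ = eval x _
  rw [eval_charpoly', hsplit, det_fromBlocks₁₁, det_fin_one]
  simp only [Matrix.sub_apply, hD', Matrix.of_apply, hschur]
  rw [hdet]
  simp only [eval_mul, eval_sub, eval_X, eval_C, eval_pow]
  field_simp


end Aux

lemma exists_dso : ∀ (m : ℕ) (μ : ℝ) (r : Fin m → ℝ), (∀ k, μ < r k) →
    ∃ (A : Matrix (Fin (m+1)) (Fin (m+1)) ℝ) (u : Fin (m+1) → ℝ),
      A.IsSymm ∧ (∀ i j, i ≠ j → A i j < 0) ∧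
      A.charpoly = (X - C μ) * ∏ k, (X - C (r k)) ∧
      (∀ i, 0 < u i) ∧ u ⬝ᵥ u = 1 ∧ A *ᵥ u = μ • u := by
  intro m
  induction m with
  | zero =>
    intro μ r _
    refine ⟨Matrix.of fun _ _ => μ, fun _ => 1, ?_, ?_, ?_, fun i => one_pos, ?_, ?_⟩
    · ext i j; rfl
    · intro i j hij; exact absurd (Fin.ext (by omega)) hij
    · unfold Matrix.charpoly
      rw [det_fin_one]
      simp [charmatrix_apply]
    · simp [dotProduct]
    · funext i
      simp [mulVec, dotProduct]
  | succ m ih =>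
    intro μ r hr
    set β := Finset.univ.inf' Finset.univ_nonempty r with hβ
    have hβle : ∀ k, β ≤ r k := fun k => Finset.inf'_le _ (Finset.mem_univ k)
    have hμβ : μ < β := by
      obtain ⟨k, _, hk⟩ := Finset.exists_mem_eq_inf' Finset.univ_nonempty r
      rw [hβ, hk]; exact hr k
    set α := (μ + β)/2 with hα
    have hμα : μ < α := by rw [hα]; linarith
    have hαβ : α < β := by rw [hα]; linarith
    obtain ⟨A', u', hsym', hneg', hcp', hupos', hunorm', hueig'⟩ :=
      ih α (fun k => r k.succ) (fun k => lt_of_lt_of_le hαβ (hβle _))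
    set c := μ + r 0 - α with hc
    have hαr0 : α < r 0 := lt_of_lt_of_le hαβ (hβle 0)
    set ρ := -Real.sqrt ((α - μ) * (r 0 - α)) with hρ
    have hprodpos : 0 < (α - μ) * (r 0 - α) := mul_pos (by linarith) (by linarith)
    have hρneg : ρ < 0 := by
      rw [hρ, neg_lt, neg_zero]; exact Real.sqrt_pos.mpr hprodpos
    have hρsq : ρ ^ 2 = (α - μ) * (r 0 - α) := by
      rw [hρ, neg_pow, Even.neg_one_pow (by norm_num), one_mul,
        Real.sq_sqrt hprodpos.le]
    set C₀ := Matrix.fromBlocks A' (Matrix.of fun i (_ : Fin 1) => ρ * u' i)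
        (Matrix.of fun (_ : Fin 1) j => ρ * u' j) (Matrix.of fun _ _ => c) with hC₀
    have hcp₀ : C₀.charpoly
        = ((X - C α) * (X - C c) - C (ρ^2)) * ∏ k : Fin m, (X - C (r k.succ)) :=
      border_charpoly A' u' α c ρ _ hueig' hunorm' hcp'
    have hquad : (X - C α) * (X - C c) - C (ρ^2) = (X - C μ) * (X - C (r 0)) := by
      have h2 : α + c = μ + r 0 := by rw [hc]; ring
      have h3 : α * c - ρ^2 = μ * r 0 := by rw [hc, hρsq]; ring
      have e1 : (X - C α) * (X - C c) - C (ρ^2)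
          = X^2 - C (α + c) * X + C (α * c - ρ^2) := by
        simp only [_root_.map_add, _root_.map_sub, _root_.map_mul]; ring
      have e2 : (X - C μ) * (X - C (r 0)) = X^2 - C (μ + r 0) * X + C (μ * r 0) := by
        simp only [_root_.map_add, _root_.map_mul]; ring
      rw [e1, e2, h2, h3]
    set e : Fin (m+1) ⊕ Fin 1 ≃ Fin (m+1+1) := finSumFinEquiv with he
    -- the eigenvector on the sum type
    set w : Fin (m+1) ⊕ Fin 1 → ℝ := Sum.elim ((-ρ) • u') (fun _ => α - μ) with hw
    have hwpos : ∀ p, 0 < w p := by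
      rintro (p | p)
      · exact mul_pos (neg_pos.mpr hρneg) (hupos' p)
      · simpa [hw] using sub_pos.mpr hμα
    have hC₀w : C₀ *ᵥ w = μ • w := by
      rw [hC₀, hw, fromBlocks_mulVec]
      funext p
      rcases p with p | p
      · have h1 : (A' *ᵥ (Sum.elim ((-ρ) • u') (fun _ : Fin 1 => α - μ) ∘ Sum.inl)) p
            = (-ρ) * (α * u' p) := by
          have : (Sum.elim ((-ρ) • u') (fun _ : Fin 1 => α - μ) ∘ Sum.inl) = (-ρ) • u' := rfl
          rw [this, mulVec_smul, hueig']
          simp [mul_assoc]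
        have h2 : ((Matrix.of fun i (_ : Fin 1) => ρ * u' i) *ᵥ
            (Sum.elim ((-ρ) • u') (fun _ : Fin 1 => α - μ) ∘ Sum.inr)) p = ρ * u' p * (α - μ) := by
          simp [mulVec, dotProduct]
        simp only [Sum.elim_inl, Pi.add_apply, h1, h2, Pi.smul_apply, smul_eq_mul]
        ring
      · have h1 : ((Matrix.of fun (_ : Fin 1) j => ρ * u' j) *ᵥ
            (Sum.elim ((-ρ) • u') (fun _ : Fin 1 => α - μ) ∘ Sum.inl)) p = ρ * (-ρ) := by
          have : ∀ k, (ρ * u' k) * ((-ρ) * u' k) = (ρ * (-ρ)) * (u' k * u' k) := by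
            intro k; ring
          simp only [mulVec, dotProduct, Function.comp, Sum.elim_inl, Pi.smul_apply,
            smul_eq_mul, Matrix.of_apply]
          rw [Finset.sum_congr rfl (fun k _ => this k), ← Finset.mul_sum]
          have : ∑ k, u' k * u' k = u' ⬝ᵥ u' := rfl
          rw [this, hunorm', mul_one]
        have h2 : ((Matrix.of fun (_ : Fin 1) (_ : Fin 1) => c) *ᵥ
            (Sum.elim ((-ρ) • u') (fun _ : Fin 1 => α - μ) ∘ Sum.inr)) p = c * (α - μ) := by
          simp [mulVec, dotProduct]
        simp only [Sum.elim_inr, Pi.add_apply, h1, h2, Pi.smul_apply, smul_eq_mul]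
        have : ρ * (-ρ) = -((α - μ) * (r 0 - α)) := by rw [← hρsq]; ring
        rw [this, hc]
        ring
    set t := Real.sqrt (ρ^2 + (α - μ)^2) with ht
    have hss : 0 < ρ^2 + (α - μ)^2 :=
      add_pos_of_nonneg_of_pos (sq_nonneg ρ) (pow_pos (sub_pos.mpr hμα) 2)
    have htpos : 0 < t := Real.sqrt_pos.mpr hss
    have htsq : t^2 = ρ^2 + (α - μ)^2 := Real.sq_sqrt hss.le
    refine ⟨Matrix.reindex e e C₀, (t⁻¹ • w) ∘ e.symm, ?_, ?_, ?_, ?_, ?_, ?_⟩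
    · -- symmetry
      have hsymC₀ : ∀ p q, C₀ q p = C₀ p q := by
        rintro (p | p) (q | q) <;>
          simp [hC₀, fromBlocks, hsym'.apply]
      ext i j
      simp only [Matrix.transpose_apply, Matrix.reindex_apply, Matrix.submatrix_apply]
      exact hsymC₀ _ _
    · -- negativity
      intro i j hij
      have hpq : e.symm i ≠ e.symm j := fun h => hij (by
        have := congrArg e h; simpa using this)
      simp only [Matrix.reindex_apply, Matrix.submatrix_apply]
      rcases hp : e.symm i with p | p <;> rcases hq : e.symm j with q | q
      · have : p ≠ q := by rintro rfl; exact hpq (hp.trans hq.symm)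
        simpa [hC₀] using hneg' p q this
      · simpa [hC₀] using mul_neg_of_neg_of_pos hρneg (hupos' p)
      · simpa [hC₀] using mul_neg_of_neg_of_pos hρneg (hupos' q)
      · exact absurd (hp.trans ((congrArg _ (Subsingleton.elim p q)).trans hq.symm))
          hpq
    · -- charpoly
      rw [Matrix.charpoly_reindex, hcp₀, hquad, Fin.prod_univ_succ, ← mul_assoc]
    · -- positivity
      intro i
      exact mul_pos (inv_pos.mpr htpos) (hwpos _)
    · -- norm
      have : (t⁻¹ • w) ∘ e.symm ⬝ᵥ (t⁻¹ • w) ∘ e.symm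
          = ∑ p : Fin (m+1) ⊕ Fin 1, (t⁻¹ * w p) * (t⁻¹ * w p) := by
        rw [dotProduct]
        exact Equiv.sum_comp e.symm fun p => (t⁻¹ * w p) * (t⁻¹ * w p)
      rw [this]
      have expand : ∀ p, (t⁻¹ * w p) * (t⁻¹ * w p) = (t⁻¹ * t⁻¹) * (w p * w p) := by
        intro p; ring
      rw [Finset.sum_congr rfl (fun p _ => expand p), ← Finset.mul_sum]
      rw [Fintype.sum_sum_type]
      have hsum1 : ∑ k : Fin (m+1), w (Sum.inl k) * w (Sum.inl k) = ρ^2 := by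
        have : ∀ k, w (Sum.inl k) * w (Sum.inl k) = ρ^2 * (u' k * u' k) := by
          intro k; simp [hw]; ring
        rw [Finset.sum_congr rfl (fun k _ => this k), ← Finset.mul_sum]
        have : ∑ k, u' k * u' k = u' ⬝ᵥ u' := rfl
        rw [this, hunorm', mul_one]
      have hsum2 : ∑ k : Fin 1, w (Sum.inr k) * w (Sum.inr k) = (α - μ)^2 := by
        simp [hw]; ring
      rw [hsum1, hsum2, ← htsq]
      field_simp
    · -- eigen equation
      have hcomp : ((t⁻¹ • w) ∘ ⇑e.symm) ∘ ⇑e.symm.symm = t⁻¹ • w := by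
        funext p; simp
      rw [Matrix.reindex_apply, Matrix.submatrix_mulVec_equiv, hcomp, mulVec_smul, hC₀w]
      funext i
      simp only [Function.comp_apply, Pi.smul_apply, smul_eq_mul]
      ring


lemma perron_sign {N : Type*} [Fintype N] [DecidableEq N]
    (A : Matrix N N ℝ) (μ : ℝ)
    (hneg : ∀ i j, i ≠ j → A i j < 0)
    (hPSD : (A - μ • 1).PosSemidef)
    (v : N → ℝ) (hv0 : v ≠ 0) (hv : A *ᵥ v = μ • v) :
    ∀ k l, 0 < v k * v l := by
  set b := fun k => |v k| with hb
  set M := A - μ • (1 : Matrix N N ℝ) with hM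
  have hstar : ∀ x : N → ℝ, star x = x := fun x => funext fun k => star_trivial _
  have hMv : M *ᵥ v = 0 := by
    rw [hM, sub_mulVec, smul_mulVec, one_mulVec, hv, sub_self]
  have expandQ : ∀ x : N → ℝ, x ⬝ᵥ (M *ᵥ x)
      = (∑ k, ∑ l, A k l * (x k * x l)) - μ * ∑ k, x k * x k := by
    intro x
    rw [hM, sub_mulVec, dotProduct_sub, smul_mulVec, one_mulVec]
    congr 1
    · simp only [dotProduct, mulVec, Finset.mul_sum]
      exact Finset.sum_congr rfl fun k _ => Finset.sum_congr rfl fun l _ => by ring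
    · simp only [dotProduct, Pi.smul_apply, smul_eq_mul, Finset.mul_sum]
      exact Finset.sum_congr rfl fun k _ => by ring
  have hbb : ∀ k, b k * b k = v k * v k := fun k => abs_mul_abs_self (v k)
  have hsq : ∑ k, b k * b k = ∑ k, v k * v k :=
    Finset.sum_congr rfl fun k _ => hbb k
  have hterm_le : ∀ k l, A k l * (b k * b l) ≤ A k l * (v k * v l) := by
    intro k l
    rcases eq_or_ne k l with rfl | hkl
    · rw [hbb]
    · have h1 : v k * v l ≤ b k * b l := by
        rw [hb]; calc v k * v l ≤ |v k * v l| := le_abs_self _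
          _ = |v k| * |v l| := abs_mul _ _
      exact mul_le_mul_of_nonpos_left h1 (hneg k l hkl).le
  have hQv : v ⬝ᵥ (M *ᵥ v) = 0 := by rw [hMv, dotProduct_zero]
  have hQb_le : b ⬝ᵥ (M *ᵥ b) ≤ 0 := by
    rw [expandQ, ← hQv, expandQ, hsq]
    have : (∑ k, ∑ l, A k l * (b k * b l)) ≤ ∑ k, ∑ l, A k l * (v k * v l) :=
      Finset.sum_le_sum fun k _ => Finset.sum_le_sum fun l _ => hterm_le k l
    linarith
  have hQb_ge : 0 ≤ b ⬝ᵥ (M *ᵥ b) := by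
    have := hPSD.dotProduct_mulVec_nonneg b
    rwa [hstar] at this
  have hQb0 : b ⬝ᵥ (M *ᵥ b) = 0 := le_antisymm hQb_le hQb_ge
  have hMb : M *ᵥ b = 0 := by
    rw [← hPSD.dotProduct_mulVec_zero_iff b, hstar]
    exact hQb0
  have hAb : A *ᵥ b = μ • b := by
    rw [hM, sub_mulVec, smul_mulVec, one_mulVec] at hMb
    exact sub_eq_zero.mp hMb
  have hbnn : ∀ k, 0 ≤ b k := fun k => abs_nonneg _
  have hbne : ∃ k, b k ≠ 0 := by
    obtain ⟨k, hk⟩ := Function.ne_iff.mp hv0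
    exact ⟨k, abs_ne_zero.mpr hk⟩
  have hbpos : ∀ k, 0 < b k := by
    by_contra hcon
    push_neg at hcon
    obtain ⟨k, hk⟩ := hcon
    have hk0 : b k = 0 := le_antisymm hk (hbnn k)
    have hrow : ∑ l, A k l * b l = 0 := by
      have := congrFun hAb k
      simp only [mulVec, dotProduct, Pi.smul_apply, smul_eq_mul] at this
      rw [this, hk0, mul_zero]
    have hsplit : ∑ l ∈ Finset.univ.erase k, A k l * b l + A k k * b k = ∑ l, A k l * b l :=
      Finset.sum_erase_add _ _ (Finset.mem_univ k)
    have hz : ∑ l ∈ Finset.univ.erase k, A k l * b l = 0 := by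
      rw [hk0, mul_zero, add_zero] at hsplit
      rw [hsplit, hrow]
    have hall := (Finset.sum_eq_zero_iff_of_nonpos (fun l hl =>
      mul_nonpos_of_nonpos_of_nonneg (hneg k l (Finset.ne_of_mem_erase hl).symm).le (hbnn l))).mp hz
    have hbzero : ∀ l, b l = 0 := by
      intro l
      rcases eq_or_ne l k with rfl | hlk
      · exact hk0
      · have hl : l ∈ Finset.univ.erase k := Finset.mem_erase.mpr ⟨hlk, Finset.mem_univ l⟩
        have := hall l hl
        rcases mul_eq_zero.mp this with h | h
        · exact absurd h (hneg k l (Ne.symm hlk)).ne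
        · exact h
    obtain ⟨k', hk'⟩ := hbne
    exact hk' (hbzero k')
  -- per-term equality
  have hQb_eq : (∑ k, ∑ l, A k l * (b k * b l)) = ∑ k, ∑ l, A k l * (v k * v l) := by
    have h1 := expandQ b
    have h2 := expandQ v
    rw [hQb0] at h1
    rw [hQv] at h2
    rw [hsq] at h1
    linarith
  have hterm_eq : ∀ k l, A k l * (b k * b l) = A k l * (v k * v l) := by
    have hprod : ∑ p ∈ Finset.univ ×ˢ Finset.univ, A p.1 p.2 * (b p.1 * b p.2)
        = ∑ p ∈ Finset.univ ×ˢ Finset.univ, A p.1 p.2 * (v p.1 * v p.2) := by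
      rw [Finset.sum_product, Finset.sum_product]
      exact hQb_eq
    intro k l
    have hmem : (k, l) ∈ Finset.univ ×ˢ Finset.univ := Finset.mem_product.mpr ⟨Finset.mem_univ _, Finset.mem_univ _⟩
    exact (Finset.sum_eq_sum_iff_of_le (fun p (_ : p ∈ Finset.univ ×ˢ Finset.univ) => hterm_le p.1 p.2)).mp hprod (k, l) hmem
  intro k l
  rcases eq_or_ne k l with rfl | hkl
  · exact mul_self_pos.mpr (fun h => (hbpos k).ne' (by rw [hb]; simp [h]))
  · have := hterm_eq k l
    have hA := (hneg k l hkl).ne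
    have : b k * b l = v k * v l := mul_left_cancel₀ hA this
    rw [← this]
    exact mul_pos (hbpos k) (hbpos l)

lemma forward_dir {n : ℕ} (h0 : 0 < n) (h1 : 1 < n) (lam : Fin n → ℝ)
    (hmono : Monotone lam) (A : Matrix (Fin n) (Fin n) ℝ)
    (hsym : A.IsSymm) (hneg : ∀ i j, i ≠ j → A i j < 0)
    (hcp : A.charpoly = ∏ i, (X - C (lam i))) :
    lam ⟨0, h0⟩ < lam ⟨1, h1⟩ := by
  by_contra hlt
  set z : Fin n := ⟨0, h0⟩ with hz
  set o : Fin n := ⟨1, h1⟩ with ho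
  set μ := lam z with hμ
  have heq : lam o = μ := le_antisymm (not_lt.mp hlt) (hmono (by simp [Fin.le_def, hz, ho]))
  have hH : A.IsHermitian := by
    rw [Matrix.IsHermitian, conjTranspose_eq_transpose_of_trivial]
    exact hsym
  set eig := hH.eigenvalues with heig
  have hms : Multiset.map lam Finset.univ.val = Multiset.map eig Finset.univ.val :=
    multiset_eq_of_prod_eq _ _ (by rw [← hcp, herm_charpoly hH])
  have hmin : ∀ i, μ ≤ eig i := by
    intro i
    have hmem : eig i ∈ Multiset.map lam Finset.univ.val := by
      rw [hms]
      exact Multiset.mem_map_of_mem _ (Finset.mem_univ i)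
    obtain ⟨j, _, hj⟩ := Multiset.mem_map.mp hmem
    rw [← hj]
    exact hmono (by simp [Fin.le_def, hz])
  -- two indices with eigenvalue μ
  have hcard : 2 ≤ (Finset.univ.filter (fun i => μ = eig i)).card := by
    have hcount : ∀ f : Fin n → ℝ,
        (Finset.univ.filter (fun i => μ = f i)).card
          = Multiset.count μ (Multiset.map f Finset.univ.val) := by
      intro f
      rw [Multiset.count_map]
      rfl
    have h2 : 2 ≤ (Finset.univ.filter (fun i => μ = lam i)).card := by
      have hsub : ({z, o} : Finset (Fin n)) ⊆ Finset.univ.filter (fun i => μ = lam i) := by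
        intro x hx
        rcases Finset.mem_insert.mp hx with rfl | hx
        · exact Finset.mem_filter.mpr ⟨Finset.mem_univ _, hμ⟩
        · rw [Finset.mem_singleton.mp hx]
          exact Finset.mem_filter.mpr ⟨Finset.mem_univ _, heq.symm⟩
      calc 2 = ({z, o} : Finset (Fin n)).card := by
            rw [Finset.card_pair]
            simp [hz, ho, Fin.ext_iff]
        _ ≤ _ := Finset.card_le_card hsub
      done
    rw [hcount lam, hms, ← hcount eig] at h2
    exact h2
  obtain ⟨i, hi, j, hj, hij⟩ := Finset.one_lt_card.mp (by omega : 1 < (Finset.univ.filter (fun i => μ = eig i)).card)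
  have hei : eig i = μ := ((Finset.mem_filter.mp hi).2).symm
  have hej : eig j = μ := ((Finset.mem_filter.mp hj).2).symm
  -- PSD of A - μ • 1
  have hPSD : (A - μ • 1).PosSemidef := by
    have hst := hH.spectral_theorem
    set V : Matrix (Fin n) (Fin n) ℝ := (hH.eigenvectorUnitary : Matrix (Fin n) (Fin n) ℝ) with hV
    have hVV : V * star V = 1 := (Matrix.mem_unitaryGroup_iff).mp hH.eigenvectorUnitary.2
    have hdiag : Matrix.diagonal (RCLike.ofReal ∘ eig) = Matrix.diagonal eig := by
      congr 1
    have h1 : Matrix.diagonal (fun i => eig i - μ)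
        = Matrix.diagonal eig - μ • (1 : Matrix (Fin n) (Fin n) ℝ) := by
      rw [smul_one_eq_diagonal, ← diagonal_sub]
    have key : A - μ • 1 = V * Matrix.diagonal (fun i => eig i - μ) * (star V) := by
      calc A - μ • 1
          = V * Matrix.diagonal eig * (star V) - μ • 1 := by rw [← hdiag]; exact congrArg (· - μ • 1) hst
        _ = V * Matrix.diagonal eig * (star V) - V * (μ • 1) * (star V) := by
            rw [Matrix.mul_smul, Matrix.smul_mul, Matrix.mul_one, hVV]
        _ = V * (Matrix.diagonal eig - μ • 1) * (star V) := by
            rw [Matrix.mul_sub, Matrix.sub_mul]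
        _ = V * Matrix.diagonal (fun i => eig i - μ) * (star V) := by rw [h1]
    rw [key]
    have hd : (Matrix.diagonal (fun i => eig i - μ)).PosSemidef :=
      posSemidef_diagonal_iff.mpr fun i => sub_nonneg.mpr (hmin i)
    exact hd.mul_mul_conjTranspose_same V
  -- eigenvectors
  set v : Fin n → ℝ := ⇑(hH.eigenvectorBasis i) with hv
  set w : Fin n → ℝ := ⇑(hH.eigenvectorBasis j) with hw
  have hveig : A *ᵥ v = μ • v := by
    have h := hH.mulVec_eigenvectorBasis i
    rw [show hH.eigenvalues i = μ from hei] at h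
    exact h
  have hweig : A *ᵥ w = μ • w := by
    have h := hH.mulVec_eigenvectorBasis j
    rw [show hH.eigenvalues j = μ from hej] at h
    exact h
  have hv0 : v ≠ 0 := by
    intro h
    apply hH.eigenvectorBasis.orthonormal.ne_zero i
    ext k
    exact congrFun h k
  have hw0 : w ≠ 0 := by
    intro h
    apply hH.eigenvectorBasis.orthonormal.ne_zero j
    ext k
    exact congrFun h k
  have hvpos := perron_sign A μ hneg hPSD v hv0 hveig
  have hwpos := perron_sign A μ hneg hPSD w hw0 hweig
  have horth : ∑ k, v k * w k = 0 := by
    have := hH.eigenvectorBasis.orthonormal.2 hij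
    simp [PiLp.inner_apply, RCLike.inner_apply, conj_trivial] at this
    rw [← this]
    exact Finset.sum_congr rfl fun k _ => mul_comm _ _
  have hsign : ∀ k : Fin n, 0 < (v k * w k) * (v z * w z) := by
    intro k
    have h1 := mul_pos (hvpos k z) (hwpos k z)
    nlinarith [h1]
  have : 0 < (∑ k, v k * w k) * (v z * w z) := by
    rw [Finset.sum_mul]
    exact Finset.sum_pos (fun k _ => hsign k) ⟨z, Finset.mem_univ z⟩
  rw [horth, zero_mul] at this
  exact lt_irrefl 0 this

end DSOAux

/-- A nondecreasing list `λ₁ ≤ ⋯ ≤ λₙ` (`n ≥ 2`) is the spectrum of a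
discrete Schrödinger operator of the complete graph `Kₙ` if and only if `λ₁ < λ₂`. -/
theorem complete_graph_spectrum_iff
    {n : ℕ} (hn : 2 ≤ n) (lam : Fin n → ℝ) (hmono : Monotone lam) :
    (∃ A : Matrix (Fin n) (Fin n) ℝ,
        IsDSO (⊤ : SimpleGraph (Fin n)) A ∧
        A.charpoly = ∏ i : Fin n, (X - C (lam i))) ↔
      lam ⟨0, by omega⟩ < lam ⟨1, by omega⟩ := by
  constructor
  · rintro ⟨A, ⟨hsym, hcond⟩, hcp⟩
    exact forward_dir (by omega) (by omega) lam hmono A hsym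
      (fun i j hij => (hcond i j hij).1 ((SimpleGraph.top_adj i j).mpr hij)) hcp
  · intro hlt
    obtain ⟨m, rfl⟩ : ∃ m, n = m + 2 := ⟨n - 2, by omega⟩
    have hr : ∀ k : Fin (m+1), lam ⟨0, by omega⟩ < lam k.succ := by
      intro k
      refine hlt.trans_le (hmono ?_)
      rw [Fin.le_def, Fin.val_succ]
      show 1 ≤ k.val + 1
      omega
    obtain ⟨A, u, hsym, hneg, hcp, -, -, -⟩ :=
      exists_dso (m+1) (lam ⟨0, by omega⟩) (fun k => lam k.succ) hr
    refine ⟨A, ⟨hsym, fun i j hij =>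
      ⟨fun _ => hneg i j hij, fun hna => absurd ((SimpleGraph.top_adj i j).mpr hij) hna⟩⟩, ?_⟩
    rw [hcp]
    have h0 : (⟨0, by omega⟩ : Fin (m+2)) = 0 := rfl
    rw [h0]
    exact (Fin.prod_univ_succ fun i => (X - C (lam i))).symm
end

section
/- Let G be a connected unicyclic graph whose unique cycle has odd length, and let A ∈ S(G). Let p be the product of the entries of A corresponding to the edges of the cycle (one entry per edge, above the diagonal). If p < 0, then A is signature similar to a discrete Schrödinger operator of G; if p > 0, then −A is signature similar to a discrete Schrödinger operator of G. -/
namespace UnicyclicAux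

open SimpleGraph

variable {V : Type*}

/-- Product of a weight function along the darts of a walk. -/
noncomputable def wpr (κ : V → V → ℝ) {H : SimpleGraph V} {x y : V} (w : H.Walk x y) : ℝ :=
  (w.darts.map fun dd => κ dd.toProd.1 dd.toProd.2).prod

@[simp] lemma wpr_nil (κ : V → V → ℝ) {H : SimpleGraph V} {x : V} :
    wpr κ (Walk.nil : H.Walk x x) = 1 := by simp [wpr]

@[simp] lemma wpr_cons (κ : V → V → ℝ) {H : SimpleGraph V} {x y z : V}
    (h : H.Adj x y) (p : H.Walk y z) :
    wpr κ (Walk.cons h p) = κ x y * wpr κ p := by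
  simp [wpr, Walk.darts_cons]

lemma wpr_append (κ : V → V → ℝ) {H : SimpleGraph V} {x y z : V}
    (p : H.Walk x y) (q : H.Walk y z) :
    wpr κ (p.append q) = wpr κ p * wpr κ q := by
  simp [wpr, Walk.darts_append]

lemma wpr_concat (κ : V → V → ℝ) {H : SimpleGraph V} {x y z : V}
    (p : H.Walk x y) (h : H.Adj y z) :
    wpr κ (p.concat h) = wpr κ p * κ y z := by
  simp [wpr, Walk.darts_concat]

lemma wpr_transfer (κ : V → V → ℝ) {G H : SimpleGraph V} {x y : V}
    (p : G.Walk x y) (hp : ∀ e ∈ p.edges, e ∈ H.edgeSet) :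
    wpr κ (p.transfer H hp) = wpr κ p := by
  induction p with
  | nil => simp [Walk.transfer]
  | cons h p ih =>
    simp only [Walk.transfer]
    exact (wpr_cons κ _ _).trans (congrArg (κ _ _ * ·) (ih _))

lemma wpr_reverse (κ : V → V → ℝ) (hκ : ∀ i j, κ i j = κ j i)
    {H : SimpleGraph V} {x y : V} (p : H.Walk x y) :
    wpr κ p.reverse = wpr κ p := by
  rw [wpr, Walk.darts_reverse, List.map_reverse, List.prod_reverse, List.map_map, wpr]
  congr 1
  apply List.map_congr_left
  intro dd _
  simp only [Function.comp_apply, Dart.symm, Prod.fst_swap, Prod.snd_swap]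
  exact hκ _ _

lemma wpr_pm {κ : V → V → ℝ} (hκ : ∀ i j, κ i j = 1 ∨ κ i j = -1)
    {H : SimpleGraph V} {x y : V} (p : H.Walk x y) :
    wpr κ p = 1 ∨ wpr κ p = -1 := by
  induction p with
  | nil => left; simp
  | @cons a b' c' hab p ih =>
    rw [wpr_cons]
    rcases hκ a b' with h1 | h1 <;> rcases ih with h2 | h2 <;>
      simp [h1, h2]

/-- After deleting an edge whose endpoints remain reachable, reachability is preserved. -/
lemma reachable_deleteEdges {H : SimpleGraph V} {x y : V}
    (hxy : (H.deleteEdges {s(x, y)}).Reachable x y) {a b : V} (w : H.Walk a b) :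
    (H.deleteEdges {s(x, y)}).Reachable a b := by
  induction w with
  | nil => exact Reachable.refl _
  | @cons a₁ a₂ a₃ hadj p IH =>
    refine Reachable.trans ?_ IH
    by_cases heq : s(a₁, a₂) = s(x, y)
    · rcases Sym2.eq_iff.mp heq with ⟨rfl, rfl⟩ | ⟨rfl, rfl⟩
      · exact hxy
      · exact hxy.symm
    · exact Adj.reachable (by simp [SimpleGraph.deleteEdges_adj, hadj, heq])

/-- Every finite connected graph contains a spanning tree. -/
lemma exists_spanning_tree [Fintype V] :
    ∀ (n : ℕ) (H : SimpleGraph V), H.edgeSet.ncard ≤ n → H.Connected →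
      ∃ H' : SimpleGraph V, H' ≤ H ∧ H'.IsTree := by
  intro n
  induction n with
  | zero =>
    intro H hn hconn
    refine ⟨H, le_rfl, hconn, ?_⟩
    intro u c hc
    cases c with
    | nil => exact hc.ne_nil rfl
    | @cons _ b _ hadj p =>
      have he : s(u, b) ∈ H.edgeSet := hadj
      have hne : H.edgeSet.ncard ≠ 0 :=
        Set.ncard_ne_zero_of_mem he H.edgeSet.toFinite
      omega
  | succ n IH =>
    intro H hn hconn
    by_cases hA : H.IsAcyclic
    · exact ⟨H, le_rfl, hconn, hA⟩
    · simp only [SimpleGraph.IsAcyclic, not_forall, not_not] at hA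
      obtain ⟨u, c, hc⟩ := hA
      cases c with
      | nil => exact absurd rfl hc.ne_nil
      | @cons _ b _ hadj p =>
        have hcyc := (Walk.cons_isCycle_iff p hadj).mp hc
        have he : s(u, b) ∈ H.edgeSet := hadj
        have hp' : ∀ e' ∈ p.edges, e' ∉ ({s(u, b)} : Set (Sym2 V)) := by
          intro e' he' hmem
          rw [Set.mem_singleton_iff] at hmem
          exact hcyc.2 (hmem ▸ he')
        have hreach : (H.deleteEdges {s(u, b)}).Reachable u b :=
          ((p.toDeleteEdges {s(u, b)} hp').reverse).reachable
        haveI : Nonempty V := hconn.nonempty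
        have hconn₂ : (H.deleteEdges {s(u, b)}).Connected := by
          refine SimpleGraph.Connected.mk ?_
          intro a b'
          obtain ⟨w⟩ := hconn.preconnected a b'
          exact reachable_deleteEdges hreach w
        have hcard : (H.deleteEdges {s(u, b)}).edgeSet.ncard ≤ n := by
          have h1 : (H.deleteEdges {s(u, b)}).edgeSet = H.edgeSet \ {s(u, b)} :=
            SimpleGraph.edgeSet_deleteEdges {s(u, b)}
          have h2 : (H.edgeSet \ {s(u, b)}).ncard + 1 = H.edgeSet.ncard :=
            Set.ncard_diff_singleton_add_one he H.edgeSet.toFinite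
          rw [h1]; omega
        obtain ⟨H', hle, hT⟩ := IH (H.deleteEdges {s(u, b)}) hcard hconn₂
        exact ⟨H', hle.trans (SimpleGraph.deleteEdges_le {s(u, b)}), hT⟩

lemma isTree_of_connected_of_ncard [Fintype V] (H : SimpleGraph V)
    (hconn : H.Connected) (hcard : H.edgeSet.ncard + 1 = Fintype.card V) : H.IsTree := by
  classical
  obtain ⟨H', hle, hT⟩ := exists_spanning_tree H.edgeSet.ncard H le_rfl hconn
  haveI : Fintype H'.edgeSet := H'.edgeSet.toFinite.fintype
  have hcard' : H'.edgeFinset.card + 1 = Fintype.card V := hT.card_edgeFinset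
  have hnc : H'.edgeSet.ncard = H'.edgeFinset.card := by
    rw [Set.ncard_eq_toFinset_card']; rfl
  have hsub : H'.edgeSet ⊆ H.edgeSet := SimpleGraph.edgeSet_mono hle
  have heq : H'.edgeSet = H.edgeSet := by
    apply Set.eq_of_subset_of_ncard_le hsub _ H.edgeSet.toFinite
    omega
  rwa [SimpleGraph.edgeSet_inj.mp heq] at hT

/-- The sign weight attached to a matrix. -/
noncomputable def kappa (A : Matrix V V ℝ) : V → V → ℝ :=
  fun i j => if A i j < 0 then (1 : ℝ) else -1

lemma kappa_pm (A : Matrix V V ℝ) : ∀ i j, kappa A i j = 1 ∨ kappa A i j = -1 := by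
  intro i j; unfold kappa; split_ifs <;> simp

lemma kappa_symm {A : Matrix V V ℝ} (hsymm : A.IsSymm) (i j : V) :
    kappa A i j = kappa A j i := by
  unfold kappa
  rw [show A j i = A i j from (Matrix.transpose_apply A i j).symm.trans
    (congrFun (congrFun hsymm i) j)]

lemma kappa_sq (A : Matrix V V ℝ) (i j : V) : kappa A i j * kappa A i j = 1 := by
  rcases kappa_pm A i j with h | h <;> rw [h] <;> norm_num

lemma kappa_mul_neg {A : Matrix V V ℝ} {i j : V} (h0 : A i j ≠ 0) :
    kappa A i j * A i j < 0 := by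
  unfold kappa
  split_ifs with hlt
  · simpa using hlt
  · have : 0 < A i j := lt_of_le_of_ne (not_lt.mp hlt) (Ne.symm h0)
    nlinarith

lemma sign_prod_list : ∀ (l : List ℝ), (∀ x ∈ l, x ≠ 0) →
    (l.map fun x => if x < 0 then (1 : ℝ) else -1).prod * l.prod
      = (-1) ^ l.length * |l.prod| := by
  intro l
  induction l with
  | nil => simp
  | cons a l IH =>
    intro h
    have ha : a ≠ 0 := h a List.mem_cons_self
    have hl : ∀ x ∈ l, x ≠ 0 := fun x hx => h x (List.mem_cons_of_mem a hx)
    have hfa : (if a < 0 then (1 : ℝ) else -1) * a = -|a| := by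
      split_ifs with hlt
      · rw [one_mul, abs_of_neg hlt]; ring
      · rw [abs_of_nonneg (not_lt.mp hlt)]; ring
    simp only [List.map_cons, List.prod_cons, List.length_cons, pow_succ, abs_mul]
    calc (if a < 0 then (1 : ℝ) else -1) * (l.map fun x => if x < 0 then (1 : ℝ) else -1).prod
            * (a * l.prod)
        = ((if a < 0 then (1 : ℝ) else -1) * a)
            * ((l.map fun x => if x < 0 then (1 : ℝ) else -1).prod * l.prod) := by ring
      _ = (-|a|) * ((-1) ^ l.length * |l.prod|) := by rw [hfa, IH hl]
      _ = (-1) ^ l.length * -1 * (|a| * |l.prod|) := by ring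

lemma sign_prod_one (l : List ℝ) (h0 : ∀ x ∈ l, x ≠ 0) (hodd : Odd l.length)
    (hneg : l.prod < 0) :
    (l.map fun x => if x < 0 then (1 : ℝ) else -1).prod = 1 := by
  have h2 : (l.map fun x => if x < 0 then (1 : ℝ) else -1).prod * l.prod = 1 * l.prod := by
    rw [sign_prod_list l h0, hodd.neg_one_pow, abs_of_neg hneg]; ring
  exact mul_right_cancel₀ (ne_of_lt hneg) h2

/-- Main lemma: the negative-product case. -/
lemma main {V : Type*} [Fintype V] [DecidableEq V]
    (G : SimpleGraph V) (hG : G.Connected)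
    (hcount : G.edgeSet.ncard = Fintype.card V)
    {v : V} (c : G.Walk v v) (hc : c.IsCycle) (hodd : Odd c.length)
    (A : Matrix V V ℝ) (hsymm : A.IsSymm)
    (hsupp : ∀ i j : V, i ≠ j → (A i j ≠ 0 ↔ G.Adj i j))
    (hneg : (c.darts.map (fun d => A d.toProd.1 d.toProd.2)).prod < 0) :
    ∃ d : V → ℝ, (∀ i, d i = 1 ∨ d i = -1) ∧
      IsDSO G (Matrix.diagonal d * A * Matrix.diagonal d) := by
  classical
  cases c with
  | nil => exact absurd rfl hc.ne_nil
  | @cons _ b _ h P =>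
    set κ := kappa A with hκdef
    have hAs : ∀ i j, A j i = A i j := fun i j =>
      (Matrix.transpose_apply A i j).symm.trans (congrFun (congrFun hsymm i) j)
    have hcyc := (Walk.cons_isCycle_iff P h).mp hc
    set T := G.deleteEdges {s(v, b)} with hTdef
    have hPe : ∀ e' ∈ P.edges, e' ∉ ({s(v, b)} : Set (Sym2 V)) := by
      intro e' he' hmem
      rw [Set.mem_singleton_iff] at hmem
      exact hcyc.2 (hmem ▸ he')
    set P' : T.Walk b v := P.toDeleteEdges {s(v, b)} hPe with hP'def
    haveI : Nonempty V := hG.nonempty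
    have hTconn : T.Connected := by
      refine SimpleGraph.Connected.mk ?_
      intro a b'
      obtain ⟨w⟩ := hG.preconnected a b'
      exact reachable_deleteEdges (P'.reverse).reachable w
    have hTcard : T.edgeSet.ncard + 1 = Fintype.card V := by
      have he : s(v, b) ∈ G.edgeSet := h
      have h1 : T.edgeSet = G.edgeSet \ {s(v, b)} :=
        SimpleGraph.edgeSet_deleteEdges {s(v, b)}
      have h2 : (G.edgeSet \ {s(v, b)}).ncard + 1 = G.edgeSet.ncard :=
        Set.ncard_diff_singleton_add_one he G.edgeSet.toFinite
      rw [h1, h2, hcount]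
    have hTtree : T.IsTree := isTree_of_connected_of_ncard T hTconn hTcard
    -- unique paths from v
    have spec := fun i => hTtree.existsUnique_path v i
    set pth : ∀ i : V, T.Walk v i := fun i => (spec i).choose with hpthdef
    have hpath : ∀ i, (pth i).IsPath := fun i => (spec i).choose_spec.1
    have huniq : ∀ i (q : T.Walk v i), q.IsPath → q = pth i :=
      fun i q hq => (spec i).choose_spec.2 q hq
    set d : V → ℝ := fun i => wpr κ (pth i) with hddef
    have hκpm : ∀ i j, κ i j = 1 ∨ κ i j = -1 := kappa_pm A
    have hdpm : ∀ i, d i = 1 ∨ d i = -1 := fun i => wpr_pm hκpm _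
    have hdsq : ∀ i, d i * d i = 1 := by
      intro i; rcases hdpm i with h1 | h1 <;> rw [h1] <;> norm_num
    have hκsymm : ∀ i j, κ i j = κ j i := kappa_symm hsymm
    -- value at the root
    have hpthv : pth v = Walk.nil := (huniq v Walk.nil Walk.IsPath.nil).symm
    have hdv : d v = 1 := by simp only [hddef, hpthv, wpr_nil]
    -- tree edges
    have hedge : ∀ i j, T.Adj i j → d i * d j = κ i j := by
      intro i j hij
      by_cases hj : j ∈ (pth i).support
      · -- j lies on the path to i
        have hdrop : ((pth i).dropUntil j hj).IsPath := (hpath i).dropUntil hj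
        have hsingle : (Walk.cons hij.symm Walk.nil : T.Walk j i).IsPath := by
          apply Walk.IsPath.mk'
          simp [hij.ne']
        have hdq : (pth i).dropUntil j hj = Walk.cons hij.symm Walk.nil := by
          have := hTtree.IsAcyclic.path_unique
            ⟨(pth i).dropUntil j hj, hdrop⟩ ⟨Walk.cons hij.symm Walk.nil, hsingle⟩
          exact Subtype.ext_iff.mp this
        have htake : pth j = (pth i).takeUntil j hj :=
          (huniq j _ ((hpath i).takeUntil hj)).symm
        have hsplit : wpr κ (pth i) = wpr κ ((pth i).takeUntil j hj)
            * wpr κ ((pth i).dropUntil j hj) := by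
          conv_lhs => rw [← Walk.take_spec (pth i) hj]
          rw [wpr_append]
        have hdi : d i = d j * κ j i := by
          simp only [hddef]
          rw [hsplit, hdq, ← htake]
          simp
        rw [hdi, hκsymm j i]
        calc d j * κ i j * d j = κ i j * (d j * d j) := by ring
          _ = κ i j := by rw [hdsq j, mul_one]
      · -- extend the path to i by the edge ij
        have hq : ((pth i).concat hij).IsPath := by
          apply Walk.IsPath.mk'
          rw [Walk.support_concat]
          simp only [List.concat_eq_append, List.nodup_append]
          refine ⟨(hpath i).support_nodup, List.nodup_singleton j, ?_⟩
          intro a ha b hb hab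
          rw [List.mem_singleton] at hb
          subst hb
          subst hab
          exact hj ha
        have hdj : d j = d i * κ i j := by
          simp only [hddef]
          rw [← huniq j _ hq, wpr_concat]
        rw [hdj]
        calc d i * (d i * κ i j) = κ i j * (d i * d i) := by ring
          _ = κ i j := by rw [hdsq i, mul_one]
    -- the product along the cycle is 1
    have hWc : wpr κ (Walk.cons h P) = 1 := by
      have hmapeq : wpr κ (Walk.cons h P)
          = (((Walk.cons h P).darts.map fun dd => A dd.toProd.1 dd.toProd.2).map
              fun x => if x < 0 then (1 : ℝ) else -1).prod := by
        rw [List.map_map]; rfl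
      rw [hmapeq]
      apply sign_prod_one
      · intro x hx
        obtain ⟨dd, _, rfl⟩ := List.mem_map.mp hx
        exact (hsupp _ _ dd.adj.ne).mpr dd.adj
      · rw [List.length_map, Walk.length_darts]
        exact hodd
      · exact hneg
    have hWP : wpr κ P = κ v b := by
      rw [wpr_cons] at hWc
      have h3 := congrArg (fun t => κ v b * t) hWc
      rw [← mul_assoc, hκdef, kappa_sq, one_mul, mul_one] at h3
      exact h3
    -- d at b
    have hP'path : P'.IsPath := hcyc.1.transfer _
    have hpthb : pth b = P'.reverse := (huniq b P'.reverse hP'path.reverse).symm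
    have hdb : d b = κ v b := by
      simp only [hddef]
      rw [hpthb, wpr_reverse κ hκsymm, hP'def, wpr_transfer, hWP]
    -- all edges
    have hall : ∀ i j, G.Adj i j → d i * d j = κ i j := by
      intro i j hij
      by_cases hmem : s(i, j) ∈ ({s(v, b)} : Set (Sym2 V))
      · rw [Set.mem_singleton_iff] at hmem
        rcases Sym2.eq_iff.mp hmem with ⟨rfl, rfl⟩ | ⟨rfl, rfl⟩
        · rw [hdv, hdb, one_mul]
        · rw [hdb, hdv, mul_one]
          exact hκsymm _ _
      · exact hedge i j (by rw [hTdef]; exact SimpleGraph.deleteEdges_adj.mpr ⟨hij, hmem⟩)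
    -- assemble
    refine ⟨d, hdpm, ?_, ?_⟩
    · -- symmetry
      unfold Matrix.IsSymm
      ext i j
      simp only [Matrix.transpose_apply, Matrix.mul_diagonal, Matrix.diagonal_mul]
      rw [hAs i j]
      ring
    · intro i j hij
      constructor
      · intro hadj
        simp only [Matrix.mul_diagonal, Matrix.diagonal_mul]
        have h0 : A i j ≠ 0 := (hsupp i j hij).mpr hadj
        have hκA : κ i j * A i j < 0 := kappa_mul_neg h0
        have heq2 : d i * A i j * d j = κ i j * A i j := by
          rw [← hall i j hadj]; ring
        rw [heq2]
        exact hκA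
      · intro hnadj
        simp only [Matrix.mul_diagonal, Matrix.diagonal_mul]
        have h0 : A i j = 0 := by
          by_contra hne
          exact hnadj ((hsupp i j hij).mp hne)
        rw [h0]; ring

end UnicyclicAux

/-- Let `G` be a connected unicyclic graph (number of edges equals number of
vertices) whose unique cycle `c` has odd length, and `A ∈ S(G)`.  Let `p` be the product of the
entries of `A` along the edges of the cycle.  If `p < 0` then `A` is signature similar to a
discrete Schrödinger operator of `G`; if `p > 0` then `−A` is. -/
theorem unicyclic_odd_signature_similarity
    {V : Type*} [Fintype V] [DecidableEq V]
    (G : SimpleGraph V) (hG : G.Connected)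
    (hcount : G.edgeSet.ncard = Fintype.card V)
    {v : V} (c : G.Walk v v) (hc : c.IsCycle) (hodd : Odd c.length)
    (A : Matrix V V ℝ) (hsymm : A.IsSymm)
    (hsupp : ∀ i j : V, i ≠ j → (A i j ≠ 0 ↔ G.Adj i j)) :
    ((c.darts.map (fun d => A d.toProd.1 d.toProd.2)).prod < 0 →
      ∃ d : V → ℝ, (∀ i, d i = 1 ∨ d i = -1) ∧
        IsDSO G (Matrix.diagonal d * A * Matrix.diagonal d)) ∧
    (0 < (c.darts.map (fun d => A d.toProd.1 d.toProd.2)).prod →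
      ∃ d : V → ℝ, (∀ i, d i = 1 ∨ d i = -1) ∧
        IsDSO G (Matrix.diagonal d * (-A) * Matrix.diagonal d)) := by
  constructor
  · exact fun hneg => UnicyclicAux.main G hG hcount c hc hodd A hsymm hsupp hneg
  · intro hpos
    apply UnicyclicAux.main G hG hcount c hc hodd (-A)
    · unfold Matrix.IsSymm
      rw [Matrix.transpose_neg, hsymm]
    · intro i j hij
      simp only [Matrix.neg_apply, neg_ne_zero]
      exact hsupp i j hij
    · have hmap : (c.darts.map fun d => (-A) d.toProd.1 d.toProd.2)
          = (c.darts.map fun d => A d.toProd.1 d.toProd.2).map Neg.neg := by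
        rw [List.map_map]; rfl
      rw [hmap, List.prod_map_neg]
      have hlen : ((c.darts.map fun d => A d.toProd.1 d.toProd.2)).length = c.length := by
        rw [List.length_map, SimpleGraph.Walk.length_darts]
      rw [hlen, hodd.neg_one_pow]
      nlinarith
end

section
/- Let G be a connected unicyclic graph whose cycle has odd length. If a multiset Λ of real numbers is the spectrum of some matrix in S(G) whose largest eigenvalue has multiplicity at least 2, then Λ is the spectrum of some discrete Schrödinger operator of G. -/
/-- The multiplicity of `μ` as an eigenvalue of `A`. -/
noncomputable def eigMult {V : Type*} [Fintype V] [DecidableEq V]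
    (A : Matrix V V ℝ) (μ : ℝ) : ℕ :=
  Module.finrank ℝ ↥(Module.End.eigenspace (Matrix.toLin' A) μ)

section Aux

open SimpleGraph Matrix Polynomial

variable {V : Type*}

/-! ### Signs -/

/-- The sign of a real number, valued in `{1, -1}` (sending `0` to `1`). -/
noncomputable def rsgn (t : ℝ) : ℝ := if t < 0 then -1 else 1

lemma rsgn_pm (t : ℝ) : rsgn t = 1 ∨ rsgn t = -1 := by
  unfold rsgn; split <;> simp

lemma rsgn_mul_pos {t : ℝ} (ht : t ≠ 0) : 0 < rsgn t * t := by
  unfold rsgn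
  rcases lt_or_gt_of_ne ht with h | h
  · rw [if_pos h]; nlinarith
  · rw [if_neg (by linarith)]; nlinarith

/-- The sign of an entry of a matrix, as a function on unordered pairs. -/
noncomputable def esgn (B : Matrix V V ℝ) : Sym2 V → ℝ :=
  Sym2.lift ⟨fun i j => rsgn (B i j + B j i), fun i j => by simp only []; rw [add_comm]⟩

lemma esgn_pm (B : Matrix V V ℝ) (e : Sym2 V) : esgn B e = 1 ∨ esgn B e = -1 := by
  induction e using Sym2.ind with
  | _ i j => exact rsgn_pm _

lemma esgn_eq (B : Matrix V V ℝ) (hB : B.IsSymm) (i j : V) :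
    esgn B s(i, j) = rsgn (B i j) := by
  have h : B j i = B i j := hB.apply i j
  show rsgn (B i j + B j i) = rsgn (B i j)
  rw [h]
  unfold rsgn
  by_cases hlt : B i j < 0
  · rw [if_pos (by linarith), if_pos hlt]
  · rw [if_neg (by push_neg at hlt ⊢; linarith), if_neg hlt]

lemma prod_pm {l : List ℝ} (h : ∀ x ∈ l, x = 1 ∨ x = -1) : l.prod = 1 ∨ l.prod = -1 := by
  induction l with
  | nil => left; simp
  | cons a l ih =>
    rcases h a (by simp) with ha | ha <;>
      rcases ih (fun x hx => h x (by simp [hx])) with hl | hl <;> simp [ha, hl]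

lemma pm_sq {a : ℝ} (h : a = 1 ∨ a = -1) : a * a = 1 := by
  rcases h with h | h <;> simp [h]

/-! ### Graph lemmas -/


lemma reachable_delete {G : SimpleGraph V} {a b : V}
    (hrea : (G \ fromEdgeSet {s(a, b)}).Reachable a b) {x y : V} (w : G.Walk x y) :
    (G \ fromEdgeSet {s(a, b)}).Reachable x y := by
  induction w with
  | nil => exact Reachable.refl _
  | @cons u u' y h p ih =>
    refine Reachable.trans ?_ ih
    by_cases he : s(u, u') = s(a, b)
    · rw [Sym2.eq_iff] at he
      rcases he with ⟨rfl, rfl⟩ | ⟨rfl, rfl⟩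
      · exact hrea
      · exact hrea.symm
    · exact Adj.reachable (by rw [sdiff_adj, fromEdgeSet_adj]; exact ⟨h, by simp [he]⟩)

lemma connected_delete {G : SimpleGraph V} (hG : G.Connected) {a b : V}
    (hrea : (G \ fromEdgeSet {s(a, b)}).Reachable a b) :
    (G \ fromEdgeSet {s(a, b)}).Connected := by
  haveI : Nonempty V := hG.nonempty
  refine Connected.mk fun x y => ?_
  exact (hG.preconnected x y).elim fun w => reachable_delete hrea w

lemma edgeSet_delete {G : SimpleGraph V} {e : Sym2 V} (he : e ∈ G.edgeSet) :
    (G \ fromEdgeSet {e}).edgeSet = G.edgeSet \ {e} := by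
  simp only [edgeSet_sdiff, edgeSet_fromEdgeSet, edgeSet_sdiff_sdiff_isDiag]

lemma cycle_exists_edge {G : SimpleGraph V} {u : V} {cyc : G.Walk u u} (hc : cyc.IsCycle) :
    ∃ (a b : V), s(a, b) ∈ cyc.edges := by
  cases cyc with
  | nil => exact absurd rfl hc.ne_nil
  | @cons _ x _ h p => exact ⟨u, x, by simp⟩

lemma card_le_ncard_edgeSet_add_one [Fintype V] :
    ∀ (n : ℕ) (G : SimpleGraph V), G.Connected → G.edgeSet.ncard = n →
      Fintype.card V ≤ n + 1 := by
  intro n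
  induction n using Nat.strong_induction_on with
  | _ n ih =>
    intro G hG hn
    by_cases hac : G.IsAcyclic
    · have hT : G.IsTree := ⟨hG, hac⟩
      haveI : Fintype G.edgeSet := (Set.toFinite _).fintype
      have h1 := hT.card_edgeFinset
      have h2 : G.edgeSet.ncard = G.edgeFinset.card := by
        rw [← Set.ncard_coe_finset, coe_edgeFinset]
      omega
    · simp only [SimpleGraph.IsAcyclic] at hac
      push_neg at hac
      obtain ⟨u, cyc, hcyc⟩ := hac
      obtain ⟨a, b, he⟩ := cycle_exists_edge hcyc
      have hee : s(a, b) ∈ G.edgeSet := cyc.edges_subset_edgeSet he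
      obtain ⟨-, hrea⟩ := (adj_and_reachable_delete_edges_iff_exists_cycle).mpr ⟨u, cyc, hcyc, he⟩
      have hconn := connected_delete hG hrea
      have hne : 0 < G.edgeSet.ncard := (Set.ncard_pos (Set.toFinite _)).mpr ⟨_, hee⟩
      have hcard : (G \ fromEdgeSet {s(a, b)}).edgeSet.ncard = n - 1 := by
        rw [edgeSet_delete hee, Set.ncard_diff_singleton_of_mem hee, hn]
      have := ih (n - 1) (by omega) _ hconn hcard
      omega

lemma isTree_of_connected_of_ncard [Fintype V] (G : SimpleGraph V) (hG : G.Connected)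
    (hn : G.edgeSet.ncard + 1 = Fintype.card V) : G.IsTree := by
  refine ⟨hG, ?_⟩
  by_contra hac
  simp only [SimpleGraph.IsAcyclic] at hac
  push_neg at hac
  obtain ⟨u, cyc, hcyc⟩ := hac
  obtain ⟨a, b, he⟩ := cycle_exists_edge hcyc
  have hee : s(a, b) ∈ G.edgeSet := cyc.edges_subset_edgeSet he
  obtain ⟨-, hrea⟩ := (adj_and_reachable_delete_edges_iff_exists_cycle).mpr ⟨u, cyc, hcyc, he⟩
  have hconn := connected_delete hG hrea
  have hne : 0 < G.edgeSet.ncard := (Set.ncard_pos (Set.toFinite _)).mpr ⟨_, hee⟩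
  have hcard : (G \ fromEdgeSet {s(a, b)}).edgeSet.ncard = G.edgeSet.ncard - 1 := by
    rw [edgeSet_delete hee, Set.ncard_diff_singleton_of_mem hee]
  have := card_le_ncard_edgeSet_add_one _ _ hconn hcard
  omega





lemma tree_switch [DecidableEq V] {T : SimpleGraph V} (hT : T.IsTree) (σ : Sym2 V → ℝ)
    (hσ : ∀ e, σ e = 1 ∨ σ e = -1) :
    ∃ s : V → ℝ, (∀ i, s i = 1 ∨ s i = -1) ∧
      ∀ (x y : V) (p : T.Walk x y), (p.edges.map σ).prod = s x * s y := by
  obtain ⟨r⟩ := hT.isConnected.nonempty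
  choose pth hpth huniq using fun u => hT.existsUnique_path r u
  set s : V → ℝ := fun u => ((pth u).edges.map σ).prod with hs_def
  have hs : ∀ u, s u = 1 ∨ s u = -1 := by
    intro u
    refine prod_pm fun x hx => ?_
    obtain ⟨e, -, rfl⟩ := List.mem_map.mp hx
    exact hσ e
  have hadj : ∀ x y : V, T.Adj x y → σ s(x, y) = s x * s y := by
    intro x y h
    by_cases hy : y ∈ (pth x).support
    · -- pth x = (pth y).append (single edge y x)
      have htake : (pth x).takeUntil y hy = pth y :=
        huniq y _ ((hpth x).takeUntil hy)
      have hdrop : (pth x).dropUntil y hy = Walk.cons h.symm Walk.nil := by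
        have h1 : ((pth x).dropUntil y hy).IsPath := (hpth x).dropUntil hy
        have h2 : (Walk.cons h.symm Walk.nil : T.Walk y x).IsPath := by
          simp [Walk.cons_isPath_iff, h.ne']
        have := hT.IsAcyclic.path_unique ⟨_, h1⟩ ⟨_, h2⟩
        exact Subtype.ext_iff.mp this
      have hsx : s x = s y * σ s(y, x) := by
        show ((pth x).edges.map σ).prod = ((pth y).edges.map σ).prod * σ s(y, x)
        conv_lhs => rw [← (pth x).take_spec hy]
        rw [Walk.edges_append, List.map_append, List.prod_append, htake, hdrop]
        simp
      rw [hsx, Sym2.eq_swap]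
      rcases hσ s(y, x) with h' | h' <;> rcases hs y with h'' | h'' <;>
        rw [h', h''] <;> ring
    · -- pth y = (pth x).concat h
      have hq : ((pth x).concat h).IsPath := by
        rw [← Walk.isPath_reverse_iff, Walk.reverse_concat]
        rw [Walk.cons_isPath_iff]
        refine ⟨(hpth x).reverse, ?_⟩
        rwa [Walk.support_reverse, List.mem_reverse]
      have hconc : (pth x).concat h = pth y := huniq y _ hq
      have hsy : s y = s x * σ s(x, y) := by
        show ((pth y).edges.map σ).prod = ((pth x).edges.map σ).prod * σ s(x, y)
        rw [← hconc, Walk.concat_eq_append, Walk.edges_append, List.map_append,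
          List.prod_append]
        simp
      rw [hsy]
      rcases hσ s(x, y) with h' | h' <;> rcases hs x with h'' | h'' <;>
        rw [h', h''] <;> ring
  refine ⟨s, hs, ?_⟩
  intro x y p
  induction p with
  | nil => simp [pm_sq (hs _)]
  | @cons u u' y h p ih =>
    rw [Walk.edges_cons, List.map_cons, List.prod_cons, ih, hadj u u' h]
    calc s u * s u' * (s u' * s y) = s u * (s u' * s u') * s y := by ring
      _ = s u * s y := by rw [pm_sq (hs u')]; ring


/-! ### Linear algebra lemmas -/

variable [Fintype V] [DecidableEq V]


lemma charpoly_conj_invol (D B : Matrix V V ℝ) (hDD : D * D = 1) :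
    (D * B * D).charpoly = B.charpoly := by
  unfold Matrix.charpoly
  have hmap : (D.map C) * (D.map C) = 1 := by
    rw [← Matrix.map_mul, hDD]
    simp
  have key : charmatrix (D * B * D) = (D.map C) * charmatrix B * (D.map C) := by
    unfold charmatrix
    rw [Matrix.mul_sub, Matrix.sub_mul]
    congr 1
    · rw [← Matrix.scalar_commute X (fun r => Commute.all X r) (D.map C), Matrix.mul_assoc,
        hmap, Matrix.mul_one]
    · simp [Matrix.map_mul, Matrix.mul_assoc]
  rw [key, Matrix.det_mul, Matrix.det_mul]
  have h2 : (D.map C).det * (D.map C).det = 1 := by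
    rw [← Matrix.det_mul, hmap, Matrix.det_one]
  calc (D.map C).det * (charmatrix B).det * (D.map C).det
      = ((D.map C).det * (D.map C).det) * (charmatrix B).det := by ring
    _ = (charmatrix B).det := by rw [h2, one_mul]

lemma eigenspace_conj_invol (D B : Matrix V V ℝ) (hDD : D * D = 1) (μ : ℝ)
    (x : V → ℝ) :
    x ∈ Module.End.eigenspace (Matrix.toLin' (D * B * D)) μ ↔
      (D *ᵥ x) ∈ Module.End.eigenspace (Matrix.toLin' B) μ := by
  simp only [Module.End.mem_eigenspace_iff, Matrix.toLin'_apply]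
  constructor
  · intro h
    calc B *ᵥ (D *ᵥ x) = (B * D) *ᵥ x := by rw [Matrix.mulVec_mulVec]
      _ = (D * (D * B * D)) *ᵥ x := by
          simp only [← Matrix.mul_assoc, hDD, Matrix.one_mul]
      _ = D *ᵥ ((D * B * D) *ᵥ x) := by rw [Matrix.mulVec_mulVec]
      _ = D *ᵥ (μ • x) := by rw [h]
      _ = μ • (D *ᵥ x) := Matrix.mulVec_smul D μ x
  · intro h
    calc (D * B * D) *ᵥ x = D *ᵥ (B *ᵥ (D *ᵥ x)) := by
          rw [Matrix.mulVec_mulVec, Matrix.mulVec_mulVec]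
      _ = D *ᵥ (μ • (D *ᵥ x)) := by rw [h]
      _ = μ • (D *ᵥ (D *ᵥ x)) := Matrix.mulVec_smul D μ _
      _ = μ • ((D * D) *ᵥ x) := by rw [Matrix.mulVec_mulVec]
      _ = μ • x := by rw [hDD, Matrix.one_mulVec]

noncomputable def involEquiv (D : Matrix V V ℝ) (hDD : D * D = 1) : (V → ℝ) ≃ₗ[ℝ] (V → ℝ) :=
  LinearEquiv.ofLinear (Matrix.toLin' D) (Matrix.toLin' D)
    (by rw [← Matrix.toLin'_mul, hDD, Matrix.toLin'_one])
    (by rw [← Matrix.toLin'_mul, hDD, Matrix.toLin'_one])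

lemma eigenspace_conj_eq (D B : Matrix V V ℝ) (hDD : D * D = 1) (μ : ℝ) :
    Module.End.eigenspace (Matrix.toLin' (D * B * D)) μ =
      Submodule.map (involEquiv D hDD).symm.toLinearMap
        (Module.End.eigenspace (Matrix.toLin' B) μ) := by
  rw [← Submodule.comap_equiv_eq_map_symm]
  ext x
  rw [Submodule.mem_comap]
  have hx : (involEquiv D hDD).toLinearMap x = D *ᵥ x := by
    simp [involEquiv, Matrix.toLin'_apply]
  rw [LinearEquiv.coe_coe] at hx ⊢
  rw [hx]
  exact eigenspace_conj_invol D B hDD μ x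

lemma finrank_eig_conj_invol (D B : Matrix V V ℝ) (hDD : D * D = 1) (μ : ℝ) :
    Module.finrank ℝ ↥(Module.End.eigenspace (Matrix.toLin' (D * B * D)) μ) =
      Module.finrank ℝ ↥(Module.End.eigenspace (Matrix.toLin' B) μ) := by
  rw [eigenspace_conj_eq D B hDD μ]
  exact LinearEquiv.finrank_map_eq _ _

lemma hasEigenvalue_conj_invol (D B : Matrix V V ℝ) (hDD : D * D = 1) (μ : ℝ)
    (h : Module.End.HasEigenvalue (Matrix.toLin' (D * B * D)) μ) :
    Module.End.HasEigenvalue (Matrix.toLin' B) μ := by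
  rw [Module.End.hasEigenvalue_iff] at h ⊢
  rw [eigenspace_conj_eq D B hDD μ] at h
  intro hbot
  rw [hbot, Submodule.map_bot] at h
  exact h rfl



lemma perron_simple (G : SimpleGraph V) (hG : G.Connected) (M : Matrix V V ℝ)
    (hsymm : M.IsSymm)
    (hedge : ∀ i j : V, i ≠ j → (G.Adj i j → 0 < M i j) ∧ (¬ G.Adj i j → M i j = 0))
    (lam : ℝ)
    (hmax : ∀ μ : ℝ, Module.End.HasEigenvalue (Matrix.toLin' M) μ → μ ≤ lam) :
    Module.finrank ℝ ↥(Module.End.eigenspace (Matrix.toLin' M) lam) ≤ 1 := by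
  haveI : Nonempty V := hG.nonempty
  have hMnn : ∀ i j : V, i ≠ j → 0 ≤ M i j := by
    intro i j hij
    by_cases hadj : G.Adj i j
    · exact le_of_lt ((hedge i j hij).1 hadj)
    · exact le_of_eq ((hedge i j hij).2 hadj).symm
  set W := Module.End.eigenspace (Matrix.toLin' M) lam with hW
  have hmemW : ∀ x : V → ℝ, x ∈ W ↔ M *ᵥ x = lam • x := by
    intro x
    rw [hW, Module.End.mem_eigenspace_iff, Matrix.toLin'_apply]
  -- the matrix `T = lam•1 - M` is positive semidefinite
  set T : Matrix V V ℝ := lam • (1 : Matrix V V ℝ) - M with hT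
  have hTsymm : T.IsSymm := by
    rw [Matrix.IsSymm, hT, Matrix.transpose_sub, Matrix.transpose_smul, Matrix.transpose_one,
      hsymm]
  have hTh : T.IsHermitian := hTsymm
  have hTmul : ∀ z : V → ℝ, T *ᵥ z = lam • z - M *ᵥ z := by
    intro z
    rw [hT, Matrix.sub_mulVec, Matrix.smul_mulVec, Matrix.one_mulVec]
  have hTpsd : T.PosSemidef := by
    refine hTh.posSemidef_iff_eigenvalues_nonneg.mpr fun i => show 0 ≤ hTh.eigenvalues i from ?_
    set μ := hTh.eigenvalues i with hμ
    have hw := hTh.mulVec_eigenvectorBasis i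
    set w : V → ℝ := ⇑(hTh.eigenvectorBasis i) with hwdef
    have hwne : w ≠ 0 := by
      have := hTh.eigenvectorBasis.toBasis.ne_zero i
      intro h0
      apply this
      rw [hwdef] at h0
      ext j
      simpa using congrFun h0 j
    have h4 : lam • w - M *ᵥ w = μ • w := (hTmul w).symm.trans hw
    have hMw : M *ᵥ w = (lam - μ) • w := by
      rw [sub_smul, ← h4]
      abel
    have hev : Module.End.HasEigenvalue (Matrix.toLin' M) (lam - μ) := by
      apply Module.End.hasEigenvalue_of_hasEigenvector (x := w)
      refine ⟨?_, hwne⟩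
      rw [Module.End.mem_eigenspace_iff, Matrix.toLin'_apply, hMw]
    have := hmax _ hev
    linarith
  -- every eigenvector of `lam` has no zero entry
  have hstep : ∀ y : V → ℝ, (∀ i, 0 ≤ y i) → M *ᵥ y = lam • y →
      ∀ i, y i = 0 → ∀ j, G.Adj i j → y j = 0 := by
    intro y hynn hMy i hyi j hadj
    have hrow : ∑ l : V, M i l * y l = 0 := by
      have := congrFun hMy i
      simp only [Matrix.mulVec, dotProduct, Pi.smul_apply, smul_eq_mul] at this
      rw [this, hyi, mul_zero]
    have hterm : ∀ l ∈ Finset.univ, 0 ≤ M i l * y l := by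
      intro l _
      rcases eq_or_ne i l with rfl | hil
      · rw [hyi, mul_zero]
      · exact mul_nonneg (hMnn i l hil) (hynn l)
    have hz := (Finset.sum_eq_zero_iff_of_nonneg hterm).mp hrow j (Finset.mem_univ j)
    have hpos : 0 < M i j := (hedge i j hadj.ne).1 hadj
    rcases mul_eq_zero.mp hz with h | h
    · exact absurd h (ne_of_gt hpos)
    · exact h
  have hnowhere : ∀ x : V → ℝ, x ∈ W → x ≠ 0 → ∀ k, x k ≠ 0 := by
    intro x hx hxne k hk
    have hMx : M *ᵥ x = lam • x := (hmemW x).mp hx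
    set y : V → ℝ := fun i => |x i| with hy
    have hynn : ∀ i, 0 ≤ y i := fun i => abs_nonneg _
    have hyy : y ⬝ᵥ y = x ⬝ᵥ x := by
      simp only [dotProduct, hy]
      exact Finset.sum_congr rfl fun i _ => abs_mul_abs_self (x i)
    have hexp : ∀ z : V → ℝ, z ⬝ᵥ (M *ᵥ z) = ∑ i : V, ∑ j : V, z i * (M i j * z j) := by
      intro z
      simp only [dotProduct, Matrix.mulVec, Finset.mul_sum]
    have hxy : x ⬝ᵥ (M *ᵥ x) ≤ y ⬝ᵥ (M *ᵥ y) := by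
      rw [hexp, hexp]
      refine Finset.sum_le_sum fun i _ => Finset.sum_le_sum fun j _ => ?_
      rcases eq_or_ne i j with rfl | hij
      · have h1 : x i * (M i i * x i) = M i i * (x i * x i) := by ring
        have h2 : y i * (M i i * y i) = M i i * (y i * y i) := by ring
        rw [h1, h2, hy]
        simp only
        rw [abs_mul_abs_self]
      · have hM := hMnn i j hij
        have h1 : x i * (M i j * x j) = M i j * (x i * x j) := by ring
        have h2 : y i * (M i j * y j) = M i j * (|x i| * |x j|) := by rw [hy]; ring
        rw [h1, h2, ← abs_mul]
        exact mul_le_mul_of_nonneg_left (le_abs_self _) hM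
    have hxTx : x ⬝ᵥ (T *ᵥ x) = 0 := by
      rw [hTmul, hMx]
      simp
    have hdote : ∀ z : V → ℝ, z ⬝ᵥ (T *ᵥ z) = lam * (z ⬝ᵥ z) - z ⬝ᵥ (M *ᵥ z) := by
      intro z
      rw [hTmul z, dotProduct_sub, dotProduct_smul, smul_eq_mul]
    have hyTy_le : y ⬝ᵥ (T *ᵥ y) ≤ 0 := by
      rw [hdote y]
      have h5 := hxTx
      rw [hdote x] at h5
      have h7 : lam * (y ⬝ᵥ y) = lam * (x ⬝ᵥ x) := by rw [hyy]
      linarith [hxy, h5, h7]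
    have hyTy_ge : 0 ≤ y ⬝ᵥ (T *ᵥ y) := by
      have := hTpsd.dotProduct_mulVec_nonneg y
      rwa [star_trivial] at this
    have hyTy : y ⬝ᵥ (T *ᵥ y) = 0 := le_antisymm hyTy_le hyTy_ge
    have hTy : T *ᵥ y = 0 := by
      apply (hTpsd.dotProduct_mulVec_zero_iff y).mp
      rw [star_trivial]
      exact hyTy
    have hMy : M *ᵥ y = lam • y := by
      have h6 : lam • y - M *ᵥ y = 0 := by rw [← hTmul y, hTy]
      rw [sub_eq_zero] at h6
      exact h6.symm
    -- propagate the zero entry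
    have hk0 : y k = 0 := by rw [hy]; simp only; rw [abs_eq_zero]; exact hk
    have hall : ∀ a b : V, G.Walk a b → y a = 0 → y b = 0 := by
      intro a b w
      induction w with
      | nil => exact id
      | cons h p ih => exact fun ha => ih (hstep y hynn hMy _ ha _ h)
    have hzero : ∀ i, y i = 0 := by
      intro i
      obtain ⟨w⟩ := hG.preconnected k i
      exact hall k i w hk0
    apply hxne
    funext i
    have := hzero i
    rw [hy] at this
    simpa using abs_eq_zero.mp this
  -- conclude
  by_contra hlt
  push_neg at hlt
  have h2 : 2 ≤ Module.finrank ℝ W := hlt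
  obtain ⟨f, hf⟩ := exists_linearIndependent_of_le_finrank h2
  have hg : LinearIndependent ℝ (W.subtype ∘ f) := hf.map' W.subtype (Submodule.ker_subtype W)
  set g : Fin 2 → (V → ℝ) := W.subtype ∘ f with hgdef
  have hgmem : ∀ i, g i ∈ W := fun i => (f i).2
  obtain ⟨k⟩ := ‹Nonempty V›
  have h0ne : g 0 ≠ 0 := hg.ne_zero 0
  have h0k : g 0 k ≠ 0 := hnowhere (g 0) (hgmem 0) h0ne k
  set z : V → ℝ := g 1 k • g 0 - g 0 k • g 1 with hz
  have hzmem : z ∈ W := Submodule.sub_mem _ (Submodule.smul_mem _ _ (hgmem 0))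
    (Submodule.smul_mem _ _ (hgmem 1))
  have hzk : z k = 0 := by
    rw [hz]
    simp only [Pi.sub_apply, Pi.smul_apply, smul_eq_mul]
    ring
  have hz0 : z = 0 := by
    by_contra hz0
    exact (hnowhere z hzmem hz0 k) hzk
  have := Fintype.linearIndependent_iff.mp hg (fun i => ![g 1 k, -(g 0 k)] i) ?_ 1
  · simp at this
    exact h0k this
  · rw [Fin.sum_univ_two]
    simp only [Matrix.cons_val_zero, Matrix.cons_val_one, Matrix.head_cons]
    rw [← hz0, hz]
    module


end Aux

open SimpleGraph Matrix Polynomial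

/-- Let `G` be a connected unicyclic graph whose unique cycle has odd length.
If a spectrum is realized by some `B ∈ S(G)` whose largest eigenvalue has multiplicity at least
`2`, then the same spectrum is realized by a discrete Schrödinger operator of `G`. -/
theorem unicyclic_odd_spectrum_with_multiple_largest
    {V : Type*} [Fintype V] [DecidableEq V]
    (G : SimpleGraph V) (hG : G.Connected)
    (hcount : G.edgeSet.ncard = Fintype.card V)
    {v : V} (c : G.Walk v v) (hc : c.IsCycle) (hodd : Odd c.length)
    (B : Matrix V V ℝ) (hsymm : B.IsSymm)
    (hsupp : ∀ i j : V, i ≠ j → (B i j ≠ 0 ↔ G.Adj i j))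
    (lam : ℝ) (hlam : Module.End.HasEigenvalue (Matrix.toLin' B) lam)
    (hmax : ∀ μ : ℝ, Module.End.HasEigenvalue (Matrix.toLin' B) μ → μ ≤ lam)
    (hmult : 2 ≤ eigMult B lam) :
    ∃ A : Matrix V V ℝ, IsDSO G A ∧ A.charpoly = B.charpoly := by
  haveI : Nonempty V := hG.nonempty
  obtain ⟨x, h, p, rfl⟩ : ∃ (x : V) (h : G.Adj v x) (p : G.Walk x v), c = SimpleGraph.Walk.cons h p := by
    cases c with
    | nil => exact absurd rfl hc.ne_nil
    | cons h p => exact ⟨_, h, p, rfl⟩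
  -- the tree obtained by deleting the first cycle edge
  set e : Sym2 V := s(v, x) with he_def
  have he : e ∈ (SimpleGraph.Walk.cons h p).edges := by simp [he_def]
  have hee : e ∈ G.edgeSet := (SimpleGraph.Walk.cons h p).edges_subset_edgeSet he
  have hrea : (G \ fromEdgeSet {e}).Reachable v x :=
    ((adj_and_reachable_delete_edges_iff_exists_cycle).mpr ⟨v, _, hc, he⟩).2
  have hconn : (G \ fromEdgeSet {e}).Connected := connected_delete hG hrea
  have hcV : 1 ≤ Fintype.card V := Fintype.card_pos
  have hpos : 0 < G.edgeSet.ncard := (Set.ncard_pos (Set.toFinite _)).mpr ⟨_, hee⟩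
  have hcard : (G \ fromEdgeSet {e}).edgeSet.ncard = G.edgeSet.ncard - 1 := by
    rw [edgeSet_delete hee, Set.ncard_diff_singleton_of_mem hee]
  have hTtree : (G \ fromEdgeSet {e}).IsTree :=
    isTree_of_connected_of_ncard _ hconn (by omega)
  -- transfer the rest of the cycle into the tree
  have henp : e ∉ p.edges := by
    have hnodup : ((SimpleGraph.Walk.cons h p).edges).Nodup := hc.isCircuit.isTrail.edges_nodup
    rw [SimpleGraph.Walk.edges_cons, List.nodup_cons] at hnodup
    exact hnodup.1
  have hsubp : ∀ e' ∈ p.edges, e' ∈ (G \ fromEdgeSet {e}).edgeSet := by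
    intro e' he'
    rw [edgeSet_delete hee]
    exact ⟨p.edges_subset_edgeSet he', by
      simp only [Set.mem_singleton_iff]
      rintro rfl
      exact henp he'⟩
  set p' : (G \ fromEdgeSet {e}).Walk x v := p.transfer _ hsubp with hp'_def
  -- signs
  set Q : ℝ := (p.edges.map (esgn B)).prod with hQ_def
  set P : ℝ := esgn B e * Q with hP_def
  have hQpm : Q = 1 ∨ Q = -1 := by
    refine prod_pm fun t ht => ?_
    obtain ⟨e', -, rfl⟩ := List.mem_map.mp ht
    exact esgn_pm B e'
  have hPpm : P = 1 ∨ P = -1 := by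
    rw [hP_def]
    rcases esgn_pm B e with h1 | h1 <;> rcases hQpm with h2 | h2 <;> rw [h1, h2] <;> norm_num
  set σ : Sym2 V → ℝ := fun e' => P * esgn B e' with hσ_def
  have hσpm : ∀ e', σ e' = 1 ∨ σ e' = -1 := by
    intro e'
    rw [hσ_def]
    rcases esgn_pm B e' with h1 | h1 <;> rcases hPpm with h2 | h2 <;> simp [h1, h2]
  obtain ⟨s, hs, hwalk⟩ := tree_switch hTtree σ hσpm
  -- parity
  have heven : Even p.edges.length := by
    rw [SimpleGraph.Walk.length_edges]
    have := hodd
    rw [SimpleGraph.Walk.length_cons] at this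
    rcases this with ⟨m, hm⟩
    exact ⟨m, by omega⟩
  have hPpow : P ^ p.edges.length = 1 := by
    obtain ⟨m, hm⟩ := heven
    rw [hm, pow_add, ← mul_pow, pm_sq hPpm, one_pow]
  have hmapP : ∀ l : List (Sym2 V), (l.map σ).prod = P ^ l.length * (l.map (esgn B)).prod := by
    intro l
    induction l with
    | nil => simp
    | cons a l ih =>
      simp only [List.map_cons, List.prod_cons, ih, List.length_cons, pow_succ, hσ_def]
      rw [← hσ_def, ih]
      ring
  have hQs : s x * s v = Q := by
    have := hwalk x v p'
    rw [hp'_def, SimpleGraph.Walk.edges_transfer, hmapP, hPpow, one_mul] at this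
    exact this.symm
  -- signs on all edges of G
  have hPesgn : P * esgn B e = Q := by
    rw [hP_def]
    calc esgn B e * Q * esgn B e = Q * (esgn B e * esgn B e) := by ring
      _ = Q := by rw [pm_sq (esgn_pm B e), mul_one]
  have hedgesign : ∀ i j : V, G.Adj i j → s i * s j = P * esgn B s(i, j) := by
    intro i j hij
    by_cases hTadj : (G \ fromEdgeSet {e}).Adj i j
    · have := hwalk i j (SimpleGraph.Walk.cons hTadj SimpleGraph.Walk.nil)
      simp only [SimpleGraph.Walk.edges_cons, SimpleGraph.Walk.edges_nil, List.map_cons,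
        List.map_nil, List.prod_cons, List.prod_nil, mul_one] at this
      exact this.symm
    · have heq : s(i, j) = e := by
        rw [sdiff_adj, fromEdgeSet_adj] at hTadj
        push_neg at hTadj
        exact Set.mem_singleton_iff.mp (hTadj hij).1
      rw [heq, hPesgn]
      rw [he_def] at heq
      rw [Sym2.eq_iff] at heq
      rcases heq with ⟨rfl, rfl⟩ | ⟨rfl, rfl⟩
      · rw [← hQs]; ring
      · rw [← hQs]
  -- the conjugated matrix
  set D : Matrix V V ℝ := Matrix.diagonal s with hD_def
  have hDD : D * D = 1 := by
    rw [hD_def, Matrix.diagonal_mul_diagonal]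
    have hfun : (fun i => s i * s i) = fun _ => (1 : ℝ) := funext fun i => pm_sq (hs i)
    rw [hfun, Matrix.diagonal_one]
  set M : Matrix V V ℝ := D * B * D with hM_def
  have hMentry : ∀ i j : V, M i j = s i * B i j * s j := by
    intro i j
    rw [hM_def, hD_def]
    simp [Matrix.mul_diagonal, Matrix.diagonal_mul]
  have hMsymm : M.IsSymm := by
    rw [Matrix.IsSymm]
    ext i j
    rw [Matrix.transpose_apply, hMentry, hMentry, hsymm.apply i j]
    ring
  have hMadj : ∀ i j : V, G.Adj i j → M i j = P * (esgn B s(i, j) * B i j) := by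
    intro i j hij
    rw [hMentry]
    calc s i * B i j * s j = (s i * s j) * B i j := by ring
      _ = P * esgn B s(i, j) * B i j := by rw [hedgesign i j hij]
      _ = P * (esgn B s(i, j) * B i j) := by ring
  have hfacpos : ∀ i j : V, G.Adj i j → 0 < esgn B s(i, j) * B i j := by
    intro i j hij
    rw [esgn_eq B hsymm]
    exact rsgn_mul_pos ((hsupp i j hij.ne).mpr hij)
  have hMoff : ∀ i j : V, i ≠ j → ¬ G.Adj i j → M i j = 0 := by
    intro i j hij hnadj
    have hB : B i j = 0 := by
      by_contra hB
      exact hnadj ((hsupp i j hij).mp hB)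
    rw [hMentry, hB]
    ring
  rcases hPpm with hP1 | hP1
  · -- positive case: contradiction with multiplicity ≥ 2
    exfalso
    have hMedge : ∀ i j : V, i ≠ j → (G.Adj i j → 0 < M i j) ∧ (¬ G.Adj i j → M i j = 0) := by
      intro i j hij
      refine ⟨fun hadj => ?_, hMoff i j hij⟩
      rw [hMadj i j hadj, hP1, one_mul]
      exact hfacpos i j hadj
    have hmaxM : ∀ μ : ℝ, Module.End.HasEigenvalue (Matrix.toLin' M) μ → μ ≤ lam := by
      intro μ hμ
      exact hmax μ (hasEigenvalue_conj_invol D B hDD μ (hM_def ▸ hμ))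
    have hmultM : 2 ≤ Module.finrank ℝ ↥(Module.End.eigenspace (Matrix.toLin' M) lam) := by
      rw [hM_def, finrank_eig_conj_invol D B hDD]
      exact hmult
    have := perron_simple G hG M hMsymm hMedge lam hmaxM
    omega
  · -- negative case: we get a discrete Schrödinger operator
    refine ⟨M, ⟨hMsymm, fun i j hij => ⟨fun hadj => ?_, hMoff i j hij⟩⟩, ?_⟩
    · rw [hMadj i j hadj, hP1]
      have := hfacpos i j hadj
      linarith
    · rw [hM_def]
      exact charpoly_conj_invol D B hDD
end

section
/- Let G be a connected graph, v a cut-vertex of G, A a discrete Schrödinger operator of G, and H a connected component of G − v. If λ is the smallest eigenvalue of the principal submatrix A[H], then mult_{A(v)}(λ) = mult_A(λ) + 1, i.e., v is a λ-upper vertex of A. -/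
open Matrix Module

lemma mem_eig_iff {ι : Type*} [Fintype ι] [DecidableEq ι]
    (M : Matrix ι ι ℝ) (μ : ℝ) (x : ι → ℝ) :
    x ∈ Module.End.eigenspace (Matrix.toLin' M) μ ↔ M *ᵥ x = μ • x := by
  rw [Module.End.mem_eigenspace_iff, Matrix.toLin'_apply]

lemma quad_expand {ι : Type*} [Fintype ι] (M : Matrix ι ι ℝ) (x y : ι → ℝ) :
    x ⬝ᵥ (M *ᵥ y) = ∑ i, ∑ j, M i j * (x i * y j) := by
  simp only [dotProduct, Matrix.mulVec, Finset.mul_sum]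
  congr 1; funext i; congr 1; funext j; ring

lemma perron {ι : Type*} [Fintype ι] [DecidableEq ι] [Nonempty ι]
    (M : Matrix ι ι ℝ) (hsym : M.IsSymm)
    (hoff : ∀ i j : ι, i ≠ j → M i j ≤ 0)
    (hconn : ∀ i j : ι, Relation.ReflTransGen (fun a b => a ≠ b ∧ M a b ≠ 0) i j)
    (lam : ℝ) (hev : Module.End.HasEigenvalue (Matrix.toLin' M) lam)
    (hmin : ∀ μ : ℝ, Module.End.HasEigenvalue (Matrix.toLin' M) μ → lam ≤ μ) :
    ∃ u : ι → ℝ, (∀ i, 0 < u i) ∧ M *ᵥ u = lam • u ∧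
      Module.End.eigenspace (Matrix.toLin' M) lam = Submodule.span ℝ {u} := by
  have hherm : M.IsHermitian := by
    rwa [Matrix.IsHermitian, conjTranspose_eq_transpose_of_trivial]
  set N : Matrix ι ι ℝ := M - lam • (1 : Matrix ι ι ℝ) with hN
  have hNmul : ∀ x : ι → ℝ, N *ᵥ x = M *ᵥ x - lam • x := by
    intro x
    simp [hN, Matrix.sub_mulVec, Matrix.smul_mulVec]
  have hNherm : N.IsHermitian := by
    have h1 : (lam • (1 : Matrix ι ι ℝ)).IsHermitian := by
      simp [Matrix.IsHermitian, Matrix.conjTranspose_smul]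
    exact hherm.sub h1
  have hNoff : ∀ i j : ι, i ≠ j → N i j = M i j := by
    intro i j hij
    simp [hN, Matrix.one_apply_ne hij]
  -- eigenvalue transfer
  have hNev : ∀ (x : ι → ℝ) (ν : ℝ), x ≠ 0 → N *ᵥ x = ν • x → 0 ≤ ν := by
    intro x ν hx hxν
    have hMx : M *ᵥ x = (ν + lam) • x := by
      have := hxν
      rw [hNmul] at this
      have h2 : M *ᵥ x = ν • x + lam • x := by linear_combination (norm := module) this
      rw [h2, add_smul]
    have : Module.End.HasEigenvalue (Matrix.toLin' M) (ν + lam) :=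
      Module.End.hasEigenvalue_of_hasEigenvector ⟨(mem_eig_iff M _ x).2 hMx, hx⟩
    linarith [hmin _ this]
  have hNpsd : N.PosSemidef := by
    refine hNherm.posSemidef_iff_eigenvalues_nonneg.mpr (fun i => ?_)
    have hw := hNherm.mulVec_eigenvectorBasis i
    have hwne : ⇑(hNherm.eigenvectorBasis i) ≠ 0 := by
      intro h
      apply hNherm.eigenvectorBasis.orthonormal.ne_zero i
      ext j
      exact congrFun h j
    exact hNev _ _ hwne hw
  -- membership characterization
  have hmem : ∀ x : ι → ℝ, x ∈ Module.End.eigenspace (Matrix.toLin' M) lam ↔ N *ᵥ x = 0 := by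
    intro x
    rw [mem_eig_iff, hNmul, sub_eq_zero]
  -- abs of a null vector of N is null
  have habs : ∀ x : ι → ℝ, N *ᵥ x = 0 → N *ᵥ (fun i => |x i|) = 0 := by
    intro x hx
    have hq0 : x ⬝ᵥ (N *ᵥ x) = 0 := by rw [hx, dotProduct_zero]
    have hle : (fun i => |x i|) ⬝ᵥ (N *ᵥ fun i => |x i|) ≤ x ⬝ᵥ (N *ᵥ x) := by
      rw [quad_expand, quad_expand]
      refine Finset.sum_le_sum (fun i _ => Finset.sum_le_sum (fun j _ => ?_))
      rcases eq_or_ne i j with rfl | hij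
      · rw [abs_mul_abs_self]
      · have h1 : N i j ≤ 0 := hNoff i j hij ▸ hoff i j hij
        have h2 : x i * x j ≤ |x i| * |x j| := by
          rw [← abs_mul]; exact le_abs_self _
        exact mul_le_mul_of_nonpos_left h2 h1
    have hge : 0 ≤ (fun i => |x i|) ⬝ᵥ (N *ᵥ fun i => |x i|) := by
      have := hNpsd.dotProduct_mulVec_nonneg (fun i => |x i|)
      simpa using this
    have heq : (fun i => |x i|) ⬝ᵥ (N *ᵥ fun i => |x i|) = 0 := le_antisymm (hq0 ▸ hle) hge
    have := (hNpsd.dotProduct_mulVec_zero_iff (fun i => |x i|)).1 (by simpa using heq)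
    exact this
  -- positivity propagation
  have hprop : ∀ y : ι → ℝ, N *ᵥ y = 0 → (∀ i, 0 ≤ y i) → ∀ i, y i = 0 → ∀ j, y j = 0 := by
    intro y hy hynn i hyi j
    have step : ∀ a b : ι, a ≠ b → M a b ≠ 0 → y a = 0 → y b = 0 := by
      intro a b hab hMab hya
      have hrow : ∑ k, M a k * y k = 0 := by
        have : (M *ᵥ y) a = (lam • y) a := by
          have h2 : M *ᵥ y = lam • y := by
            have := hNmul y; rw [hy] at this
            have := this.symm
            linear_combination (norm := module) this
          rw [h2]
        simpa [Matrix.mulVec, dotProduct, Pi.smul_apply, hya] using this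
      have hterm : ∀ k ∈ Finset.univ.erase a, M a k * y k = 0 := by
        have hsum : ∑ k ∈ Finset.univ.erase a, M a k * y k = 0 := by
          rw [← Finset.add_sum_erase Finset.univ (fun k => M a k * y k)
            (Finset.mem_univ a)] at hrow
          simpa [hya] using hrow
        have hnp : ∀ k ∈ Finset.univ.erase a, M a k * y k ≤ 0 := by
          intro k hk
          have hka : k ≠ a := (Finset.mem_erase.1 hk).1
          exact mul_nonpos_of_nonpos_of_nonneg (hoff a k (Ne.symm hka)) (hynn k)
        intro k hk
        exact (Finset.sum_eq_zero_iff_of_nonpos hnp).1 hsum k hk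
      have := hterm b (Finset.mem_erase.2 ⟨Ne.symm hab, Finset.mem_univ b⟩)
      rcases mul_eq_zero.1 this with h | h
      · exact absurd h hMab
      · exact h
    induction hconn i j with
    | refl => exact hyi
    | tail _ hbc ih => exact step _ _ hbc.1 hbc.2 ih
  have hposall : ∀ y : ι → ℝ, N *ᵥ y = 0 → (∀ i, 0 ≤ y i) → y ≠ 0 → ∀ i, 0 < y i := by
    intro y hy hynn hyne i
    rcases (hynn i).lt_or_eq with h | h
    · exact h
    · exfalso
      apply hyne
      funext j
      exact hprop y hy hynn i h.symm j
  -- get the eigenvector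
  obtain ⟨x, hxmem, hxne⟩ := hev.exists_hasEigenvector
  have hxN : N *ᵥ x = 0 := (hmem x).1 hxmem
  set u : ι → ℝ := fun i => |x i| with hu
  have huN : N *ᵥ u = 0 := habs x hxN
  have hunn : ∀ i, 0 ≤ u i := fun i => abs_nonneg _
  have hune : u ≠ 0 := by
    intro h
    apply hxne
    funext j
    have := congrFun h j
    simpa [hu, abs_eq_zero] using this
  have hupos : ∀ i, 0 < u i := hposall u huN hunn hune
  refine ⟨u, hupos, ?_, ?_⟩
  · have := hNmul u
    rw [huN] at this
    linear_combination (norm := module) -this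
  · apply le_antisymm
    · intro z hz
      set i0 : ι := Classical.arbitrary ι
      set c : ℝ := z i0 / u i0 with hc
      set w : ι → ℝ := z - c • u with hw
      have humem : u ∈ Module.End.eigenspace (Matrix.toLin' M) lam := (hmem u).2 huN
      have hwmem : w ∈ Module.End.eigenspace (Matrix.toLin' M) lam :=
        Submodule.sub_mem _ hz (Submodule.smul_mem _ _ humem)
      have hwi0 : w i0 = 0 := by
        simp only [hw, Pi.sub_apply, Pi.smul_apply, smul_eq_mul, hc]
        rw [div_mul_eq_mul_div, mul_div_assoc, div_self (hupos i0).ne', mul_one, sub_self]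
      have hw0 : w = 0 := by
        by_contra hwne
        have h3 := habs w ((hmem w).1 hwmem)
        have h4 : (fun i => |w i|) ≠ 0 := by
          intro h
          apply hwne
          funext j
          have := congrFun h j
          simpa [abs_eq_zero] using this
        have := hposall _ h3 (fun i => abs_nonneg _) h4 i0
        rw [hwi0] at this
        simpa using this
      have : z = c • u := by
        have := hw0
        rw [hw, sub_eq_zero] at this
        exact this
      rw [this]
      exact Submodule.smul_mem _ _ (Submodule.mem_span_singleton_self u)
    · rw [Submodule.span_le, Set.singleton_subset_iff]
      exact (hmem u).2 huN

/-- Let `G` be connected, `v` a cut-vertex, `A` a discrete Schrödinger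
operator of `G`, and `s` the vertex set of a connected component `H` of `G − v`.  If `λ` is the
smallest eigenvalue of the principal submatrix `A[H]`, then `v` is a `λ`-upper vertex:
`mult_{A(v)}(λ) = mult_A(λ) + 1`. -/
theorem cut_vertex_upper_at_component_min
    {V : Type*} [Fintype V] [DecidableEq V]
    (G : SimpleGraph V) (hG : G.Connected) (v : V)
    (hcut : ¬ (G.induce ({v}ᶜ : Set V)).Connected)
    (A : Matrix V V ℝ) (hA : IsDSO G A)
    (s : Finset V) (hvs : v ∉ s) (hne : s.Nonempty)
    (hHconn : (G.induce (↑s : Set V)).Connected)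
    (hclosed : ∀ i ∈ s, ∀ j : V, j ∉ s → j ≠ v → ¬ G.Adj i j)
    (lam : ℝ)
    (hev : Module.End.HasEigenvalue
      (Matrix.toLin' (A.submatrix (fun i : {x // x ∈ s} => (i : V))
        (fun i : {x // x ∈ s} => (i : V)))) lam)
    (hmin : ∀ μ : ℝ, Module.End.HasEigenvalue
      (Matrix.toLin' (A.submatrix (fun i : {x // x ∈ s} => (i : V))
        (fun i : {x // x ∈ s} => (i : V)))) μ → lam ≤ μ) :
    eigMult (A.submatrix (fun i : {x // x ≠ v} => (i : V))
        (fun i : {x // x ≠ v} => (i : V))) lam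
      = eigMult A lam + 1 := by
  classical
  obtain ⟨hAsym, hAdso⟩ := hA
  have hAs : ∀ i j : V, A i j = A j i := fun i j => hAsym.apply j i
  have hzero : ∀ i ∈ s, ∀ j, j ∉ s → j ≠ v → A i j = 0 := fun i hi j hjs hjv =>
    (hAdso i j (fun h => hjs (h ▸ hi))).2 (hclosed i hi j hjs hjv)
  haveI hSne : Nonempty {x // x ∈ s} := ⟨⟨hne.choose, hne.choose_spec⟩⟩
  set t : Finset V := (Finset.univ.erase v) \ s with ht
  have tmem : ∀ x : V, x ∈ t ↔ x ≠ v ∧ x ∉ s := by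
    intro x; simp [ht, Finset.mem_sdiff, Finset.mem_erase]
  set M := A.submatrix (fun i : {x // x ∈ s} => (i : V)) (fun i : {x // x ∈ s} => (i : V))
    with hM
  set B := A.submatrix (fun i : {x // x ≠ v} => (i : V)) (fun i : {x // x ≠ v} => (i : V))
    with hB
  set N := A.submatrix (fun i : {x // x ∈ t} => (i : V)) (fun i : {x // x ∈ t} => (i : V))
    with hN
  -- Perron data
  have hMsym : M.IsSymm := by
    ext i j
    simp only [hM, Matrix.transpose_apply, Matrix.submatrix_apply]
    exact (hAs _ _).symm
  have hMoff : ∀ i j : {x // x ∈ s}, i ≠ j → M i j ≤ 0 := by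
    intro i j hij
    have hne' : (↑i : V) ≠ ↑j := fun h => hij (Subtype.ext h)
    by_cases hadj : G.Adj ↑i ↑j
    · exact le_of_lt ((hAdso _ _ hne').1 hadj)
    · exact le_of_eq ((hAdso _ _ hne').2 hadj)
  have hMconn : ∀ i j : {x // x ∈ s},
      Relation.ReflTransGen (fun a b => a ≠ b ∧ M a b ≠ 0) i j := by
    intro i j
    have hi' : (↑i : V) ∈ (↑s : Set V) := by simpa using i.2
    have hj' : (↑j : V) ∈ (↑s : Set V) := by simpa using j.2
    have hreach := hHconn.preconnected ⟨↑i, hi'⟩ ⟨↑j, hj'⟩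
    rw [SimpleGraph.reachable_iff_reflTransGen] at hreach
    refine Relation.ReflTransGen.lift
      (fun a : (↑s : Set V) => (⟨↑a, by simpa using a.2⟩ : {x // x ∈ s}))
      (fun a b hab => ?_) _ _ hreach
    have hadj : G.Adj ↑a ↑b := hab
    refine ⟨fun h => hadj.ne (congrArg Subtype.val h), ?_⟩
    have := (hAdso ↑a ↑b hadj.ne).1 hadj
    simp only [hM, Matrix.submatrix_apply]
    exact ne_of_lt this
  obtain ⟨u, hupos, huMv, huspan⟩ := perron M hMsym hMoff hMconn lam hev hmin
  have hurow : ∀ i : {x // x ∈ s}, ∑ j : {x // x ∈ s}, A ↑i ↑j * u j = lam * u i := by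
    intro i
    have h := congrFun huMv i
    simpa [hM, Matrix.mulVec, dotProduct, Matrix.submatrix_apply] using h
  have hune : u ≠ 0 := by
    intro h
    exact (hupos (Classical.arbitrary _)).ne' (congrFun h _)
  -- edge from s to v
  have hedge : ∃ i, i ∈ s ∧ G.Adj v i := by
    obtain ⟨i0, hi0⟩ := hne
    have hreach : G.Reachable i0 v := hG.preconnected i0 v
    rw [SimpleGraph.reachable_iff_reflTransGen] at hreach
    refine (Relation.ReflTransGen.head_induction_on
      (motive := fun a (_ : Relation.ReflTransGen G.Adj a v) =>
        a ∈ s → ∃ i, i ∈ s ∧ G.Adj v i)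
      hreach (fun h => absurd h hvs) ?_) hi0
    intro a c hac hcb ih ha
    by_cases hc : c = v
    · exact ⟨a, ha, (hc ▸ hac).symm⟩
    by_cases hcs : c ∈ s
    · exact ih hcs
    · exact absurd hac (hclosed a ha c hcs hc)
  set d : ℝ := ∑ i : {x // x ∈ s}, A v ↑i * u i with hd_def
  have hd : d < 0 := by
    obtain ⟨i1, hi1, hadj⟩ := hedge
    have h := Finset.sum_lt_sum (s := Finset.univ)
      (f := fun i : {x // x ∈ s} => A v ↑i * u i) (g := fun _ => (0:ℝ))
      (fun i _ => by
        show A v ↑i * u i ≤ 0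
        have hvi : v ≠ ↑i := fun h => hvs (h ▸ i.2)
        by_cases hadj' : G.Adj v ↑i
        · have h1 : A v ↑i ≤ 0 := le_of_lt ((hAdso v ↑i hvi).1 hadj')
          exact mul_nonpos_iff.2 (Or.inr ⟨h1, (hupos i).le⟩)
        · rw [(hAdso v ↑i hvi).2 hadj', zero_mul])
      ⟨⟨i1, hi1⟩, Finset.mem_univ _,
        mul_neg_of_neg_of_pos ((hAdso v i1 (G.ne_of_adj hadj)).1 hadj) (hupos _)⟩
    simpa [hd_def] using h
  have hdne : d ≠ 0 := ne_of_lt hd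
  -- coercion maps and sum splitting
  have hvneS : ∀ i : {x // x ∈ s}, (↑i : V) ≠ v := fun i h => hvs (h ▸ i.2)
  set eS : {x // x ∈ s} → {x // x ≠ v} := fun i => ⟨↑i, hvneS i⟩ with heS
  set eT : {x // x ∈ t} → {x // x ≠ v} := fun i => ⟨↑i, ((tmem ↑i).1 i.2).1⟩ with heT
  have hsplitW : ∀ g : {x // x ≠ v} → ℝ,
      ∑ w : {x // x ≠ v}, g w
        = ∑ i : {x // x ∈ s}, g (eS i) + ∑ i : {x // x ∈ t}, g (eT i) := by
    intro g
    let e : {x // x ∈ s} ⊕ {x // x ∈ t} ≃ {x // x ≠ v} :=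
      { toFun := Sum.elim eS eT
        invFun := fun w => if h : (↑w : V) ∈ s then Sum.inl ⟨↑w, h⟩
          else Sum.inr ⟨↑w, (tmem ↑w).2 ⟨w.2, h⟩⟩
        left_inv := by
          rintro (i | i)
          · simp [heS, i.2]
          · have h2 : (↑i : V) ∉ s := ((tmem ↑i).1 i.2).2
            simp [heT, h2]
        right_inv := by
          intro w
          by_cases h : (↑w : V) ∈ s <;> simp [h, heS, heT] }
    rw [← Equiv.sum_comp e g, Fintype.sum_sum_type]
    rfl
  have hsplitV : ∀ g : V → ℝ,
      ∑ x : V, g x = (∑ i : {x // x ∈ s}, g ↑i + ∑ i : {x // x ∈ t}, g ↑i) + g v := by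
    intro g
    rw [← Finset.add_sum_erase Finset.univ g (Finset.mem_univ v),
      Finset.sum_subtype (p := fun x => x ≠ v) (Finset.univ.erase v)
        (fun x => by simp) g,
      hsplitW (fun w => g ↑w)]
    rw [add_comm]
  -- zero blocks
  have hAz1 : ∀ (i : {x // x ∈ s}) (j : {x // x ∈ t}), A ↑i ↑j = 0 :=
    fun i j => hzero ↑i i.2 ↑j ((tmem ↑j).1 j.2).2 ((tmem ↑j).1 j.2).1
  have hAz2 : ∀ (i : {x // x ∈ t}) (j : {x // x ∈ s}), A ↑i ↑j = 0 :=
    fun i j => (hAs ↑i ↑j).trans (hAz1 j i)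
  -- membership characterizations
  have hmemM : ∀ y : {x // x ∈ s} → ℝ,
      y ∈ Module.End.eigenspace (Matrix.toLin' M) lam
        ↔ ∀ i : {x // x ∈ s}, ∑ j : {x // x ∈ s}, A ↑i ↑j * y j = lam * y i := by
    intro y
    rw [mem_eig_iff, funext_iff]
    refine forall_congr' fun i => ?_
    rw [show (M *ᵥ y) i = ∑ j : {x // x ∈ s}, A ↑i ↑j * y j from by
      simp [hM, Matrix.mulVec, dotProduct], Pi.smul_apply, smul_eq_mul]
  have hmemN : ∀ y : {x // x ∈ t} → ℝ,
      y ∈ Module.End.eigenspace (Matrix.toLin' N) lam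
        ↔ ∀ i : {x // x ∈ t}, ∑ j : {x // x ∈ t}, A ↑i ↑j * y j = lam * y i := by
    intro y
    rw [mem_eig_iff, funext_iff]
    refine forall_congr' fun i => ?_
    rw [show (N *ᵥ y) i = ∑ j : {x // x ∈ t}, A ↑i ↑j * y j from by
      simp [hN, Matrix.mulVec, dotProduct], Pi.smul_apply, smul_eq_mul]
  have hmemB : ∀ y : {x // x ≠ v} → ℝ,
      y ∈ Module.End.eigenspace (Matrix.toLin' B) lam
        ↔ ∀ w : {x // x ≠ v},
            ∑ i : {x // x ∈ s}, A ↑w ↑i * y (eS i)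
              + ∑ i : {x // x ∈ t}, A ↑w ↑i * y (eT i) = lam * y w := by
    intro y
    rw [mem_eig_iff, funext_iff]
    refine forall_congr' fun w => ?_
    rw [show (B *ᵥ y) w = ∑ j : {x // x ≠ v}, A ↑w ↑j * y j from by
      simp [hB, Matrix.mulVec, dotProduct],
      hsplitW (fun j => A ↑w ↑j * y j), Pi.smul_apply, smul_eq_mul]
  have hmemA : ∀ x : V → ℝ,
      x ∈ Module.End.eigenspace (Matrix.toLin' A) lam
        ↔ ∀ i : V, (∑ j : {x // x ∈ s}, A i ↑j * x ↑j
            + ∑ j : {x // x ∈ t}, A i ↑j * x ↑j) + A i v * x v = lam * x i := by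
    intro x
    rw [mem_eig_iff, funext_iff]
    refine forall_congr' fun i => ?_
    rw [show (A *ᵥ x) i = ∑ j : V, A i j * x j from by
      simp [Matrix.mulVec, dotProduct],
      hsplitV (fun j => A i j * x j), Pi.smul_apply, smul_eq_mul]
  -- eigenspaces
  set EM := Module.End.eigenspace (Matrix.toLin' M) lam with hEM
  set EN := Module.End.eigenspace (Matrix.toLin' N) lam with hEN
  set EB := Module.End.eigenspace (Matrix.toLin' B) lam with hEB
  set EA := Module.End.eigenspace (Matrix.toLin' A) lam with hEA
  -- rows in s for eigenvectors of A
  have hrowS : ∀ x : V → ℝ, x ∈ EA → ∀ i : {x // x ∈ s},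
      (∑ j : {x // x ∈ s}, A ↑i ↑j * x ↑j) + A ↑i v * x v = lam * x ↑i := by
    intro x hx i
    have h := (hmemA x).1 hx ↑i
    rw [show ∑ j : {x // x ∈ t}, A ↑i ↑j * x ↑j = 0 from
      Finset.sum_eq_zero fun j _ => by rw [hAz1 i j, zero_mul], add_zero] at h
    exact h
  -- eigenvectors of A vanish at v
  have hxv0 : ∀ x : V → ℝ, x ∈ EA → x v = 0 := by
    intro x hx
    have h1 : ∑ i : {x // x ∈ s}, u i * ((∑ j : {x // x ∈ s}, A ↑i ↑j * x ↑j) + A ↑i v * x v)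
        = ∑ i : {x // x ∈ s}, u i * (lam * x ↑i) :=
      Finset.sum_congr rfl fun i _ => by rw [hrowS x hx i]
    have h2 : ∑ i : {x // x ∈ s}, u i * ∑ j : {x // x ∈ s}, A ↑i ↑j * x ↑j
        = ∑ j : {x // x ∈ s}, (lam * u j) * x ↑j := by
      calc ∑ i : {x // x ∈ s}, u i * ∑ j : {x // x ∈ s}, A ↑i ↑j * x ↑j
          = ∑ i : {x // x ∈ s}, ∑ j : {x // x ∈ s}, (A ↑j ↑i * u i) * x ↑j := by
            refine Finset.sum_congr rfl fun i _ => ?_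
            rw [Finset.mul_sum]
            refine Finset.sum_congr rfl fun j _ => ?_
            rw [hAs ↑j ↑i]; ring
        _ = ∑ j : {x // x ∈ s}, ∑ i : {x // x ∈ s}, (A ↑j ↑i * u i) * x ↑j :=
            Finset.sum_comm
        _ = ∑ j : {x // x ∈ s}, (lam * u j) * x ↑j := by
            refine Finset.sum_congr rfl fun j _ => ?_
            rw [← Finset.sum_mul, hurow j]
    have h3 : ∑ i : {x // x ∈ s}, u i * ((∑ j : {x // x ∈ s}, A ↑i ↑j * x ↑j) + A ↑i v * x v)
        = (∑ i : {x // x ∈ s}, u i * ∑ j : {x // x ∈ s}, A ↑i ↑j * x ↑j) + d * x v := by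
      rw [show ∑ i : {x // x ∈ s}, u i * ((∑ j : {x // x ∈ s}, A ↑i ↑j * x ↑j) + A ↑i v * x v)
          = ∑ i : {x // x ∈ s}, (u i * ∑ j : {x // x ∈ s}, A ↑i ↑j * x ↑j
            + (A v ↑i * u i) * x v) from
        Finset.sum_congr rfl fun i _ => by rw [hAs ↑i v]; ring,
        Finset.sum_add_distrib, ← Finset.sum_mul, hd_def]
    have h5 : ∑ i : {x // x ∈ s}, u i * (lam * x ↑i)
        = ∑ j : {x // x ∈ s}, (lam * u j) * x ↑j :=
      Finset.sum_congr rfl fun i _ => by ring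
    rw [h3, h2, h5] at h1
    have hdx : d * x v = 0 := by linarith
    exact (mul_eq_zero.1 hdx).resolve_left hdne
  -- restriction maps from E_B
  have hresS : ∀ y ∈ EB, LinearMap.funLeft ℝ ℝ eS y ∈ EM := by
    intro y hy
    rw [hmemM]
    intro i
    have h := (hmemB y).1 hy (eS i)
    rw [show ((eS i : {x // x ≠ v}) : V) = ↑i from rfl] at h
    rw [show ∑ j : {x // x ∈ t}, A ↑i ↑j * y (eT j) = 0 from
      Finset.sum_eq_zero fun j _ => by rw [hAz1 i j, zero_mul], add_zero] at h
    exact h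
  have hresT : ∀ y ∈ EB, LinearMap.funLeft ℝ ℝ eT y ∈ EN := by
    intro y hy
    rw [hmemN]
    intro i
    have h := (hmemB y).1 hy (eT i)
    rw [show ((eT i : {x // x ≠ v}) : V) = ↑i from rfl] at h
    rw [show ∑ j : {x // x ∈ s}, A ↑i ↑j * y (eS j) = 0 from
      Finset.sum_eq_zero fun j _ => by rw [hAz2 i j, zero_mul], zero_add] at h
    exact h
  -- gluing map
  let glue : (({x // x ∈ s} → ℝ) × ({x // x ∈ t} → ℝ)) →ₗ[ℝ] ({x // x ≠ v} → ℝ) :=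
    { toFun := fun p w => if h : (↑w : V) ∈ s then p.1 ⟨↑w, h⟩
        else p.2 ⟨↑w, (tmem ↑w).2 ⟨w.2, h⟩⟩
      map_add' := by
        intro p q; funext w
        by_cases h : (↑w : V) ∈ s <;> simp [h]
      map_smul' := by
        intro c p; funext w
        by_cases h : (↑w : V) ∈ s <;> simp [h] }
  have hglue_S : ∀ p (i : {x // x ∈ s}), glue p (eS i) = p.1 i := fun p i => dif_pos i.2
  have hglue_T : ∀ p (i : {x // x ∈ t}), glue p (eT i) = p.2 i :=
    fun p i => dif_neg ((tmem ↑i).1 i.2).2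
  have hglueMem : ∀ p : ↥EM × ↥EN, glue (↑p.1, ↑p.2) ∈ EB := by
    intro p
    rw [hmemB]
    intro w
    rw [show ∑ i : {x // x ∈ s}, A ↑w ↑i * glue (↑p.1, ↑p.2) (eS i)
        = ∑ i : {x // x ∈ s}, A ↑w ↑i * (p.1 : {x // x ∈ s} → ℝ) i from
      Finset.sum_congr rfl fun i _ => by rw [hglue_S]]
    rw [show ∑ i : {x // x ∈ t}, A ↑w ↑i * glue (↑p.1, ↑p.2) (eT i)
        = ∑ i : {x // x ∈ t}, A ↑w ↑i * (p.2 : {x // x ∈ t} → ℝ) i from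
      Finset.sum_congr rfl fun i _ => by rw [hglue_T]]
    by_cases h : (↑w : V) ∈ s
    · rw [show ∑ i : {x // x ∈ t}, A ↑w ↑i * (p.2 : {x // x ∈ t} → ℝ) i = 0 from
        Finset.sum_eq_zero fun j _ => by
          rw [show A ↑w ↑j = 0 from
            hzero ↑w h ↑j ((tmem ↑j).1 j.2).2 ((tmem ↑j).1 j.2).1, zero_mul], add_zero,
        show glue (↑p.1, ↑p.2) w = (p.1 : {x // x ∈ s} → ℝ) ⟨↑w, h⟩ from dif_pos h]
      exact (hmemM ↑p.1).1 p.1.2 ⟨↑w, h⟩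
    · rw [show ∑ i : {x // x ∈ s}, A ↑w ↑i * (p.1 : {x // x ∈ s} → ℝ) i = 0 from
        Finset.sum_eq_zero fun j _ => by
          rw [show A ↑w ↑j = 0 from (hAs ↑w ↑j).trans (hzero ↑j j.2 ↑w h w.2), zero_mul],
        zero_add,
        show glue (↑p.1, ↑p.2) w = (p.2 : {x // x ∈ t} → ℝ) ⟨↑w, (tmem ↑w).2 ⟨w.2, h⟩⟩ from
          dif_neg h]
      exact (hmemN ↑p.2).1 p.2.2 ⟨↑w, (tmem ↑w).2 ⟨w.2, h⟩⟩
  -- the splitting equivalence for E_B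
  have hBrank : Module.finrank ℝ ↥EB = Module.finrank ℝ ↥EM + Module.finrank ℝ ↥EN := by
    let FB : ↥EB →ₗ[ℝ] ↥EM × ↥EN :=
      ((LinearMap.funLeft ℝ ℝ eS).restrict hresS).prod
        ((LinearMap.funLeft ℝ ℝ eT).restrict hresT)
    let GB : ↥EM × ↥EN →ₗ[ℝ] ↥EB :=
      LinearMap.codRestrict EB (glue ∘ₗ (EM.subtype.prodMap EN.subtype))
        (fun p => hglueMem p)
    have e : ↥EB ≃ₗ[ℝ] ↥EM × ↥EN := by
      refine LinearEquiv.ofLinear FB GB ?_ ?_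
      · apply LinearMap.ext; intro p
        refine Prod.ext (Subtype.ext (funext fun i => ?_)) (Subtype.ext (funext fun i => ?_))
        · exact hglue_S (↑p.1, ↑p.2) i
        · exact hglue_T (↑p.1, ↑p.2) i
      · apply LinearMap.ext; intro y
        refine Subtype.ext (funext fun w => ?_)
        show glue (LinearMap.funLeft ℝ ℝ eS ↑y, LinearMap.funLeft ℝ ℝ eT ↑y) w
          = (y : {x // x ≠ v} → ℝ) w
        by_cases h : (↑w : V) ∈ s
        · exact dif_pos h
        · exact dif_neg h
    rw [LinearEquiv.finrank_eq e, Module.finrank_prod]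
  -- restriction from E_A to E_N
  have hresA : ∀ x ∈ EA, LinearMap.funLeft ℝ ℝ (fun i : {x // x ∈ t} => (↑i : V)) x ∈ EN := by
    intro x hx
    rw [hmemN]
    intro i
    have h := (hmemA x).1 hx ↑i
    rw [show ∑ j : {x // x ∈ s}, A ↑i ↑j * x ↑j = 0 from
        Finset.sum_eq_zero fun j _ => by rw [hAz2 i j, zero_mul],
      hxv0 x hx, mul_zero, add_zero, zero_add] at h
    exact h
  -- extension map from E_N to E_A
  let cN : ({x // x ∈ t} → ℝ) → ℝ := fun y => -(∑ j : {x // x ∈ t}, A v ↑j * y j) / d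
  have hcN_add : ∀ y z, cN (y + z) = cN y + cN z := by
    intro y z
    simp only [cN, Pi.add_apply, mul_add]
    rw [Finset.sum_add_distrib, neg_add, add_div]
  have hcN_smul : ∀ (c : ℝ) y, cN (c • y) = c * cN y := by
    intro c y
    simp only [cN, Pi.smul_apply, smul_eq_mul]
    rw [show ∑ j : {x // x ∈ t}, A v ↑j * (c * y j)
        = c * ∑ j : {x // x ∈ t}, A v ↑j * y j from by
      rw [Finset.mul_sum]; exact Finset.sum_congr rfl fun j _ => by ring]
    ring
  let ext0 : ({x // x ∈ t} → ℝ) →ₗ[ℝ] (V → ℝ) :=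
    { toFun := fun y x => if h1 : x ∈ s then cN y * u ⟨x, h1⟩
        else if h2 : x ∈ t then y ⟨x, h2⟩ else 0
      map_add' := by
        intro y z; funext x
        by_cases h1 : x ∈ s
        · simp only [dif_pos h1, Pi.add_apply, hcN_add]
          ring
        · by_cases h2 : x ∈ t <;> simp [dif_neg h1, h2]
      map_smul' := by
        intro c y; funext x
        by_cases h1 : x ∈ s
        · simp only [dif_pos h1, Pi.smul_apply, smul_eq_mul, RingHom.id_apply, hcN_smul]
          ring
        · by_cases h2 : x ∈ t <;> simp [dif_neg h1, h2] }
  have hext_S : ∀ y (j : {x // x ∈ s}), ext0 y ↑j = cN y * u j := fun y j => dif_pos j.2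
  have hext_T : ∀ y (j : {x // x ∈ t}), ext0 y ↑j = y j := by
    intro y j
    exact (dif_neg ((tmem ↑j).1 j.2).2).trans (dif_pos j.2)
  have hext_v : ∀ y, ext0 y v = 0 := by
    intro y
    exact (dif_neg hvs).trans (dif_neg (fun h => ((tmem v).1 h).1 rfl))
  have hextMem : ∀ y : ↥EN, ext0 ↑y ∈ EA := by
    intro y
    rw [hmemA]
    intro i
    rw [show ∑ j : {x // x ∈ s}, A i ↑j * ext0 ↑y ↑j
        = cN ↑y * ∑ j : {x // x ∈ s}, A i ↑j * u j from by
      rw [Finset.mul_sum]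
      exact Finset.sum_congr rfl fun j _ => by rw [hext_S ↑y j]; ring]
    rw [show ∑ j : {x // x ∈ t}, A i ↑j * ext0 ↑y ↑j
        = ∑ j : {x // x ∈ t}, A i ↑j * (↑y : {x // x ∈ t} → ℝ) j from
      Finset.sum_congr rfl fun j _ => by rw [hext_T ↑y j]]
    rw [hext_v, mul_zero, add_zero]
    by_cases h1 : i ∈ s
    · rw [show ∑ j : {x // x ∈ t}, A i ↑j * (↑y : {x // x ∈ t} → ℝ) j = 0 from
        Finset.sum_eq_zero fun j _ => by
          rw [show A i ↑j = 0 from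
            hzero i h1 ↑j ((tmem ↑j).1 j.2).2 ((tmem ↑j).1 j.2).1, zero_mul], add_zero,
        show ∑ j : {x // x ∈ s}, A i ↑j * u j = lam * u ⟨i, h1⟩ from hurow ⟨i, h1⟩,
        show ext0 ↑y i = cN ↑y * u ⟨i, h1⟩ from dif_pos h1]
      ring
    by_cases h2 : i ∈ t
    · rw [show ∑ j : {x // x ∈ s}, A i ↑j * u j = 0 from
        Finset.sum_eq_zero fun j _ => by
          rw [show A i ↑j = 0 from (hAs i ↑j).trans (hzero ↑j j.2 i h1 ((tmem i).1 h2).1),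
            zero_mul],
        mul_zero, zero_add,
        show ext0 ↑y i = (↑y : {x // x ∈ t} → ℝ) ⟨i, h2⟩ from
          (dif_neg h1).trans (dif_pos h2)]
      exact (hmemN ↑y).1 y.2 ⟨i, h2⟩
    · have hiv : i = v := by
        by_contra hne'
        exact h2 ((tmem i).2 ⟨hne', h1⟩)
      rw [hiv, hext_v, mul_zero,
        show ∑ j : {x // x ∈ s}, A v ↑j * u j = d from hd_def.symm,
        show cN ↑y * d = -(∑ j : {x // x ∈ t}, A v ↑j * (↑y : {x // x ∈ t} → ℝ) j) from by
          simp only [cN]; rw [div_mul_cancel₀ _ hdne]]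
      ring
  -- rank equality between E_A and E_N
  have hArank : Module.finrank ℝ ↥EA = Module.finrank ℝ ↥EN := by
    let FA : ↥EA →ₗ[ℝ] ↥EN :=
      (LinearMap.funLeft ℝ ℝ (fun i : {x // x ∈ t} => (↑i : V))).restrict hresA
    let GA : ↥EN →ₗ[ℝ] ↥EA :=
      LinearMap.codRestrict EA (ext0 ∘ₗ EN.subtype) (fun y => hextMem y)
    have e : ↥EA ≃ₗ[ℝ] ↥EN := by
      refine LinearEquiv.ofLinear FA GA ?_ ?_
      · -- FA ∘ GA = id on E_N
        apply LinearMap.ext; intro y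
        refine Subtype.ext (funext fun j => ?_)
        exact hext_T ↑y j
      · -- GA ∘ FA = id on E_A
        apply LinearMap.ext; intro x
        refine Subtype.ext (funext fun j => ?_)
        have hval : (↑((GA ∘ₗ FA) x) : V → ℝ)
            = ext0 (fun i : {x // x ∈ t} => (↑x : V → ℝ) ↑i) := rfl
        rw [hval]
        have hx := x.2
        have hv0 := hxv0 ↑x hx
        have hxSmem : (fun i : {x // x ∈ s} => (↑x : V → ℝ) ↑i) ∈ EM := by
          rw [hmemM]
          intro i
          have h := hrowS ↑x hx i
          rw [hv0, mul_zero, add_zero] at h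
          exact h
        rw [huspan, Submodule.mem_span_singleton] at hxSmem
        obtain ⟨a, ha⟩ := hxSmem
        have hxs : ∀ i : {x // x ∈ s}, (↑x : V → ℝ) ↑i = a * u i := fun i =>
          (congrFun ha i).symm
        have hrv := (hmemA ↑x).1 hx v
        rw [hv0, mul_zero, mul_zero, add_zero] at hrv
        rw [show ∑ j : {x // x ∈ s}, A v ↑j * (↑x : V → ℝ) ↑j = a * d from by
          rw [hd_def, Finset.mul_sum]
          exact Finset.sum_congr rfl fun j _ => by rw [hxs j]; ring] at hrv
        have ha' : a = cN (fun i : {x // x ∈ t} => (↑x : V → ℝ) ↑i) := by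
          simp only [cN]
          rw [eq_div_iff hdne]
          linarith
        by_cases h1 : j ∈ s
        · rw [show ext0 (fun i : {x // x ∈ t} => (↑x : V → ℝ) ↑i) j
              = cN (fun i : {x // x ∈ t} => (↑x : V → ℝ) ↑i) * u ⟨j, h1⟩ from dif_pos h1,
            ← ha']
          exact (hxs ⟨j, h1⟩).symm
        by_cases h2 : j ∈ t
        · exact (dif_neg h1).trans (dif_pos h2)
        · have hjv : j = v := by
            by_contra hne'
            exact h2 ((tmem j).2 ⟨hne', h1⟩)
          rw [hjv, hext_v]
          exact hv0.symm
    exact LinearEquiv.finrank_eq e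
  -- conclusion
  have hMrank : Module.finrank ℝ ↥EM = 1 := by
    rw [huspan]
    exact finrank_span_singleton hune
  show Module.finrank ℝ ↥EB = Module.finrank ℝ ↥EA + 1
  rw [hBrank, hMrank, hArank]
  omega
end

section
/- Let G be a connected graph, v a cut-vertex of G, A a discrete Schrödinger operator of G, and H a connected component of G − v. If for every eigenvalue λ of A[H] other than its smallest, the vector A[H, v] lies in the column space of A[H] − λI, then A[H, v] is entrywise negative; in particular v is adjacent to every vertex of H. -/
open scoped Matrix

/-- Let `G` be connected, `v` a cut-vertex, `A` a discrete Schrödinger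
operator of `G`, and `s` the vertex set of a connected component `H` of `G − v`.  If for every
eigenvalue `λ` of `A[H]` other than the smallest one the column `A[H,v]` lies in the column
space of `A[H] − λI`, then `A[H,v]` is entrywise negative; in particular `v` is adjacent to
every vertex of `H`. -/
theorem cut_vertex_fully_joined_component
    {V : Type*} [Fintype V] [DecidableEq V]
    (G : SimpleGraph V) (hG : G.Connected) (v : V)
    (hcut : ¬ (G.induce ({v}ᶜ : Set V)).Connected)
    (A : Matrix V V ℝ) (hA : IsDSO G A)
    (s : Finset V) (hvs : v ∉ s) (hne : s.Nonempty)
    (hHconn : (G.induce (↑s : Set V)).Connected)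
    (hclosed : ∀ i ∈ s, ∀ j : V, j ∉ s → j ≠ v → ¬ G.Adj i j)
    (hcol : ∀ lam : ℝ,
      Module.End.HasEigenvalue
        (Matrix.toLin' (A.submatrix (fun i : {x // x ∈ s} => (i : V))
          (fun i : {x // x ∈ s} => (i : V)))) lam →
      (∃ μ : ℝ, Module.End.HasEigenvalue
        (Matrix.toLin' (A.submatrix (fun i : {x // x ∈ s} => (i : V))
          (fun i : {x // x ∈ s} => (i : V)))) μ ∧ μ < lam) →
      ∃ x : {x // x ∈ s} → ℝ,
        (A.submatrix (fun i : {x // x ∈ s} => (i : V))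
            (fun i : {x // x ∈ s} => (i : V)) - lam • (1 : Matrix _ _ ℝ)).mulVec x
          = fun i : {x // x ∈ s} => A (i : V) v) :
    ∀ i ∈ s, A i v < 0 ∧ G.Adj v i := by
  classical
  haveI : Nonempty {x // x ∈ s} := ⟨⟨hne.choose, hne.choose_spec⟩⟩
  set B : Matrix {x // x ∈ s} {x // x ∈ s} ℝ :=
    A.submatrix (fun i : {x // x ∈ s} => (i : V)) (fun i : {x // x ∈ s} => (i : V)) with hBdef
  set c : {x // x ∈ s} → ℝ := fun i => A (i : V) v with hcdef
  have hsym : A.IsSymm := hA.1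
  have hBsymm : B.IsSymm := by
    ext i j
    exact hsym.apply _ _
  have hB : B.IsHermitian := by
    rw [Matrix.IsHermitian, Matrix.conjTranspose]
    convert hBsymm.eq using 1
    ext i j
    simp [Matrix.map_apply, starRingEnd_apply]
  -- entries of c are nonpositive
  have hiv : ∀ i : {x // x ∈ s}, (i : V) ≠ v := fun i h => hvs (h ▸ i.2)
  have hcle : ∀ i, c i ≤ 0 := by
    intro i
    by_cases h : G.Adj (i : V) v
    · exact le_of_lt ((hA.2 _ _ (hiv i)).1 h)
    · exact le_of_eq ((hA.2 _ _ (hiv i)).2 h)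
  -- off-diagonal entries of B
  have hBle : ∀ i j : {x // x ∈ s}, i ≠ j → B i j ≤ 0 := by
    intro i j hij
    have : (i : V) ≠ (j : V) := fun h => hij (Subtype.ext h)
    by_cases h : G.Adj (i : V) (j : V)
    · exact le_of_lt ((hA.2 _ _ this).1 h)
    · exact le_of_eq ((hA.2 _ _ this).2 h)
  have hBadj : ∀ i j : {x // x ∈ s}, G.Adj (i : V) (j : V) → B i j < 0 := by
    intro i j h
    exact (hA.2 _ _ h.ne).1 h
  -- there is a vertex in s adjacent to v
  have hadjv : ∃ i ∈ s, G.Adj i v := by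
    have key : ∀ n : ℕ, ∀ a : V, a ∈ s → ∀ p : G.Walk a v, p.length ≤ n →
        ∃ i ∈ s, G.Adj i v := by
      intro n
      induction n with
      | zero =>
        intro a ha p hp
        cases p with
        | nil => exact absurd ha hvs
        | cons h q => simp at hp
      | succ n ih =>
        intro a ha p hp
        cases p with
        | nil => exact absurd ha hvs
        | @cons _ b _ h q =>
          by_cases hb : b ∈ s
          · exact ih b hb q (by simpa using Nat.le_of_succ_le_succ (by simpa using hp))
          · by_cases hbv : b = v
            · exact ⟨a, ha, hbv ▸ h⟩
            · exact absurd h (hclosed _ ha _ hb hbv)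
    obtain ⟨a, ha⟩ := hne
    obtain ⟨p⟩ := hG.preconnected a v
    exact key p.length a ha p le_rfl
  -- the eigenvector functions
  set u : {x // x ∈ s} → ({x // x ∈ s} → ℝ) :=
    fun i => (WithLp.equiv 2 ({x // x ∈ s} → ℝ)) (hB.eigenvectorBasis i) with hudef
  have hBu : ∀ i, B.mulVec (u i) = hB.eigenvalues i • u i := fun i =>
    hB.mulVec_eigenvectorBasis i
  have heig : ∀ i, Module.End.HasEigenvalue (Matrix.toLin' B) (hB.eigenvalues i) := by
    intro i
    refine Module.End.hasEigenvalue_of_hasEigenvector (x := u i) ⟨?_, ?_⟩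
    · rw [Module.End.mem_eigenspace_iff, Matrix.toLin'_apply]
      exact hBu i
    · intro h
      exact hB.eigenvectorBasis.orthonormal.ne_zero i (by ext j; exact congrFun h j)
  set lam0 : ℝ := Finset.univ.inf' Finset.univ_nonempty hB.eigenvalues with hlam0
  obtain ⟨i0, -, hi0⟩ := Finset.exists_mem_eq_inf' (Finset.univ_nonempty) hB.eigenvalues
  -- orthogonality for non-minimal eigenvalues
  have horth : ∀ i, hB.eigenvalues i ≠ lam0 → dotProduct (u i) c = 0 := by
    intro i hne'
    have hlt : lam0 < hB.eigenvalues i :=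
      lt_of_le_of_ne (Finset.inf'_le _ (Finset.mem_univ i)) (Ne.symm hne')
    obtain ⟨x, hx⟩ := hcol (hB.eigenvalues i) (heig i)
      ⟨hB.eigenvalues i0, heig i0, by rw [← hi0]; exact hlt⟩
    have hx' : (B - hB.eigenvalues i • (1 : Matrix _ _ ℝ)).mulVec x = c := hx
    have ht : (B - hB.eigenvalues i • (1 : Matrix _ _ ℝ)).transpose
        = B - hB.eigenvalues i • (1 : Matrix _ _ ℝ) := by
      rw [Matrix.transpose_sub, hBsymm.eq, Matrix.transpose_smul, Matrix.transpose_one]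
    rw [← hx', Matrix.dotProduct_mulVec, ← Matrix.mulVec_transpose, ht,
      Matrix.sub_mulVec, Matrix.smul_mulVec, Matrix.one_mulVec,
      hBu i, sub_self, zero_dotProduct]
  -- the coordinates of vectors in the eigenvector basis
  have hrepr : ∀ (y : {x // x ∈ s} → ℝ) i,
      hB.eigenvectorBasis.repr ((WithLp.equiv 2 ({x // x ∈ s} → ℝ)).symm y) i
        = dotProduct (u i) y := by
    intro y i
    rw [hB.eigenvectorBasis.repr_apply_apply]
    simp [PiLp.inner_apply, dotProduct, hudef, mul_comm]
  -- c is an eigenvector of B for the eigenvalue lam0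
  have hmain : B.mulVec c = lam0 • c := by
    have h := hB.eigenvectorBasis.repr.injective
      (a₁ := (WithLp.equiv 2 ({x // x ∈ s} → ℝ)).symm (B.mulVec c))
      (a₂ := (WithLp.equiv 2 ({x // x ∈ s} → ℝ)).symm (lam0 • c)) ?_
    · exact congrArg (WithLp.equiv 2 ({x // x ∈ s} → ℝ)) h
    ext i
    rw [hrepr, hrepr]
    have h1 : dotProduct (u i) (B.mulVec c)
        = hB.eigenvalues i * dotProduct (u i) c := by
      rw [Matrix.dotProduct_mulVec, ← Matrix.mulVec_transpose, hBsymm.eq,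
        hBu i, smul_dotProduct, smul_eq_mul]
    have h2 : dotProduct (u i) (lam0 • c)
        = lam0 * dotProduct (u i) c := by
      rw [dotProduct_smul, smul_eq_mul]
    rw [h1, h2]
    by_cases hc : hB.eigenvalues i = lam0
    · rw [hc]
    · rw [horth i hc, mul_zero, mul_zero]
  -- propagation: if c i ≠ 0 and i ~ j then c j ≠ 0
  have hprop : ∀ i j : {x // x ∈ s}, G.Adj (i : V) (j : V) → c i ≠ 0 → c j ≠ 0 := by
    intro i j hadj hci hcj
    have hsum : ∑ k, B j k * c k = 0 := by
      have := congrFun hmain j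
      simpa [Matrix.mulVec, dotProduct, hcj] using this
    have hterm : ∀ k ∈ Finset.univ, 0 ≤ B j k * c k := by
      intro k _
      by_cases hk : k = j
      · subst hk; rw [hcj, mul_zero]
      · have := mul_nonneg (neg_nonneg.2 (hBle j k (Ne.symm hk))) (neg_nonneg.2 (hcle k))
        rwa [neg_mul_neg] at this
    have hzero : B j i * c i = 0 :=
      (Finset.sum_eq_zero_iff_of_nonneg hterm).mp hsum i (Finset.mem_univ i)
    have hBji : B j i < 0 := hBadj j i hadj.symm
    rcases mul_eq_zero.mp hzero with h | h
    · exact absurd h (ne_of_lt hBji)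
    · exact hci h
  -- c is nonzero at a neighbor of v, and nonzero everywhere by connectivity of H
  obtain ⟨a, has, hav⟩ := hadjv
  have hca : c ⟨a, has⟩ ≠ 0 := ne_of_lt ((hA.2 a v (hiv ⟨a, has⟩)).1 hav)
  have hall : ∀ i : {x // x ∈ s}, c i ≠ 0 := by
    intro i
    obtain ⟨p⟩ := hHconn.preconnected ⟨a, Finset.mem_coe.mpr has⟩ ⟨(i : V), Finset.mem_coe.mpr i.2⟩
    have key : ∀ n : ℕ, ∀ x : ↥(↑s : Set V), c ⟨(x : V), Finset.mem_coe.mp x.2⟩ ≠ 0 →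
        ∀ p : (G.induce (↑s : Set V)).Walk x ⟨(i : V), Finset.mem_coe.mpr i.2⟩,
        p.length ≤ n → c i ≠ 0 := by
      intro n
      induction n with
      | zero =>
        intro x hx p hp
        cases p with
        | nil => simpa using hx
        | cons h q => simp at hp
      | succ n ih =>
        intro x hx p hp
        cases p with
        | nil => simpa using hx
        | @cons _ b _ h q =>
          have hadj : G.Adj (x : V) (b : V) := h
          exact ih b (hprop ⟨(x : V), Finset.mem_coe.mp x.2⟩ ⟨(b : V), Finset.mem_coe.mp b.2⟩
            hadj hx) q (by simpa using Nat.le_of_succ_le_succ (by simpa using hp))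
    exact key p.length _ hca p le_rfl
  intro i hi
  have hci : c ⟨i, hi⟩ < 0 := lt_of_le_of_ne (hcle ⟨i, hi⟩) (hall ⟨i, hi⟩)
  refine ⟨hci, ?_⟩
  by_contra hadj
  have h0 : A v i = 0 := (hA.2 v i (fun h => hvs (h ▸ hi))).2 hadj
  refine absurd h0 ?_
  rw [hsym.apply i v]
  exact ne_of_lt hci
end

section
/- Let A and B be real symmetric matrices. The direct sum A ⊕ B has the strong spectral property if and only if both A and B have the strong spectral property and A and B share no common eigenvalue. -/
/-- A real symmetric matrix `A` has the strong spectral property (SSP) if the only symmetric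
matrix `X` with `A ∘ X = O`, `I ∘ X = O`, and `AX − XA = O` is `X = O`. -/
def HasSSP {V : Type*} [Fintype V] [DecidableEq V] (A : Matrix V V ℝ) : Prop :=
  ∀ X : Matrix V V ℝ, X.IsSymm →
    (∀ i j, A i j * X i j = 0) → (∀ i, X i i = 0) → A * X - X * A = 0 → X = 0

private lemma aux_iSup_eigenspace_eq_top {n : ℕ} (B : Matrix (Fin n) (Fin n) ℝ)
    (hB : B.IsSymm) :
    ⨆ μ : ℝ, Module.End.eigenspace (Matrix.toLin' B) μ = ⊤ := by
  have hherm : B.IsHermitian := by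
    unfold Matrix.IsHermitian
    ext i j
    simp [Matrix.conjTranspose_apply, ← hB.apply]
  have hsymm : B.toEuclideanLin.IsSymmetric := Matrix.isHermitian_iff_isSymmetric.mp hherm
  have htop : (⨆ μ : ℝ, Module.End.eigenspace B.toEuclideanLin μ) = ⊤ :=
    Submodule.orthogonal_eq_bot_iff.mp hsymm.orthogonalComplement_iSup_eigenspaces_eq_bot
  set e := WithLp.linearEquiv 2 ℝ (Fin n → ℝ) with he
  have hmap : ∀ μ : ℝ, Submodule.map (e : EuclideanSpace ℝ (Fin n) →ₗ[ℝ] (Fin n → ℝ))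
      (Module.End.eigenspace B.toEuclideanLin μ) = Module.End.eigenspace (Matrix.toLin' B) μ := by
    intro μ
    ext x
    rw [Submodule.mem_map_equiv, Module.End.mem_eigenspace_iff, Module.End.mem_eigenspace_iff]
    constructor
    · intro h
      have := congrArg e h
      simpa [he] using this
    · intro h
      apply e.injective
      simpa [he] using h
  calc (⨆ μ : ℝ, Module.End.eigenspace (Matrix.toLin' B) μ)
      = ⨆ μ : ℝ, Submodule.map (e : EuclideanSpace ℝ (Fin n) →ₗ[ℝ] (Fin n → ℝ))
        (Module.End.eigenspace B.toEuclideanLin μ) := by simp [hmap]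
    _ = Submodule.map _ (⨆ μ : ℝ, Module.End.eigenspace B.toEuclideanLin μ) :=
        (Submodule.map_iSup _ _).symm
    _ = ⊤ := by rw [htop, Submodule.map_top, LinearEquiv.range]

/-- Sylvester-type uniqueness: if `A`, `B` are symmetric with no common eigenvalue and
`A * X = X * B`, then `X = 0`. -/
private lemma aux_sylvester {m n : ℕ} (A : Matrix (Fin m) (Fin m) ℝ)
    (B : Matrix (Fin n) (Fin n) ℝ) (hB : B.IsSymm)
    (hdisj : ∀ lam : ℝ, ¬ (Module.End.HasEigenvalue (Matrix.toLin' A) lam ∧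
        Module.End.HasEigenvalue (Matrix.toLin' B) lam))
    (X : Matrix (Fin m) (Fin n) ℝ) (hX : A * X = X * B) : X = 0 := by
  have hker : ∀ μ : ℝ, Module.End.eigenspace (Matrix.toLin' B) μ ≤
      LinearMap.ker (Matrix.toLin' X) := by
    intro μ v hv
    rw [Module.End.mem_eigenspace_iff] at hv
    by_cases hv0 : v = 0
    · simp [hv0]
    rw [LinearMap.mem_ker]
    by_contra hXv
    have hBe : Module.End.HasEigenvalue (Matrix.toLin' B) μ :=
      Module.End.hasEigenvalue_of_hasEigenvector ⟨Module.End.mem_eigenspace_iff.mpr hv, hv0⟩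
    have hAXv : Matrix.toLin' A (Matrix.toLin' X v) = μ • Matrix.toLin' X v := by
      have h1 : Matrix.toLin' (A * X) v = Matrix.toLin' (X * B) v := by rw [hX]
      rw [Matrix.toLin'_mul, Matrix.toLin'_mul] at h1
      simp only [LinearMap.comp_apply] at h1
      rw [h1, hv, map_smul]
    have hAe : Module.End.HasEigenvalue (Matrix.toLin' A) μ :=
      Module.End.hasEigenvalue_of_hasEigenvector
        ⟨Module.End.mem_eigenspace_iff.mpr hAXv, hXv⟩
    exact hdisj μ ⟨hAe, hBe⟩
  have hk : LinearMap.ker (Matrix.toLin' X) = ⊤ := by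
    rw [eq_top_iff, ← aux_iSup_eigenspace_eq_top B hB]
    exact iSup_le hker
  have hX0 : Matrix.toLin' X = Matrix.toLin' (0 : Matrix (Fin m) (Fin n) ℝ) := by
    rw [map_zero]
    exact LinearMap.ker_eq_top.mp hk
  exact Matrix.toLin'.injective hX0

/-- The direct sum `A ⊕ B` of two real symmetric matrices has the SSP if and
only if both `A` and `B` have the SSP and they share no common eigenvalue. -/
theorem direct_sum_SSP_iff
    {m n : ℕ} (A : Matrix (Fin m) (Fin m) ℝ) (B : Matrix (Fin n) (Fin n) ℝ)
    (hA : A.IsSymm) (hB : B.IsSymm) :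
    HasSSP (Matrix.fromBlocks A 0 0 B) ↔
      (HasSSP A ∧ HasSSP B ∧
        ∀ lam : ℝ, ¬ (Module.End.HasEigenvalue (Matrix.toLin' A) lam ∧
          Module.End.HasEigenvalue (Matrix.toLin' B) lam)) := by
  constructor
  · intro hssp
    refine ⟨?_, ?_, ?_⟩
    · -- SSP A
      intro X hXs hXe hXd hXc
      have hY := hssp (Matrix.fromBlocks X 0 0 0) ?_ ?_ ?_ ?_
      · have := congrArg Matrix.toBlocks₁₁ hY
        ext i j; simpa [Matrix.toBlocks₁₁] using congrArg (fun M => M i j) this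
      · rw [Matrix.IsSymm, Matrix.fromBlocks_transpose]
        simp [hXs.eq]
      · rintro (i | i) (j | j) <;> simp [hXe]
      · rintro (i | i) <;> simp [hXd]
      · rw [sub_eq_zero, Matrix.fromBlocks_multiply, Matrix.fromBlocks_multiply]
        simp only [Matrix.mul_zero, Matrix.zero_mul, add_zero, zero_add]
        rw [sub_eq_zero.mp hXc]
    · -- SSP B
      intro X hXs hXe hXd hXc
      have hY := hssp (Matrix.fromBlocks 0 0 0 X) ?_ ?_ ?_ ?_
      · have := congrArg Matrix.toBlocks₂₂ hY
        ext i j; simpa [Matrix.toBlocks₂₂] using congrArg (fun M => M i j) this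
      · rw [Matrix.IsSymm, Matrix.fromBlocks_transpose]
        simp [hXs.eq]
      · rintro (i | i) (j | j) <;> simp [hXe]
      · rintro (i | i) <;> simp [hXd]
      · rw [sub_eq_zero, Matrix.fromBlocks_multiply, Matrix.fromBlocks_multiply]
        simp only [Matrix.mul_zero, Matrix.zero_mul, add_zero, zero_add]
        rw [sub_eq_zero.mp hXc]
    · -- no common eigenvalue
      rintro lam ⟨hAe, hBe⟩
      obtain ⟨u, hu⟩ := hAe.exists_hasEigenvector
      obtain ⟨v, hv⟩ := hBe.exists_hasEigenvector
      have huv : Matrix.toLin' A u = lam • u := Module.End.mem_eigenspace_iff.mp hu.1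
      have hvv : Matrix.toLin' B v = lam • v := Module.End.mem_eigenspace_iff.mp hv.1
      have hAu : ∀ i, (∑ k, A i k * u k) = lam * u i := by
        intro i
        have := congrFun huv i
        simpa [Matrix.toLin'_apply, Matrix.mulVec, dotProduct] using this
      have hBv : ∀ j, (∑ k, B j k * v k) = lam * v j := by
        intro j
        have := congrFun hvv j
        simpa [Matrix.toLin'_apply, Matrix.mulVec, dotProduct] using this
      set X : Matrix (Fin m ⊕ Fin n) (Fin m ⊕ Fin n) ℝ :=
        Matrix.fromBlocks 0 (Matrix.of fun i j => u i * v j)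
          (Matrix.of fun i j => v i * u j) 0 with hXdef
      have hX0 := hssp X ?_ ?_ ?_ ?_
      · obtain ⟨i, hi⟩ := Function.ne_iff.mp hu.2
        obtain ⟨j, hj⟩ := Function.ne_iff.mp hv.2
        have := congrFun (congrFun hX0 (Sum.inl i)) (Sum.inr j)
        simp only [hXdef, Matrix.fromBlocks_apply₁₂, Matrix.of_apply, Matrix.zero_apply] at this
        exact (mul_ne_zero (by simpa using hi) (by simpa using hj)) this
      · rw [Matrix.IsSymm]
        ext (i | i) (j | j) <;> simp [hXdef, mul_comm]
      · rintro (i | i) (j | j) <;> simp [hXdef]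
      · rintro (i | i) <;> simp [hXdef]
      · rw [sub_eq_zero, hXdef, Matrix.fromBlocks_multiply, Matrix.fromBlocks_multiply]
        simp only [Matrix.mul_zero, Matrix.zero_mul, add_zero, zero_add]
        rw [Matrix.fromBlocks_inj]
        refine ⟨rfl, ?_, ?_, rfl⟩
        · ext i j
          simp only [Matrix.mul_apply, Matrix.of_apply]
          have h1 : (∑ k, A i k * (u k * v j)) = lam * u i * v j := by
            rw [show (∑ k, A i k * (u k * v j)) = (∑ k, A i k * u k) * v j by
              rw [Finset.sum_mul]; congr 1; ext k; ring, hAu i]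
          have h2 : (∑ k, u i * v k * B k j) = u i * (lam * v j) := by
            rw [show (∑ k, u i * v k * B k j) = u i * ∑ k, B j k * v k by
              rw [Finset.mul_sum]; congr 1; ext k; rw [← hB.apply k j]; ring, hBv j]
          rw [h1, h2]; ring
        · ext i j
          simp only [Matrix.mul_apply, Matrix.of_apply]
          have h1 : (∑ k, B i k * (v k * u j)) = lam * v i * u j := by
            rw [show (∑ k, B i k * (v k * u j)) = (∑ k, B i k * v k) * u j by
              rw [Finset.sum_mul]; congr 1; ext k; ring, hBv i]
          have h2 : (∑ k, v i * u k * A k j) = v i * (lam * u j) := by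
            rw [show (∑ k, v i * u k * A k j) = v i * ∑ k, A j k * u k by
              rw [Finset.mul_sum]; congr 1; ext k; rw [← hA.apply k j]; ring, hAu j]
          rw [h1, h2]; ring
  · rintro ⟨hsspA, hsspB, hdisj⟩
    intro X hXs hXe hXd hXc
    set X11 := X.toBlocks₁₁ with h11
    set X12 := X.toBlocks₁₂ with h12
    set X21 := X.toBlocks₂₁ with h21
    set X22 := X.toBlocks₂₂ with h22
    have hXblocks : X = Matrix.fromBlocks X11 X12 X21 X22 := (Matrix.fromBlocks_toBlocks X).symm
    have hcomm : Matrix.fromBlocks A 0 0 B * X = X * Matrix.fromBlocks A 0 0 B :=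
      sub_eq_zero.mp hXc
    rw [hXblocks, Matrix.fromBlocks_multiply, Matrix.fromBlocks_multiply] at hcomm
    simp only [Matrix.mul_zero, Matrix.zero_mul, add_zero, zero_add] at hcomm
    obtain ⟨hc11, hc12, hc21, hc22⟩ := Matrix.fromBlocks_inj.mp hcomm
    have hsymblocks := hXs
    rw [Matrix.IsSymm, hXblocks, Matrix.fromBlocks_transpose] at hsymblocks
    obtain ⟨hs11, hs21, hs12, hs22⟩ := Matrix.fromBlocks_inj.mp hsymblocks
    have hX11 : X11 = 0 := by
      apply hsspA X11 hs11
      · intro i j; simpa [h11, Matrix.toBlocks₁₁] using hXe (Sum.inl i) (Sum.inl j)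
      · intro i; simpa [h11, Matrix.toBlocks₁₁] using hXd (Sum.inl i)
      · rw [sub_eq_zero]; exact hc11
    have hX22 : X22 = 0 := by
      apply hsspB X22 hs22
      · intro i j; simpa [h22, Matrix.toBlocks₂₂] using hXe (Sum.inr i) (Sum.inr j)
      · intro i; simpa [h22, Matrix.toBlocks₂₂] using hXd (Sum.inr i)
      · rw [sub_eq_zero]; exact hc22
    have hX12 : X12 = 0 := aux_sylvester A B hB hdisj X12 hc12
    have hX21 : X21 = 0 := by
      rw [← hs12, hX12]; simp
    rw [hXblocks, hX11, hX12, hX21, hX22, Matrix.fromBlocks_zero]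
end

section
/- Every real diagonal matrix with distinct diagonal entries has the strong spectral property. Consequently, for every graph G on n vertices and every set Λ of n distinct real numbers, there exists a discrete Schrödinger operator of G with the SSP whose spectrum is Λ. -/
open Polynomial

namespace Statement16Aux

open NormedSpace Matrix Topology

attribute [local instance] Matrix.linftyOpNormedAddCommGroup Matrix.linftyOpNormedSpace
  Matrix.linftyOpNormedRing Matrix.linftyOpNormedAlgebra

variable (n : ℕ)

abbrev Mat (n : ℕ) := Matrix (Fin n) (Fin n) ℝ

/-- skew-symmetric matrices -/
def skewS : Submodule ℝ (Mat n) where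
  carrier := {M | Mᵀ = -M}
  add_mem' := by intro a b ha hb; simp only [Set.mem_setOf_eq] at *; rw [Matrix.transpose_add, ha, hb, neg_add]
  zero_mem' := by simp
  smul_mem' := by intro c a ha; simp only [Set.mem_setOf_eq] at *; rw [Matrix.transpose_smul, ha, smul_neg]

/-- symmetric matrices with zero diagonal -/
def symS : Submodule ℝ (Mat n) where
  carrier := {M | Mᵀ = M ∧ ∀ i, M i i = 0}
  add_mem' := by
    intro a b ha hb
    exact ⟨by rw [Matrix.transpose_add, ha.1, hb.1], fun i => by simp [ha.2 i, hb.2 i]⟩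
  zero_mem' := ⟨by simp, fun i => rfl⟩
  smul_mem' := by
    intro c a ha
    exact ⟨by rw [Matrix.transpose_smul, ha.1], fun i => by simp [ha.2 i]⟩

/-- off-diagonal symmetrization, as a linear map -/
noncomputable def P0 : Mat n →ₗ[ℝ] Mat n where
  toFun M := Matrix.of fun i j => if i = j then 0 else (M i j + M j i) / 2
  map_add' a b := by
    ext i j
    by_cases h : i = j <;> simp [h] <;> ring
  map_smul' c a := by
    ext i j
    by_cases h : i = j <;> simp [h] <;> ring

lemma P0_mem (M : Mat n) : P0 n M ∈ symS n := by
  constructor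
  · ext i j
    by_cases h : i = j
    · subst h; rfl
    · simp [P0, Matrix.transpose_apply, h, Ne.symm h]
      ring
  · intro i; simp [P0]

/-- P0 applied to a symmetric zero-diagonal matrix gives it back -/
lemma P0_of_mem {M : Mat n} (h : M ∈ symS n) : P0 n M = M := by
  ext i j
  by_cases hij : i = j
  · subst hij; simp [P0, h.2 i]
  · have hs : M j i = M i j := by
      have h2 := congrFun (congrFun h.1 i) j
      rwa [Matrix.transpose_apply] at h2
    show (if i = j then 0 else (M i j + M j i) / 2) = M i j
    rw [if_neg hij, hs]
    ring

noncomputable def Pc : Mat n →L[ℝ] symS n :=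
  LinearMap.toContinuousLinearMap ((P0 n).codRestrict (symS n) (P0_mem n))

noncomputable def iotaE : skewS n →L[ℝ] Mat n := (skewS n).subtypeL

variable (d : Fin n → ℝ)

/-- the commutator linear map K ↦ K D - D K from skew to sym₀ -/
noncomputable def fwdl : skewS n →ₗ[ℝ] symS n :=
  ((LinearMap.mulRight ℝ (Matrix.diagonal d) - LinearMap.mulLeft ℝ (Matrix.diagonal d)).comp
    (skewS n).subtype).codRestrict (symS n) (by
      intro K
      simp only [LinearMap.comp_apply, LinearMap.sub_apply, LinearMap.mulRight_apply,
        LinearMap.mulLeft_apply, Submodule.subtype_apply]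
      constructor
      · ext i j
        have hK : (K : Mat n) j i = -(K : Mat n) i j := by
          have := congrFun (congrFun K.2 i) j; simpa using this
        simp [Matrix.transpose_apply, Matrix.mul_diagonal, Matrix.diagonal_mul, hK]
        ring
      · intro i
        simp [Matrix.mul_diagonal, Matrix.diagonal_mul]
        ring)

lemma fwdl_apply (K : skewS n) (i j : Fin n) :
    ((fwdl n d K : Mat n)) i j = (d j - d i) * (K : Mat n) i j := by
  simp [fwdl, Matrix.sub_apply, Matrix.mul_diagonal, Matrix.diagonal_mul]
  ring

/-- inverse of fwdl -/
noncomputable def bwd0 : Mat n →ₗ[ℝ] Mat n where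
  toFun M := Matrix.of fun i j => if i = j then 0 else M i j / (d j - d i)
  map_add' a b := by
    ext i j
    by_cases h : i = j <;> simp [h] <;> ring
  map_smul' c a := by
    ext i j
    by_cases h : i = j <;> simp [h] <;> ring

noncomputable def bwdl : symS n →ₗ[ℝ] skewS n :=
  ((bwd0 n d).comp (symS n).subtype).codRestrict (skewS n) (by
    intro M
    simp only [LinearMap.comp_apply, Submodule.subtype_apply]
    ext i j
    have hs : (M : Mat n) j i = (M : Mat n) i j := by
      have h2 := congrFun (congrFun M.2.1 i) j
      rwa [Matrix.transpose_apply] at h2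
    by_cases h : i = j
    · subst h; simp [bwd0]
    · simp only [Matrix.transpose_apply, Matrix.neg_apply, bwd0, LinearMap.coe_mk,
        AddHom.coe_mk, Matrix.of_apply, if_neg h, if_neg (Ne.symm h), hs]
      rw [show d i - d j = -(d j - d i) from by ring, div_neg])

noncomputable def fwde (hd : Function.Injective d) : skewS n ≃ₗ[ℝ] symS n := by
  refine LinearEquiv.ofLinear (fwdl n d) (bwdl n d) ?_ ?_
  · apply LinearMap.ext
    intro M
    apply Subtype.ext
    ext i j
    have hdne : ∀ i j : Fin n, i ≠ j → d j - d i ≠ 0 := by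
      intro i j h hc
      exact h (hd (by linarith [sub_eq_zero.mp hc])).symm
    by_cases h : i = j
    · subst h
      simp [fwdl_apply, bwdl, bwd0, M.2.2 i]
    · rw [LinearMap.comp_apply, LinearMap.id_apply]
      have h1 : ((fwdl n d (bwdl n d M) : Mat n)) i j
          = (d j - d i) * ((bwdl n d M : Mat n) i j) := fwdl_apply n d _ i j
      have h2 : ((bwdl n d M : Mat n)) i j = (M : Mat n) i j / (d j - d i) := by
        simp [bwdl, bwd0, h]
      rw [h1, h2, mul_div_cancel₀ _ (hdne i j h)]
  · apply LinearMap.ext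
    intro K
    apply Subtype.ext
    ext i j
    have hdne : ∀ i j : Fin n, i ≠ j → d j - d i ≠ 0 := by
      intro i j h hc
      exact h (hd (by linarith [sub_eq_zero.mp hc])).symm
    by_cases h : i = j
    · subst h
      have hK : (K : Mat n) i i = 0 := by
        have := congrFun (congrFun K.2 i) i
        rw [Matrix.transpose_apply, Matrix.neg_apply] at this
        linarith
      simp [bwdl, bwd0, hK]
    · have h1 : ((bwdl n d (fwdl n d K) : Mat n)) i j
          = ((fwdl n d K : Mat n) i j) / (d j - d i) := by
        simp [bwdl, bwd0, h]
      rw [LinearMap.comp_apply, LinearMap.id_apply, h1, fwdl_apply,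
        mul_div_cancel_left₀ _ (hdne i j h)]

noncomputable def fwdeC (hd : Function.Injective d) : skewS n ≃L[ℝ] symS n :=
  LinearEquiv.toContinuousLinearEquiv (fwde n d hd)

/-- the nonlinear map K ↦ exp(K) D exp(-K) on all matrices -/
noncomputable def gmap (K : Mat n) : Mat n := exp K * Matrix.diagonal d * exp (-K)

/-- the map F from skew matrices to symmetric-zero-diagonal matrices -/
noncomputable def Fmap (K : skewS n) : symS n := Pc n (gmap n d (iotaE n K))

lemma hasStrictFDerivAt_Fmap (hd : Function.Injective d) :
    HasStrictFDerivAt (Fmap n d) ((fwdeC n d hd : skewS n →L[ℝ] symS n)) 0 := by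
  have h1 : HasStrictFDerivAt (exp : Mat n → Mat n)
      (ContinuousLinearMap.id ℝ (Mat n)) 0 := hasStrictFDerivAt_exp_zero
  have hneg : HasStrictFDerivAt (fun K : Mat n => -K)
      (-(ContinuousLinearMap.id ℝ (Mat n))) 0 := (hasStrictFDerivAt_id (0 : Mat n)).neg
  have h2 : HasStrictFDerivAt (fun K : Mat n => exp (-K))
      ((ContinuousLinearMap.id ℝ (Mat n)).comp (-(ContinuousLinearMap.id ℝ (Mat n)))) 0 := by
    refine HasStrictFDerivAt.comp 0 ?_ hneg
    rw [neg_zero]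
    exact h1
  have h3 := (h1.mul_const' (Matrix.diagonal d)).mul' h2
  have hiota : HasStrictFDerivAt (fun K : skewS n => iotaE n K) (iotaE n) 0 :=
    (iotaE n).hasStrictFDerivAt
  set LL := ((exp (0:Mat n) * Matrix.diagonal d) •
        ((ContinuousLinearMap.id ℝ (Mat n)).comp (-(ContinuousLinearMap.id ℝ (Mat n)))) +
        ((ContinuousLinearMap.id ℝ (Mat n)).smulRight (Matrix.diagonal d)).smulRight
          (exp (-(0:Mat n)))) with hLL
  have h4 : HasStrictFDerivAt (fun K : skewS n => gmap n d (iotaE n K))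
      (LL.comp (iotaE n)) 0 := by
    refine HasStrictFDerivAt.comp 0 ?_ hiota
    rw [map_zero]
    exact h3
  have h5 : HasStrictFDerivAt (Fmap n d) ((Pc n).comp (LL.comp (iotaE n))) 0 :=
    ((Pc n).hasStrictFDerivAt).comp 0 h4
  have heq : ((fwdeC n d hd : skewS n →L[ℝ] symS n)) =
      ((Pc n).comp (LL.comp (iotaE n))) := by
    apply ContinuousLinearMap.ext
    intro K
    apply Subtype.ext
    have hexp0 : exp (0 : Mat n) = 1 := exp_zero
    have harg : LL (iotaE n K) =
        (K : Mat n) * Matrix.diagonal d - Matrix.diagonal d * (K : Mat n) := by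
      rw [hLL]
      simp only [ContinuousLinearMap.add_apply, ContinuousLinearMap.smul_apply,
        ContinuousLinearMap.comp_apply, ContinuousLinearMap.neg_apply,
        ContinuousLinearMap.coe_id', id_eq, ContinuousLinearMap.smulRight_apply,
        neg_zero, hexp0, one_mul, mul_one, smul_eq_mul, mul_neg]
      rw [neg_add_eq_sub]
      rfl
    show ((fwdl n d K : Mat n)) = _
    rw [ContinuousLinearMap.comp_apply, ContinuousLinearMap.comp_apply, harg]
    show _ = P0 n ((K : Mat n) * Matrix.diagonal d - Matrix.diagonal d * (K : Mat n))
    ext i j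
    rw [fwdl_apply]
    show _ = (if i = j then 0 else _)
    by_cases h : i = j
    · subst h
      rw [if_pos rfl]
      ring
    · rw [if_neg h]
      have hK : (K : Mat n) j i = -(K : Mat n) i j := by
        have h2 := congrFun (congrFun K.2 i) j
        rwa [Matrix.transpose_apply, Matrix.neg_apply] at h2
      simp only [Matrix.sub_apply, Matrix.mul_diagonal, Matrix.diagonal_mul, hK]
      ring
  rw [heq]
  exact h5

def evalL (i j : Fin n) : Mat n →ₗ[ℝ] ℝ where
  toFun M := M i j
  map_add' _ _ := rfl
  map_smul' _ _ := rfl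

lemma Fmap_zero : Fmap n d 0 = 0 := by
  apply Subtype.ext
  show P0 n (gmap n d (iotaE n 0)) = 0
  have : gmap n d (iotaE n 0) = Matrix.diagonal d := by
    rw [map_zero]
    show exp (0 : Mat n) * Matrix.diagonal d * exp (-(0 : Mat n)) = _
    rw [neg_zero, exp_zero, one_mul, mul_one]
  rw [this]
  ext i j
  show (if i = j then 0 else _) = (0 : Mat n) i j
  by_cases h : i = j
  · simp [h]
  · simp [h, Matrix.diagonal_apply_ne _ h, Matrix.diagonal_apply_ne' _ h]

lemma main_exists (hd : Function.Injective d) (T1 : symS n) (ε : ℝ) (hε : 0 < ε) :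
    ∃ (t : ℝ) (K : skewS n), 0 < t ∧ Fmap n d K = t • T1 ∧
      ∀ i j, |gmap n d (iotaE n K) i j - Matrix.diagonal d i j| < ε := by
  have hF := hasStrictFDerivAt_Fmap n d hd
  set ginv := hF.localInverse (Fmap n d) (fwdeC n d hd) 0 with hginv
  have hFz : Fmap n d 0 = 0 := Fmap_zero n d
  have hright : ∀ᶠ y in 𝓝 (0 : symS n), Fmap n d (ginv y) = y := by
    have := hF.eventually_right_inverse
    rwa [hFz] at this
  have htt : Filter.Tendsto (fun t : ℝ => t • T1) (𝓝[>] 0) (𝓝 0) := by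
    have hc : Continuous (fun t : ℝ => t • T1) := continuous_id.smul continuous_const
    have := hc.tendsto 0
    rw [zero_smul] at this
    exact this.mono_left nhdsWithin_le_nhds
  have hKtend : Filter.Tendsto (fun t : ℝ => ginv (t • T1)) (𝓝[>] 0) (𝓝 0) := by
    have h2 := hF.localInverse_tendsto
    rw [hFz] at h2
    exact h2.comp htt
  have hgc : Continuous (fun K : skewS n => gmap n d (iotaE n K)) := by
    have h1 : Continuous (fun M : Mat n => gmap n d M) := by
      exact ((exp_continuous.mul continuous_const).mul (exp_continuous.comp continuous_neg))
    exact h1.comp (iotaE n).continuous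
  have hAtend : Filter.Tendsto (fun t : ℝ => gmap n d (iotaE n (ginv (t • T1))))
      (𝓝[>] 0) (𝓝 (Matrix.diagonal d)) := by
    have h2 := hgc.tendsto 0
    have h3 : gmap n d (iotaE n 0) = Matrix.diagonal d := by
      rw [map_zero]
      show exp (0 : Mat n) * Matrix.diagonal d * exp (-(0 : Mat n)) = _
      rw [neg_zero, exp_zero, one_mul, mul_one]
    rw [h3] at h2
    exact h2.comp hKtend
  set U : Set (Mat n) := {B | ∀ i j, |B i j - Matrix.diagonal d i j| < ε} with hU
  have hUopen : IsOpen U := by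
    have : U = ⋂ p : Fin n × Fin n,
        (fun B : Mat n => B p.1 p.2) ⁻¹' (Metric.ball (Matrix.diagonal d p.1 p.2) ε) := by
      ext B
      simp only [Set.mem_iInter, Set.mem_preimage, Metric.mem_ball, Real.dist_eq, hU,
        Set.mem_setOf_eq, Prod.forall]
    rw [this]
    exact isOpen_iInter_of_finite fun p =>
      ((evalL n p.1 p.2).continuous_of_finiteDimensional).isOpen_preimage _ Metric.isOpen_ball
  have hDU : Matrix.diagonal d ∈ U := by
    intro i j
    simpa using hε
  have hev2 : ∀ᶠ t in 𝓝[>] (0:ℝ),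
      gmap n d (iotaE n (ginv (t • T1))) ∈ U := hAtend.eventually (hUopen.eventually_mem hDU)
  have hev1 : ∀ᶠ t in 𝓝[>] (0:ℝ),
      Fmap n d (ginv (t • T1)) = t • T1 := htt.eventually hright
  have hself : ∀ᶠ t in 𝓝[>] (0:ℝ), 0 < t := by
    have := self_mem_nhdsWithin (a := (0:ℝ)) (s := Set.Ioi 0)
    exact Filter.eventually_iff_exists_mem.mpr ⟨Set.Ioi 0, this, fun x hx => hx⟩
  obtain ⟨t, h1, h2, h3⟩ := (hev1.and (hev2.and hself)).exists
  exact ⟨t, ginv (t • T1), h3, h1, h2⟩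

lemma ssp_of_close (lam : Fin n → ℝ) (A : Mat n) (c ε : ℝ)
    (hce : 2 * n * ε < c)
    (hcle : ∀ i j : Fin n, i ≠ j → c ≤ |lam i - lam j|)
    (hclose : ∀ i j, |A i j - Matrix.diagonal lam i j| ≤ ε) :
    HasSSP A := by
  intro X hX hAX hXdiag hcomm
  by_contra hX0
  have hne : (Finset.univ : Finset (Fin n × Fin n)).Nonempty := by
    obtain ⟨a, b, -⟩ : ∃ a b, X a b ≠ 0 := by
      by_contra h
      push_neg at h
      exact hX0 (by ext a b; simpa using h a b)
    exact ⟨(a, b), Finset.mem_univ _⟩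
  set m := Finset.univ.sup' hne (fun p : Fin n × Fin n => |X p.1 p.2|) with hm
  have hmax : ∀ i j, |X i j| ≤ m := fun i j =>
    Finset.le_sup' (f := fun p : Fin n × Fin n => |X p.1 p.2|) (Finset.mem_univ (i, j))
  obtain ⟨p0, -, hp0⟩ := Finset.exists_mem_eq_sup' hne (fun p : Fin n × Fin n => |X p.1 p.2|)
  have hmij : |X p0.1 p0.2| = m := by rw [hm, hp0]
  obtain ⟨a, b, hab⟩ : ∃ a b, X a b ≠ 0 := by
    by_contra h
    push_neg at h
    exact hX0 (by ext a b; simpa using h a b)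
  have hmpos : 0 < m := lt_of_lt_of_le (abs_pos.mpr hab) (hmax a b)
  set i := p0.1 with hi
  set j := p0.2 with hj
  have hij : i ≠ j := by
    intro h
    rw [h, hXdiag j, abs_zero] at hmij
    linarith
  set D := Matrix.diagonal lam with hD
  have hMM : X * (A - D) - (A - D) * X = D * X - X * D := by
    have h := sub_eq_zero.mp hcomm
    rw [Matrix.mul_sub, Matrix.sub_mul, h]
    abel
  have key : (lam i - lam j) * X i j = (X * (A - D)) i j - ((A - D) * X) i j := by
    have h2 := congrFun (congrFun hMM i) j
    rw [Matrix.sub_apply, Matrix.sub_apply, Matrix.diagonal_mul, Matrix.mul_diagonal] at h2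
    rw [h2]
    ring
  have hEbound : ∀ a b, |(A - D) a b| ≤ ε := by
    intro a b
    have := hclose a b
    rwa [Matrix.sub_apply]
  have h1 : |(X * (A - D)) i j| ≤ n * (m * ε) := by
    rw [Matrix.mul_apply]
    calc |∑ k, X i k * (A - D) k j| ≤ ∑ k, |X i k * (A - D) k j| :=
          Finset.abs_sum_le_sum_abs _ _
      _ ≤ ∑ _k : Fin n, m * ε := by
          apply Finset.sum_le_sum
          intro k _
          rw [abs_mul]
          exact mul_le_mul (hmax i k) (hEbound k j) (abs_nonneg _) (le_of_lt hmpos)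
      _ = n * (m * ε) := by simp [Finset.sum_const, Finset.card_univ, nsmul_eq_mul]
  have h2 : |((A - D) * X) i j| ≤ n * (m * ε) := by
    rw [Matrix.mul_apply]
    calc |∑ k, (A - D) i k * X k j| ≤ ∑ k, |(A - D) i k * X k j| :=
          Finset.abs_sum_le_sum_abs _ _
      _ ≤ ∑ _k : Fin n, ε * m := by
          apply Finset.sum_le_sum
          intro k _
          rw [abs_mul]
          have hε0 : (0:ℝ) ≤ ε := le_trans (abs_nonneg _) (hEbound i j)
          exact mul_le_mul (hEbound i k) (hmax k j) (abs_nonneg _) hε0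
      _ = n * (m * ε) := by
          simp [Finset.sum_const, Finset.card_univ, nsmul_eq_mul, mul_comm]
  have habs : |(lam i - lam j) * X i j| ≤ 2 * n * ε * m := by
    rw [key]
    calc |(X * (A - D)) i j - ((A - D) * X) i j|
        ≤ |(X * (A - D)) i j| + |((A - D) * X) i j| := abs_sub _ _
      _ ≤ n * (m * ε) + n * (m * ε) := add_le_add h1 h2
      _ = 2 * n * ε * m := by ring
  have hlow : c * m ≤ |(lam i - lam j) * X i j| := by
    rw [abs_mul, hmij]
    exact mul_le_mul_of_nonneg_right (hcle i j hij) (le_of_lt hmpos)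
  have hfin : c * m ≤ 2 * n * ε * m := le_trans hlow habs
  have : c ≤ 2 * n * ε := le_of_mul_le_mul_right (by linarith) hmpos
  linarith

lemma charpoly_diag (d : Fin n → ℝ) :
    (Matrix.diagonal d).charpoly = ∏ i : Fin n, (X - C (d i)) := by
  have h : Matrix.charmatrix (Matrix.diagonal d)
      = Matrix.diagonal (fun i => (X : ℝ[X]) - C (d i)) := by
    ext i j
    rcases eq_or_ne i j with rfl | hij
    · simp [Matrix.charmatrix_apply_eq]
    · simp [Matrix.charmatrix_apply_ne _ _ _ hij, Matrix.diagonal_apply_ne _ hij]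
  rw [Matrix.charpoly, h, Matrix.det_diagonal]

lemma charpoly_conj (u : (Mat n)ˣ) (A : Mat n) :
    ((u : Mat n) * A * (↑u⁻¹ : Mat n)).charpoly = A.charpoly := by
  have h1 : ((u : Mat n).map C) * (((↑u⁻¹ : Mat n)).map C) = 1 := by
    rw [← Matrix.map_mul, Units.mul_inv, Matrix.map_one C (map_zero C) (map_one C)]
  have key : Matrix.charmatrix ((u : Mat n) * A * (↑u⁻¹ : Mat n))
      = ((u : Mat n).map C) * Matrix.charmatrix A * (((↑u⁻¹ : Mat n)).map C) := by
    unfold Matrix.charmatrix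
    rw [mul_sub, sub_mul]
    congr 1
    · have hs : (Matrix.scalar (Fin n)) (X : ℝ[X]) = (X : ℝ[X]) • (1 : Matrix (Fin n) (Fin n) ℝ[X]) := by
        ext i j
        rcases eq_or_ne i j with rfl | hne
        · simp [Matrix.scalar_apply]
        · simp [Matrix.scalar_apply, Matrix.diagonal_apply_ne _ hne, Matrix.one_apply_ne hne]
      rw [hs, Matrix.mul_smul, Matrix.smul_mul, mul_one, h1]
    · simp [Matrix.map_mul]
  rw [Matrix.charpoly, key, Matrix.det_mul, Matrix.det_mul, mul_comm, ← mul_assoc,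
    ← Matrix.det_mul, ← Matrix.map_mul, Units.inv_mul,
    Matrix.map_one C (map_zero C) (map_one C), Matrix.det_one, one_mul, Matrix.charpoly]

lemma ssp_diag (d : Fin n → ℝ) (hd : Function.Injective d) :
    HasSSP (Matrix.diagonal d) := by
  intro X _ _ hdiag hcomm
  have hcomm' : Matrix.diagonal d * X = X * Matrix.diagonal d := sub_eq_zero.mp hcomm
  ext i j
  rcases eq_or_ne i j with rfl | hij
  · simpa using hdiag i
  · have := congrFun (congrFun hcomm' i) j
    rw [Matrix.diagonal_mul, Matrix.mul_diagonal] at this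
    have h2 : (d i - d j) * X i j = 0 := by ring_nf; linarith [this]
    rcases mul_eq_zero.mp h2 with h | h
    · exact ((hij (hd (by linarith [sub_eq_zero.mp h])))).elim
    · simpa using h

lemma part2 (G : SimpleGraph (Fin n)) (lam : Fin n → ℝ) (hlam : Function.Injective lam) :
    ∃ A : Mat n, (A.IsSymm ∧ ∀ i j : Fin n, i ≠ j →
        (G.Adj i j → A i j < 0) ∧ (¬ G.Adj i j → A i j = 0)) ∧ HasSSP A ∧
      A.charpoly = ∏ i : Fin n, (X - C (lam i)) := by
  classical
  by_cases hsub : ∀ i j : Fin n, i = j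
  · refine ⟨Matrix.diagonal lam, ⟨Matrix.isSymm_diagonal lam, ?_⟩, ssp_diag n lam hlam,
      charpoly_diag n lam⟩
    intro i j hij
    exact absurd (hsub i j) hij
  · push_neg at hsub
    obtain ⟨a, b, hab⟩ := hsub
    set s : Finset (Fin n × Fin n) := Finset.univ.filter (fun p => p.1 ≠ p.2) with hs
    have hne : s.Nonempty := ⟨(a, b), Finset.mem_filter.mpr ⟨Finset.mem_univ _, hab⟩⟩
    set c := s.inf' hne (fun p => |lam p.1 - lam p.2|) with hc
    have hcpos : 0 < c := by
      rw [hc, Finset.lt_inf'_iff]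
      intro p hp
      have hp' : p.1 ≠ p.2 := by simpa [hs] using hp
      exact abs_pos.mpr (sub_ne_zero.mpr (fun hcon => hp' (hlam hcon)))
    have hcle : ∀ i j : Fin n, i ≠ j → c ≤ |lam i - lam j| := by
      intro i j hij
      exact Finset.inf'_le (fun p : Fin n × Fin n => |lam p.1 - lam p.2|)
        (Finset.mem_filter.mpr ⟨Finset.mem_univ (i, j), show (i, j).1 ≠ (i, j).2 from hij⟩)
    set ε := c / (2 * n + 1) with hε
    have hden : (0:ℝ) < 2 * n + 1 := by positivity
    have hεpos : 0 < ε := div_pos hcpos hden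
    have hkey : ε * (2 * ↑n + 1) = c := div_mul_cancel₀ _ (ne_of_gt hden)
    have hce : 2 * (n:ℝ) * ε < c := by nlinarith
    set T1 : symS n := ⟨Matrix.of (fun i j => if G.Adj i j then (-1:ℝ) else 0), by
      constructor
      · ext i j
        simp only [Matrix.transpose_apply, Matrix.of_apply]
        by_cases h : G.Adj i j
        · rw [if_pos h, if_pos (G.adj_symm h)]
        · rw [if_neg h, if_neg (fun h2 => h (G.adj_symm h2))]
      · intro i
        simp [G.irrefl]⟩ with hT1
    obtain ⟨t, K, ht, hFK, hclose⟩ := main_exists n lam hlam T1 ε hεpos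
    set Km := iotaE n K with hKm
    set A := gmap n lam Km with hA
    have hKT : Kmᵀ = -Km := K.2
    have hQ1 : exp Km * exp (-Km) = 1 := by
      rw [← Matrix.exp_add_of_commute _ _ ((Commute.refl Km).neg_right), add_neg_cancel, exp_zero]
    have hQ2 : exp (-Km) * exp Km = 1 := by
      conv_lhs => rw [show exp Km = exp (-(-Km)) by rw [neg_neg]]
      rw [← Matrix.exp_add_of_commute _ _ ((Commute.refl (-Km)).neg_right), add_neg_cancel, exp_zero]
    have htr : (exp Km)ᵀ = exp (-Km) := by rw [← Matrix.exp_transpose, hKT]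
    have htr2 : (exp (-Km))ᵀ = exp Km := by
      rw [← Matrix.exp_transpose, Matrix.transpose_neg, hKT, neg_neg]
    have hAsymm : Aᵀ = A := by
      rw [hA]
      show (exp Km * Matrix.diagonal lam * exp (-Km))ᵀ = _
      rw [Matrix.transpose_mul, Matrix.transpose_mul, htr, htr2, Matrix.diagonal_transpose,
        ← Matrix.mul_assoc]
      rfl
    have hPA : P0 n A = t • (T1 : Mat n) := congrArg Subtype.val hFK
    have hoff : ∀ i j : Fin n, i ≠ j → A i j = t * (if G.Adj i j then (-1:ℝ) else 0) := by
      intro i j hij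
      have h1 := congrFun (congrFun hPA i) j
      have hji : A j i = A i j := by
        have h2 := congrFun (congrFun hAsymm j) i
        rw [Matrix.transpose_apply] at h2
        exact h2.symm
      show _ = t * _
      rw [show (P0 n A) i j = if i = j then 0 else (A i j + A j i)/2 from rfl, if_neg hij, hji]
        at h1
      have h2 : (A i j + A i j) / 2 = A i j := by ring
      rw [h2] at h1
      rw [h1]
      simp [hT1, Matrix.smul_apply, smul_eq_mul]
    refine ⟨A, ⟨hAsymm, ?_⟩, ?_, ?_⟩
    · intro i j hij
      constructor
      · intro hadj
        rw [hoff i j hij, if_pos hadj]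
        linarith
      · intro hadj
        rw [hoff i j hij, if_neg hadj, mul_zero]
    · exact ssp_of_close n lam A c ε hce hcle (fun i j => le_of_lt (hclose i j))
    · set u : (Mat n)ˣ := ⟨exp Km, exp (-Km), hQ1, hQ2⟩ with hu
      have hAu : A = (u : Mat n) * Matrix.diagonal lam * (↑u⁻¹ : Mat n) := rfl
      rw [hAu, charpoly_conj n u, charpoly_diag n lam]

end Statement16Aux

/-- Every real diagonal matrix with distinct diagonal entries has the SSP;
consequently, for every graph `G` on `n` vertices and every list of `n` distinct real numbers,
there is a discrete Schrödinger operator of `G` with the SSP whose spectrum is that list. -/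
theorem diagonal_SSP_and_distinct_spectrum_realizable :
    (∀ (n : ℕ) (d : Fin n → ℝ), Function.Injective d → HasSSP (Matrix.diagonal d)) ∧
    (∀ (n : ℕ) (G : SimpleGraph (Fin n)) (lam : Fin n → ℝ), Function.Injective lam →
      ∃ A : Matrix (Fin n) (Fin n) ℝ, IsDSO G A ∧ HasSSP A ∧
        A.charpoly = ∏ i : Fin n, (X - C (lam i))) := by
  constructor
  · intro n d hd
    exact Statement16Aux.ssp_diag n d hd
  · intro n G lam hlam
    obtain ⟨A, h1, h2, h3⟩ := Statement16Aux.part2 n G lam hlam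
    exact ⟨A, ⟨h1.1, h1.2⟩, h2, h3⟩
end
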